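/- arXiv:1604.08401 — 7 statements merged into one kernel-verified Lean document; each statement's English description precedes it below -/
import Mathlib

section
/- Let L be a finite semidistributive lattice, let x cover y in L, and define j = ⋀{z ∈ L : z ≤ x and z ≰ y}. Then j ∨ y = x; in particular j ≤ x and j ≰ y. -/
lemma aux_inf_join {L : Type*} [Lattice L]
    (hSDjoin : ∀ x y z : L, x ⊔ y = x ⊔ z → x ⊔ (y ⊓ z) = x ⊔ y)
    (y x : L) (F : Finset L) (hF : F.Nonempty)
    (h : ∀ z ∈ F, y ⊔ z = x) : y ⊔ F.inf' hF id = x := by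
  induction hF using Finset.Nonempty.cons_induction with
  | singleton a => simpa using h a (by simp)
  | cons a F ha hF ih =>
      have h1 : y ⊔ a = x := h a (by simp)
      have h2 : y ⊔ F.inf' hF id = x := ih (fun z hz => h z (Finset.mem_cons_of_mem hz))
      have := hSDjoin y a (F.inf' hF id) (by rw [h1, h2])
      rw [Finset.inf'_cons hF, id_eq]
      rw [this, h1]

/-- Let `L` be a finite semidistributive lattice, let `x` cover `y` in `L`,
and let `j` be the meet of the set `{z : z ≤ x and z ≰ y}` (which is well defined
since the lattice is finite).  Then `j ⊔ y = x`; in particular `j ≤ x` and `j ≰ y`. -/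
theorem stmt1 {L : Type*} [Lattice L] [Fintype L]
    (hSDjoin : ∀ x y z : L, x ⊔ y = x ⊔ z → x ⊔ (y ⊓ z) = x ⊔ y)
    (hSDmeet : ∀ x y z : L, x ⊓ y = x ⊓ z → x ⊓ (y ⊔ z) = x ⊓ y)
    (x y : L) (hxy : y ⋖ x)
    (j : L) (hj : IsGLB {z : L | z ≤ x ∧ ¬ z ≤ y} j) :
    j ⊔ y = x ∧ j ≤ x ∧ ¬ j ≤ y := by
  classical
  set S : Set L := {z : L | z ≤ x ∧ ¬ z ≤ y} with hS
  have hxS : x ∈ S := ⟨le_rfl, hxy.1.not_ge⟩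
  set F : Finset L := S.toFinset with hFdef
  have hxF : x ∈ F := Set.mem_toFinset.2 hxS
  have hFne : F.Nonempty := ⟨x, hxF⟩
  have hjeq : j = F.inf' hFne id := by
    apply le_antisymm
    · apply Finset.le_inf'
      intro z hz
      exact hj.1 (Set.mem_toFinset.1 hz)
    · apply hj.2
      intro z hz
      exact Finset.inf'_le id (Set.mem_toFinset.2 hz)
  have hjoin : y ⊔ j = x := by
    rw [hjeq]
    apply aux_inf_join hSDjoin
    intro z hz
    obtain ⟨hzx, hzy⟩ := Set.mem_toFinset.1 hz
    have h1 : y < y ⊔ z := lt_of_le_of_ne le_sup_left (fun h => hzy (h ▸ le_sup_right))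
    have h2 : y ⊔ z ≤ x := sup_le hxy.1.le hzx
    rcases lt_or_eq_of_le h2 with h | h
    · exact absurd h (hxy.2 h1)
    · exact h
  have hjx : j ⊔ y = x := by rw [sup_comm, hjoin]
  refine ⟨hjx, ?_, ?_⟩
  · calc j ≤ j ⊔ y := le_sup_left
    _ = x := hjx
  · intro h
    have : j ⊔ y = y := sup_eq_right.2 h
    rw [hjx] at this
    exact absurd this.symm hxy.1.ne
end

section
/- Let L be a finite lattice in which every element has a canonical join representation, let x cover y, and suppose the canonical join representation of x is x = ⋁ J. Then there exists exactly one j ∈ J with j ≰ y. -/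
/-- `x = ⋁ S` is the *canonical join representation* of `x`:  `S` joins to `x`,
no proper subset of `S` joins to `x`, and every join representation `x = ⋁ T`
refines `S`, i.e. for all `s ∈ S` there is `t ∈ T` with `s ≤ t`. -/
def IsCanonicalJoinRep {L : Type*} [Lattice L] [OrderBot L] (x : L) (S : Finset L) : Prop :=
  S.sup id = x ∧
  (∀ S' : Finset L, S' ⊂ S → S'.sup id ≠ x) ∧
  (∀ T : Finset L, T.sup id = x → ∀ s ∈ S, ∃ t ∈ T, s ≤ t)

/-- Let `L` be a finite lattice in which every element has a canonical join
representation, let `x` cover `y`, and suppose `x = ⋁ J` is the canonical join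
representation of `x`.  Then there is exactly one `j ∈ J` with `j ≰ y`. -/
theorem stmt5 {L : Type*} [Lattice L] [OrderBot L] [Fintype L]
    (hall : ∀ z : L, ∃ S : Finset L, IsCanonicalJoinRep z S)
    (x y : L) (hxy : y ⋖ x)
    (J : Finset L) (hJ : IsCanonicalJoinRep x J) :
    ∃! j : L, j ∈ J ∧ ¬ j ≤ y := by
  classical
  obtain ⟨hsup, hmin, href⟩ := hJ
  -- existence
  have hex : ∃ j ∈ J, ¬ j ≤ y := by
    by_contra h
    push_neg at h
    have : J.sup id ≤ y := Finset.sup_le fun j hj => h j hj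
    rw [hsup] at this
    exact absurd this (not_le_of_gt hxy.lt)
  obtain ⟨a, haJ, hay⟩ := hex
  -- any b ∈ J with b ≰ y satisfies y ⊔ b = x
  have hjoin : ∀ b ∈ J, ¬ b ≤ y → y ⊔ b = x := by
    intro b hbJ hby
    have hbx : b ≤ x := hsup ▸ Finset.le_sup (f := id) hbJ
    have h1 : y < y ⊔ b := lt_of_le_of_ne le_sup_left
      (fun h => hby (h ▸ le_sup_right))
    have h2 : y ⊔ b ≤ x := sup_le hxy.lt.le hbx
    exact ((hxy.eq_or_eq le_sup_left h2).resolve_left h1.ne')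
  -- refinement step: if b ∈ J with b ≰ y, then any c ∈ J with c ≰ y has c ≤ b
  have hkey : ∀ b ∈ J, ¬ b ≤ y → ∀ c ∈ J, ¬ c ≤ y → c ≤ b := by
    intro b hbJ hby c hcJ hcy
    have hT : ({y, b} : Finset L).sup id = x := by
      simp [Finset.sup_insert, hjoin b hbJ hby]
    obtain ⟨t, htT, hct⟩ := href _ hT c hcJ
    simp only [Finset.mem_insert, Finset.mem_singleton] at htT
    rcases htT with rfl | rfl
    · exact absurd hct hcy
    · exact hct
  exact ⟨a, ⟨haJ, hay⟩, fun b ⟨hbJ, hby⟩ =>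
    le_antisymm (hkey a haJ hay b hbJ hby) (hkey b hbJ hby a haJ hay)⟩
end

section
/- The number of join-irreducible elements of the weak order on the symmetric group S_{n+1} equals 2^{n+1} − n − 2. -/
namespace Stmt7

variable {n : ℕ}

open Equiv Finset

/-- The Coxeter length of a permutation: its number of inversions. -/
noncomputable def len (w : Equiv.Perm (Fin (n + 1))) : ℕ :=
  Nat.card {p : Fin (n + 1) × Fin (n + 1) // p.1 < p.2 ∧ w p.2 < w p.1}

/-- The right weak order on the symmetric group: `u ≤ v` iff `ℓ(u) + ℓ(u⁻¹v) = ℓ(v)`. -/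
noncomputable def wle (u v : Equiv.Perm (Fin (n + 1))) : Prop :=
  len u + len (u⁻¹ * v) = len v

/-- `y` is covered by `x` in the weak order. -/
noncomputable def wcov (y x : Equiv.Perm (Fin (n + 1))) : Prop :=
  wle y x ∧ y ≠ x ∧ ∀ z, wle y z → wle z x → z = y ∨ z = x

/-- `x` is join-irreducible for the weak order: not the minimum and covering exactly one
element. -/
noncomputable def JoinIrr (x : Equiv.Perm (Fin (n + 1))) : Prop :=
  x ≠ 1 ∧ ∃! y, wcov y x

def invs (w : Equiv.Perm (Fin (n + 1))) : Finset (Fin (n + 1) × Fin (n + 1)) :=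
  Finset.univ.filter fun p => p.1 < p.2 ∧ w p.2 < w p.1

lemma len_eq (w : Equiv.Perm (Fin (n + 1))) : len w = (invs w).card := by
  rw [len, Nat.card_eq_fintype_card, Fintype.card_subtype]
  rfl

/-- adjacent transposition -/
def sw (i : Fin n) : Equiv.Perm (Fin (n + 1)) := Equiv.swap i.castSucc i.succ

lemma sw_lt {i : Fin n} {a b : Fin (n + 1)} (hab : a < b)
    (hne : ¬(a = i.castSucc ∧ b = i.succ)) : sw i a < sw i b := by
  simp only [sw, Equiv.swap_apply_def]
  push_neg at hne
  simp only [Fin.ext_iff] at hne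
  have hc : (i.castSucc : ℕ) = (i : ℕ) := rfl
  have hs : (i.succ : ℕ) = (i : ℕ) + 1 := rfl
  split_ifs with h1 h2 h3 h4 <;>
    · simp only [Fin.ext_iff] at *
      fin_omega

lemma len_one : len (1 : Equiv.Perm (Fin (n + 1))) = 0 := by
  rw [len_eq, Finset.card_eq_zero]
  unfold invs
  rw [Finset.filter_eq_empty_iff]
  rintro ⟨a, b⟩ -
  rintro ⟨h1, h2⟩
  exact absurd h2 h1.asymm


lemma mem_invs {w : Equiv.Perm (Fin (n + 1))} {p : Fin (n + 1) × Fin (n + 1)} :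
    p ∈ invs w ↔ p.1 < p.2 ∧ w p.2 < w p.1 := by simp [invs]

lemma sw_sw (i : Fin n) (a : Fin (n + 1)) : sw i (sw i a) = a := Equiv.swap_apply_self _ _ _

lemma sw_mul_self (i : Fin n) : sw i * sw i = 1 := Equiv.swap_mul_self _ _

lemma len_mul_sw_of_lt {w : Equiv.Perm (Fin (n + 1))} {i : Fin n}
    (h : w i.castSucc < w i.succ) : len (w * sw i) = len w + 1 := by
  classical
  rw [len_eq, len_eq]
  have hkey : invs (w * sw i) =
      insert (i.castSucc, i.succ) ((invs w).image fun p => (sw i p.1, sw i p.2)) := by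
    ext ⟨a, b⟩
    simp only [Finset.mem_insert, Finset.mem_image, mem_invs, Prod.mk.injEq, Prod.exists]
    constructor
    · rintro ⟨hab, hw⟩
      by_cases hc : a = i.castSucc ∧ b = i.succ
      · exact Or.inl ⟨hc.1, hc.2⟩
      · refine Or.inr ⟨sw i a, sw i b, ⟨sw_lt hab hc, ?_⟩, by rw [sw_sw], by rw [sw_sw]⟩
        simpa [Equiv.Perm.mul_apply, sw_sw] using hw
    · rintro (⟨ha, hb⟩ | ⟨c, d, ⟨hcd, hw⟩, hc, hd⟩)
      · subst ha; subst hb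
        refine ⟨Fin.castSucc_lt_succ (i := i), ?_⟩
        simpa [sw, Equiv.Perm.mul_apply] using h
      · subst hc; subst hd
        have hne : ¬(c = i.castSucc ∧ d = i.succ) := by
          rintro ⟨rfl, rfl⟩; exact absurd h (not_lt.2 hw.le)
        refine ⟨sw_lt hcd hne, ?_⟩
        simpa [Equiv.Perm.mul_apply, sw_sw] using hw
  have einj : Function.Injective fun p : Fin (n + 1) × Fin (n + 1) => (sw i p.1, sw i p.2) := by
    intro p q hpq
    have h1 := congrArg Prod.fst hpq
    have h2 := congrArg Prod.snd hpq
    simp only at h1 h2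
    exact Prod.ext ((sw i).injective h1) ((sw i).injective h2)
  have hnm : (i.castSucc, i.succ) ∉ (invs w).image fun p => (sw i p.1, sw i p.2) := by
    simp only [Finset.mem_image, mem_invs, Prod.mk.injEq, Prod.exists, not_exists]
    rintro c d ⟨⟨hcd, -⟩, hc, hd⟩
    have hc' : c = i.succ := by
      have := congrArg (sw i) hc; rwa [sw_sw, sw, Equiv.swap_apply_left] at this
    have hd' : d = i.castSucc := by
      have := congrArg (sw i) hd; rwa [sw_sw, sw, Equiv.swap_apply_right] at this
    subst hc'; subst hd'
    exact absurd hcd (Fin.castSucc_lt_succ (i := i)).asymm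
  rw [hkey, Finset.card_insert_of_notMem hnm, Finset.card_image_of_injective _ einj]

lemma len_mul_sw_of_gt {w : Equiv.Perm (Fin (n + 1))} {i : Fin n}
    (h : w i.succ < w i.castSucc) : len w = len (w * sw i) + 1 := by
  have h' : (w * sw i) i.castSucc < (w * sw i) i.succ := by
    simpa [sw, Equiv.Perm.mul_apply] using h
  have := len_mul_sw_of_lt h'
  rwa [mul_assoc, sw_mul_self, mul_one] at this

lemma len_sw (i : Fin n) : len (sw i) = 1 := by
  have h : (1 : Equiv.Perm (Fin (n + 1))) i.castSucc < (1 : Equiv.Perm (Fin (n + 1))) i.succ := by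
    simpa using Fin.castSucc_lt_succ i
  simpa [len_one] using len_mul_sw_of_lt h

lemma len_mul_le (u v : Equiv.Perm (Fin (n + 1))) : len (u * v) ≤ len u + len v := by
  classical
  rw [len_eq, len_eq, len_eq, ← Finset.card_disjSum]
  apply Finset.card_le_card_of_injOn
    (fun p => if v p.2 < v p.1 then Sum.inr p else Sum.inl (v p.1, v p.2))
  · rintro ⟨a, b⟩ hp
    rw [Finset.mem_coe, mem_invs] at hp
    obtain ⟨hab, hw⟩ := hp
    by_cases hv : v b < v a
    · simp only [hv, if_pos]
      exact Finset.inr_mem_disjSum.2 (mem_invs.2 ⟨hab, hv⟩)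
    · simp only [hv, if_neg, not_false_iff]
      have : v a < v b := lt_of_le_of_ne (not_lt.1 hv) (fun hh => hab.ne (v.injective hh))
      exact Finset.inl_mem_disjSum.2 (mem_invs.2 ⟨this, by simpa [Equiv.Perm.mul_apply] using hw⟩)
  · rintro ⟨a, b⟩ hp ⟨c, d⟩ hq hfg
    simp only at hfg
    split_ifs at hfg
    all_goals
      first
      | · simp only [Sum.inr.injEq] at hfg
          exact hfg
      | · simp only [Sum.inl.injEq, Prod.mk.injEq] at hfg
          exact Prod.ext (v.injective hfg.1) (v.injective hfg.2)
      | · simp at hfg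

lemma perm_eq_one_of_strictMono {w : Equiv.Perm (Fin (n + 1))} (h : StrictMono w) : w = 1 := by
  haveI : WellFoundedLT (Fin (n + 1)) := Finite.to_wellFoundedLT
  have hinv : StrictMono (w⁻¹ : Equiv.Perm (Fin (n + 1))) := by
    intro p q hpq
    rcases lt_trichotomy (w⁻¹ p) (w⁻¹ q) with h' | h' | h'
    · exact h'
    · exact absurd (congrArg w h') (by simp [hpq.ne])
    · have := h h'
      simp only [Equiv.Perm.inv_def, Equiv.apply_symm_apply] at this
      exact absurd hpq this.asymm
  ext p
  have h1 : p ≤ w p := h.le_apply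
  have h2 : w p ≤ w⁻¹ (w p) := hinv.le_apply
  simp only [Equiv.Perm.inv_def, Equiv.symm_apply_apply] at h2
  simp [le_antisymm h2 h1]

lemma len_eq_zero_iff {w : Equiv.Perm (Fin (n + 1))} : len w = 0 ↔ w = 1 := by
  constructor
  · intro hw
    apply perm_eq_one_of_strictMono
    intro a b hab
    rcases lt_trichotomy (w a) (w b) with h | h | h
    · exact h
    · exact absurd (w.injective h) hab.ne
    · exfalso
      rw [len_eq, Finset.card_eq_zero] at hw
      have : (a, b) ∈ invs w := mem_invs.2 ⟨hab, h⟩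
      simp [hw] at this
  · rintro rfl; exact len_one

lemma exists_descent {w : Equiv.Perm (Fin (n + 1))} (hw : w ≠ 1) :
    ∃ i : Fin n, w i.succ < w i.castSucc := by
  by_contra hcon
  push_neg at hcon
  apply hw
  apply perm_eq_one_of_strictMono
  rw [Fin.strictMono_iff_lt_succ]
  intro i
  exact lt_of_le_of_ne (hcon i) fun hh => (Fin.castSucc_lt_succ (i := i)).ne (w.injective hh)

lemma wle_def {u v : Equiv.Perm (Fin (n + 1))} :
    wle u v ↔ len u + len (u⁻¹ * v) = len v := Iff.rfl

lemma sw_inv (i : Fin n) : (sw i)⁻¹ = sw i := Equiv.swap_inv _ _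

lemma wle_len_le {u v : Equiv.Perm (Fin (n + 1))} (h : wle u v) : len u ≤ len v := by
  rw [wle_def] at h; omega

lemma wle_eq_of_len_le {u v : Equiv.Perm (Fin (n + 1))} (h : wle u v) (h2 : len v ≤ len u) :
    u = v := by
  rw [wle_def] at h
  have h0 : len (u⁻¹ * v) = 0 := by omega
  exact inv_mul_eq_one.1 (len_eq_zero_iff.1 h0)

lemma wle_mul_sw {x : Equiv.Perm (Fin (n + 1))} {i : Fin n} (hi : x i.succ < x i.castSucc) :
    wle (x * sw i) x := by
  rw [wle_def]
  have h1 : (x * sw i)⁻¹ * x = sw i := by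
    rw [mul_inv_rev, mul_assoc, inv_mul_cancel, mul_one, sw_inv]
  rw [h1, len_sw]
  have := len_mul_sw_of_gt hi
  omega

lemma sw_injective : Function.Injective (sw (n := n)) := by
  intro i j h
  have hkey := congrArg (fun f => f i.castSucc) h
  simp only [sw, Equiv.swap_apply_left] at hkey
  have hc1 : (i.castSucc : ℕ) = (i : ℕ) := rfl
  have hc2 : (j.castSucc : ℕ) = (j : ℕ) := rfl
  have hs1 : (i.succ : ℕ) = (i : ℕ) + 1 := rfl
  have hs2 : (j.succ : ℕ) = (j : ℕ) + 1 := rfl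
  rw [Equiv.swap_apply_def] at hkey
  split_ifs at hkey <;>
    · simp only [Fin.ext_iff] at *
      omega

lemma cover_iff {x y : Equiv.Perm (Fin (n + 1))} :
    wcov y x ↔ ∃ i : Fin n, x i.succ < x i.castSucc ∧ y = x * sw i := by
  constructor
  · rintro ⟨hle, hne, huniq⟩
    set v := y⁻¹ * x with hv
    have hxv : y * v = x := by rw [hv, mul_inv_cancel_left]
    have hvne : v ≠ 1 := by
      intro h
      rw [h, mul_one] at hxv
      exact hne hxv
    obtain ⟨j, hj⟩ := exists_descent hvne
    have hlenv : len y + len v = len x := hle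
    have hv1 : len v = len (v * sw j) + 1 := len_mul_sw_of_gt hj
    by_cases hcase : len v = 1
    · have h0 : len (v * sw j) = 0 := by omega
      have h1 : v * sw j = 1 := len_eq_zero_iff.1 h0
      have hvsw : v = sw j := by
        calc v = v * sw j * sw j := by rw [mul_assoc, sw_mul_self, mul_one]
          _ = sw j := by rw [h1, one_mul]
      have hx : x = y * sw j := by rw [← hxv, hvsw]
      refine ⟨j, ?_, by rw [← hxv, hvsw, mul_assoc, sw_mul_self, mul_one]⟩
      rcases lt_trichotomy (y j.castSucc) (y j.succ) with hy | hy | hy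
      · have e1 : x j.succ = y j.castSucc := by
          rw [hx]; simp [sw, Equiv.Perm.mul_apply, Equiv.swap_apply_right]
        have e2 : x j.castSucc = y j.succ := by
          rw [hx]; simp [sw, Equiv.Perm.mul_apply, Equiv.swap_apply_left]
        rw [e1, e2]; exact hy
      · exact absurd (y.injective hy) (Fin.castSucc_lt_succ (i := j)).ne
      · have hcon := len_mul_sw_of_gt hy
        rw [← hx] at hcon
        omega
    · exfalso
      have hv0 : len v ≠ 0 := fun h => hvne (len_eq_zero_iff.1 h)
      have hzx : (y * (v * sw j)) * sw j = x := by
        rw [← hxv, mul_assoc, mul_assoc, sw_mul_self, mul_one]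
      have hlez : len (y * (v * sw j)) ≤ len y + len (v * sw j) := len_mul_le _ _
      have hge : len x ≤ len (y * (v * sw j)) + 1 := by
        rcases lt_trichotomy ((y * (v * sw j)) j.castSucc) ((y * (v * sw j)) j.succ) with hc | hc | hc
        · have := len_mul_sw_of_lt hc; rw [hzx] at this; omega
        · exact absurd ((y * (v * sw j)).injective hc) (Fin.castSucc_lt_succ (i := j)).ne
        · have := len_mul_sw_of_gt hc; rw [hzx] at this; omega
      have hlenz : len (y * (v * sw j)) = len y + len (v * sw j) := by omega
      have hwle1 : wle y (y * (v * sw j)) := by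
        rw [wle_def, inv_mul_cancel_left]
        omega
      have hwle2 : wle (y * (v * sw j)) x := by
        rw [wle_def, ← hzx, inv_mul_cancel_left, len_sw, hzx]
        omega
      rcases huniq _ hwle1 hwle2 with h | h
      · rw [h] at hlenz; omega
      · rw [h] at hlenz; omega
  · rintro ⟨i, hi, rfl⟩
    refine ⟨wle_mul_sw hi, ?_, ?_⟩
    · intro h
      have h2 : (x * sw i) i.castSucc = x i.succ := by
        simp [sw, Equiv.Perm.mul_apply, Equiv.swap_apply_left]
      rw [h] at h2
      exact absurd (x.injective h2) (Fin.castSucc_lt_succ (i := i)).ne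
    · intro z h1 h2
      have l1 : len (x * sw i) ≤ len z := wle_len_le h1
      have l2 : len z ≤ len x := wle_len_le h2
      have lx : len x = len (x * sw i) + 1 := len_mul_sw_of_gt hi
      rcases (by omega : len z = len (x * sw i) ∨ len z = len x) with h | h
      · exact Or.inl (wle_eq_of_len_le h1 (le_of_eq h)).symm
      · exact Or.inr (wle_eq_of_len_le h2 (le_of_eq h.symm))

def des (x : Equiv.Perm (Fin (n + 1))) : Finset (Fin n) :=
  Finset.univ.filter fun i => x i.succ < x i.castSucc

lemma mem_des {x : Equiv.Perm (Fin (n + 1))} {i : Fin n} :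
    i ∈ des x ↔ x i.succ < x i.castSucc := by simp [des]

lemma joinIrr_iff {x : Equiv.Perm (Fin (n + 1))} : JoinIrr x ↔ (des x).card = 1 := by
  constructor
  · rintro ⟨hx1, y, hy, huni⟩
    obtain ⟨i, hi, rfl⟩ := cover_iff.1 hy
    rw [Finset.card_eq_one]
    refine ⟨i, ?_⟩
    ext j
    simp only [Finset.mem_singleton, mem_des]
    constructor
    · intro hj
      have h := huni (x * sw j) (cover_iff.2 ⟨j, hj, rfl⟩)
      exact sw_injective (mul_left_cancel h)
    · rintro rfl; exact hi
  · intro hcard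
    obtain ⟨i, hi⟩ := Finset.card_eq_one.1 hcard
    have hid : x i.succ < x i.castSucc := by
      have : i ∈ des x := hi ▸ Finset.mem_singleton_self i
      exact mem_des.1 this
    refine ⟨?_, x * sw i, cover_iff.2 ⟨i, hid, rfl⟩, ?_⟩
    · rintro rfl
      simp only [Equiv.Perm.coe_one, id_eq] at hid
      exact absurd hid (Fin.castSucc_lt_succ (i := i)).asymm
    · rintro y hy
      obtain ⟨j, hj, rfl⟩ := cover_iff.1 hy
      have hmem : j ∈ des x := mem_des.2 hj
      rw [hi, Finset.mem_singleton] at hmem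
      rw [hmem]


lemma lt_of_chain {x : Equiv.Perm (Fin (n + 1))} (p q : Fin (n + 1)) (hpq : p < q)
    (h : ∀ i : Fin n, (p : ℕ) ≤ (i : ℕ) → (i : ℕ) + 1 ≤ (q : ℕ) → x i.castSucc < x i.succ) :
    x p < x q := by
  obtain ⟨d, hd⟩ : ∃ d, (q : ℕ) = (p : ℕ) + d + 1 := ⟨(q : ℕ) - (p : ℕ) - 1, by
    have := (Fin.lt_def.1 hpq); omega⟩
  induction d generalizing q with
  | zero =>
    have hi : (p : ℕ) < n := by have := q.isLt; omega
    have e1 : ((⟨(p : ℕ), hi⟩ : Fin n).castSucc) = p := Fin.ext rfl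
    have e2 : ((⟨(p : ℕ), hi⟩ : Fin n).succ) = q := Fin.ext (by simp [Fin.val_succ]; omega)
    rw [← e1, ← e2]
    exact h _ (le_refl _) (by simp [Fin.val_succ]; omega)
  | succ d ih =>
    have hrlt : (p : ℕ) + d + 1 < n + 1 := by have := q.isLt; omega
    set r : Fin (n + 1) := ⟨(p : ℕ) + d + 1, hrlt⟩ with hr
    have hpr : p < r := Fin.lt_def.2 (by show (p : ℕ) < (p : ℕ) + d + 1; omega)
    have h1 : x p < x r := by
      apply ih r hpr ?_ rfl
      intro i hi1 hi2
      refine h i hi1 ?_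
      have hh : (i : ℕ) + 1 ≤ (p : ℕ) + d + 1 := hi2
      omega
    have hi : (r : ℕ) < n := by show (p : ℕ) + d + 1 < n; have := q.isLt; omega
    have e1 : ((⟨(r : ℕ), hi⟩ : Fin n).castSucc) = r := Fin.ext rfl
    have e2 : ((⟨(r : ℕ), hi⟩ : Fin n).succ) = q :=
      Fin.ext (by show (p : ℕ) + d + 1 + 1 = (q : ℕ); omega)
    have h2 : x r < x q := by
      rw [← e1, ← e2]
      refine h _ ?_ ?_
      · show (p : ℕ) ≤ (p : ℕ) + d + 1; omega
      · show (p : ℕ) + d + 1 + 1 ≤ (q : ℕ); omega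
    exact h1.trans h2

lemma card_compl_fin (S : Finset (Fin (n + 1))) : Sᶜ.card = n + 1 - S.card := by
  rw [Finset.card_compl, Fintype.card_fin]

noncomputable def blockFun (S : Finset (Fin (n + 1))) (p : Fin (n + 1)) : Fin (n + 1) :=
  if h : (p : ℕ) < S.card then S.orderEmbOfFin rfl ⟨(p : ℕ), h⟩
  else Sᶜ.orderEmbOfFin (card_compl_fin S) ⟨(p : ℕ) - S.card, by have := p.isLt; omega⟩

lemma blockFun_injective (S : Finset (Fin (n + 1))) : Function.Injective (blockFun S) := by
  intro p q h
  unfold blockFun at h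
  split_ifs at h with h1 h2 h2
  · have := (S.orderEmbOfFin rfl).injective h
    rw [Fin.mk.injEq] at this
    exact Fin.ext this
  · exfalso
    have m1 : S.orderEmbOfFin rfl ⟨(p : ℕ), h1⟩ ∈ S := Finset.orderEmbOfFin_mem _ _ _
    rw [h] at m1
    exact absurd m1 (Finset.mem_compl.1 (Finset.orderEmbOfFin_mem _ _ _))
  · exfalso
    have m2 : S.orderEmbOfFin rfl ⟨(q : ℕ), h2⟩ ∈ S := Finset.orderEmbOfFin_mem _ _ _
    rw [← h] at m2
    exact absurd m2 (Finset.mem_compl.1 (Finset.orderEmbOfFin_mem _ _ _))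
  · have := (Sᶜ.orderEmbOfFin (card_compl_fin S)).injective h
    rw [Fin.mk.injEq] at this
    exact Fin.ext (by omega)

noncomputable def blockPerm (S : Finset (Fin (n + 1))) : Equiv.Perm (Fin (n + 1)) :=
  Equiv.ofBijective _ ((Finite.injective_iff_bijective).1 (blockFun_injective S))

lemma blockPerm_apply (S : Finset (Fin (n + 1))) (p : Fin (n + 1)) :
    blockPerm S p = blockFun S p := rfl

lemma blockPerm_mem_iff (S : Finset (Fin (n + 1))) (p : Fin (n + 1)) :
    blockPerm S p ∈ S ↔ (p : ℕ) < S.card := by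
  rw [blockPerm_apply]
  unfold blockFun
  split_ifs with h1
  · simp [h1]
  · simp only [h1, iff_false]
    exact Finset.mem_compl.1 (Finset.orderEmbOfFin_mem _ _ _)


lemma blockPerm_lt_of_ne {S : Finset (Fin (n + 1))} {i : Fin n} (hne : (i : ℕ) + 1 ≠ S.card) :
    blockPerm S i.castSucc < blockPerm S i.succ := by
  have e1 : (i.castSucc : ℕ) = (i : ℕ) := rfl
  have e2 : (i.succ : ℕ) = (i : ℕ) + 1 := rfl
  rw [blockPerm_apply, blockPerm_apply]
  unfold blockFun
  split_ifs with hA hB hB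
  · exact (S.orderEmbOfFin rfl).strictMono (by rw [Fin.mk_lt_mk]; omega)
  · omega
  · omega
  · exact (Sᶜ.orderEmbOfFin (card_compl_fin S)).strictMono (by rw [Fin.mk_lt_mk]; omega)

lemma des_blockPerm_subset {S : Finset (Fin (n + 1))} {i : Fin n}
    (h : i ∈ des (blockPerm S)) : (i : ℕ) + 1 = S.card := by
  by_contra hne
  exact absurd (mem_des.1 h) (blockPerm_lt_of_ne hne).asymm

lemma not_isLowerSet_iff {S : Finset (Fin (n + 1))} :
    ¬IsLowerSet (S : Set (Fin (n + 1))) ↔ ∃ a b, b ≤ a ∧ a ∈ S ∧ b ∉ S := by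
  unfold IsLowerSet
  push_neg
  simp only [Finset.mem_coe]

lemma blockPerm_boundary_descent {S : Finset (Fin (n + 1))}
    (h : ¬IsLowerSet (S : Set (Fin (n + 1)))) {i : Fin n} (hic : (i : ℕ) + 1 = S.card) :
    blockPerm S i.succ < blockPerm S i.castSucc := by
  obtain ⟨a, b, hba, haS, hbS⟩ := not_isLowerSet_iff.1 h
  have hS : S.Nonempty := ⟨a, haS⟩
  have hSc : Sᶜ.Nonempty := ⟨b, Finset.mem_compl.2 hbS⟩
  have hcpos : 0 < S.card := Finset.card_pos.2 hS
  have hccpos : 0 < Sᶜ.card := Finset.card_pos.2 hSc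
  have e1 : (i.castSucc : ℕ) = (i : ℕ) := rfl
  have e2 : (i.succ : ℕ) = (i : ℕ) + 1 := rfl
  rw [blockPerm_apply, blockPerm_apply]
  unfold blockFun
  rw [dif_pos (show ((i.castSucc : Fin (n + 1)) : ℕ) < S.card by omega),
    dif_neg (show ¬((i.succ : Fin (n + 1)) : ℕ) < S.card by omega)]
  have hmax : S.orderEmbOfFin rfl ⟨(i.castSucc : ℕ), by omega⟩ = S.max' hS := by
    have : (⟨(i.castSucc : ℕ), by omega⟩ : Fin S.card) =
        ⟨S.card - 1, Nat.sub_lt hcpos Nat.one_pos⟩ :=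
      Fin.ext (by show (i.castSucc : ℕ) = S.card - 1; omega)
    rw [this, Finset.orderEmbOfFin_last rfl hcpos]
  have hmin : Sᶜ.orderEmbOfFin (card_compl_fin S) ⟨(i.succ : ℕ) - S.card, by
      have := (i.succ).isLt; omega⟩ = Sᶜ.min' hSc := by
    have : (⟨(i.succ : ℕ) - S.card, by have := (i.succ).isLt; omega⟩ : Fin (n + 1 - S.card)) =
        ⟨0, by omega⟩ := Fin.ext (by show (i.succ : ℕ) - S.card = 0; omega)
    rw [this, Finset.orderEmbOfFin_zero (card_compl_fin S) (by omega)]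
  rw [hmax, hmin]
  calc Sᶜ.min' hSc ≤ b := Finset.min'_le _ _ (Finset.mem_compl.2 hbS)
    _ < a := lt_of_le_of_ne hba (by rintro rfl; exact hbS haS)
    _ ≤ S.max' hS := Finset.le_max' _ _ haS

lemma eq_blockPerm_of (x : Equiv.Perm (Fin (n + 1))) (S : Finset (Fin (n + 1))) (c : ℕ)
    (hc : c ≤ n + 1)
    (hS : S = Finset.image (fun j : Fin c => x (Fin.castLE hc j)) Finset.univ)
    (hdes : ∀ i : Fin n, x i.succ < x i.castSucc → (i : ℕ) + 1 = c) :
    x = blockPerm S := by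
  have hinj : Function.Injective fun j : Fin c => x (Fin.castLE hc j) := by
    intro a b h
    have h2 := x.injective h
    have h3 := congrArg Fin.val h2
    simp only [Fin.coe_castLE] at h3
    exact Fin.ext h3
  have hcard : S.card = c := by
    rw [hS, Finset.card_image_of_injective _ hinj, Finset.card_univ, Fintype.card_fin]
  subst hcard
  haveI : ∀ k : ℕ, WellFoundedLT (Fin k) := fun k => Finite.to_wellFoundedLT
  have hmono : ∀ p q : Fin (n + 1), p < q → ¬((p : ℕ) < S.card ∧ S.card ≤ (q : ℕ)) →
      x p < x q := by
    intro p q hpq hcross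
    apply lt_of_chain p q hpq
    intro i h1 h2
    by_contra hcon
    push_neg at hcon
    have hlt : x i.succ < x i.castSucc := lt_of_le_of_ne hcon
      (fun hh => (Fin.castSucc_lt_succ (i := i)).ne ((x.injective hh).symm))
    have hb := hdes i hlt
    exact hcross ⟨by omega, by omega⟩
  -- membership criterion
  have hmem0 : ∀ a : Fin (n + 1), a ∈ S ↔ ∃ j : Fin S.card, x (Fin.castLE hc j) = a := by
    intro a
    constructor
    · intro ha
      rw [hS] at ha
      obtain ⟨j, -, hj⟩ := Finset.mem_image.1 ha
      exact ⟨j, hj⟩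
    · rintro ⟨j, hj⟩
      rw [hS]
      exact Finset.mem_image.2 ⟨j, Finset.mem_univ _, hj⟩
  have hmem : ∀ a : Fin (n + 1), a ∈ S ↔ ((x.symm a : ℕ) < S.card) := by
    intro a
    rw [hmem0 a]
    constructor
    · rintro ⟨j, hj⟩
      have h4 : x.symm a = Fin.castLE hc j := by rw [← hj, Equiv.symm_apply_apply]
      rw [h4]
      exact j.isLt
    · intro hlt
      refine ⟨⟨(x.symm a : ℕ), hlt⟩, ?_⟩
      have h4 : Fin.castLE hc ⟨(x.symm a : ℕ), hlt⟩ = x.symm a := Fin.ext rfl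
      rw [h4, Equiv.apply_symm_apply]
  -- first block
  have hf : ∀ j : Fin S.card, x (Fin.castLE hc j) = S.orderEmbOfFin rfl j := by
    have hsm : StrictMono fun j : Fin S.card => x (Fin.castLE hc j) := by
      intro j j' hjj
      apply hmono _ _ (by rw [Fin.lt_def]; exact hjj)
      rintro ⟨-, h2⟩
      have h3 : (j' : ℕ) < S.card := j'.isLt
      simp only [Fin.coe_castLE] at h2
      omega
    have hrange : Set.range (fun j : Fin S.card => x (Fin.castLE hc j)) =
        Set.range (S.orderEmbOfFin rfl) := by
      rw [Finset.range_orderEmbOfFin]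
      ext a
      rw [Set.mem_range, Finset.mem_coe]
      exact (hmem0 a).symm
    exact congrFun ((hsm.range_inj (S.orderEmbOfFin rfl).strictMono).1 hrange)
  -- second block
  have hf2 : ∀ j : Fin (n + 1 - S.card),
      x ⟨S.card + (j : ℕ), by have := j.isLt; omega⟩ =
        Sᶜ.orderEmbOfFin (card_compl_fin S) j := by
    have hsm : StrictMono fun j : Fin (n + 1 - S.card) =>
        x ⟨S.card + (j : ℕ), by have := j.isLt; omega⟩ := by
      intro j j' hjj
      apply hmono _ _ (by rw [Fin.lt_def]; simp; exact hjj)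
      rintro ⟨h1, -⟩
      simp only at h1
      omega
    have hrange : Set.range (fun j : Fin (n + 1 - S.card) =>
        x ⟨S.card + (j : ℕ), by have := j.isLt; omega⟩) =
        Set.range (Sᶜ.orderEmbOfFin (card_compl_fin S)) := by
      rw [Finset.range_orderEmbOfFin, Finset.coe_compl]
      ext a
      simp only [Set.mem_range, Set.mem_compl_iff, Finset.mem_coe, hmem a, not_lt]
      constructor
      · rintro ⟨j, hj⟩
        have : x.symm a = ⟨S.card + (j : ℕ), by have := j.isLt; omega⟩ := by
          rw [← hj, Equiv.symm_apply_apply]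
        rw [this]
        exact Nat.le_add_right _ _
      · intro hle
        have hlt : (x.symm a : ℕ) - S.card < n + 1 - S.card := by
          have := (x.symm a).isLt; omega
        refine ⟨⟨(x.symm a : ℕ) - S.card, hlt⟩, ?_⟩
        have : (⟨S.card + ((x.symm a : ℕ) - S.card), by omega⟩ : Fin (n + 1)) = x.symm a :=
          Fin.ext (by simp; omega)
        rw [this, Equiv.apply_symm_apply]
    exact congrFun ((hsm.range_inj (Sᶜ.orderEmbOfFin (card_compl_fin S)).strictMono).1 hrange)
  have hf2' : ∀ (p : Fin (n + 1)) (hp : ¬(p : ℕ) < S.card),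
      x p = Sᶜ.orderEmbOfFin (card_compl_fin S) ⟨(p : ℕ) - S.card, by have := p.isLt; omega⟩ := by
    intro p hp
    have hidx : (⟨S.card + ((p : ℕ) - S.card), by have := p.isLt; omega⟩ : Fin (n + 1)) = p :=
      Fin.ext (by show S.card + ((p : ℕ) - S.card) = (p : ℕ); omega)
    conv_lhs => rw [← hidx]
    exact hf2 ⟨(p : ℕ) - S.card, by have := p.isLt; omega⟩
  refine Equiv.ext fun p => ?_
  rw [blockPerm_apply]
  unfold blockFun
  split_ifs with hp
  · exact hf ⟨(p : ℕ), hp⟩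
  · exact hf2' p hp


lemma castLE_comp_injective (x : Equiv.Perm (Fin (n + 1))) (c : ℕ) (hc : c ≤ n + 1) :
    Function.Injective fun j : Fin c => x (Fin.castLE hc j) := by
  intro a b h
  have h2 := x.injective h
  have h3 := congrArg Fin.val h2
  simp only [Fin.coe_castLE] at h3
  exact Fin.ext h3

noncomputable def cut (x : Equiv.Perm (Fin (n + 1))) : ℕ :=
  if h : (des x).Nonempty then ((des x).max' h : ℕ) + 1 else 0

lemma cut_le (x : Equiv.Perm (Fin (n + 1))) : cut x ≤ n + 1 := by
  unfold cut
  split_ifs with h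
  · have := ((des x).max' h).isLt; omega
  · omega

noncomputable def Sof (x : Equiv.Perm (Fin (n + 1))) : Finset (Fin (n + 1)) :=
  Finset.image (fun j : Fin (cut x) => x (Fin.castLE (cut_le x) j)) Finset.univ

lemma cut_eq {x : Equiv.Perm (Fin (n + 1))} {l : Fin n} (hx : des x = {l}) :
    cut x = (l : ℕ) + 1 := by
  unfold cut
  rw [hx, dif_pos (Finset.singleton_nonempty l), Finset.max'_singleton]

lemma blockPerm_Sof {x : Equiv.Perm (Fin (n + 1))} {l : Fin n} (hx : des x = {l}) :
    x = blockPerm (Sof x) := by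
  apply eq_blockPerm_of x (Sof x) (cut x) (cut_le x) rfl
  intro i hi
  have hmem : i ∈ des x := mem_des.2 hi
  rw [hx, Finset.mem_singleton] at hmem
  rw [hmem, cut_eq hx]

lemma not_lower_Sof {x : Equiv.Perm (Fin (n + 1))} {l : Fin n} (hx : des x = {l}) :
    ¬IsLowerSet ((Sof x : Finset (Fin (n + 1))) : Set (Fin (n + 1))) := by
  have hl : l ∈ des x := by rw [hx]; exact Finset.mem_singleton_self l
  apply not_isLowerSet_iff.2
  refine ⟨x l.castSucc, x l.succ, le_of_lt (mem_des.1 hl), ?_, ?_⟩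
  · apply Finset.mem_image.2
    exact ⟨⟨(l : ℕ), by rw [cut_eq hx]; omega⟩, Finset.mem_univ _, congrArg x (Fin.ext rfl)⟩
  · intro hmem
    obtain ⟨j, -, hj⟩ := Finset.mem_image.1 hmem
    have h2 := x.injective hj
    have hv := congrArg Fin.val h2
    simp only [Fin.coe_castLE, Fin.val_succ] at hv
    have h4 : (j : ℕ) < (l : ℕ) + 1 := by rw [← cut_eq hx]; exact j.isLt
    omega

lemma des_blockPerm_eq {S : Finset (Fin (n + 1))} (h : ¬IsLowerSet (S : Set (Fin (n + 1)))) :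
    ∃ i₀ : Fin n, (i₀ : ℕ) + 1 = S.card ∧ des (blockPerm S) = {i₀} := by
  obtain ⟨a, b, hba, haS, hbS⟩ := not_isLowerSet_iff.1 h
  have hcpos : 0 < S.card := Finset.card_pos.2 ⟨a, haS⟩
  have hclt : Sᶜ.card ≠ 0 := Finset.card_ne_zero_of_mem (Finset.mem_compl.2 hbS)
  have hcc := card_compl_fin S
  have hle : S.card ≤ n := by
    have := Finset.card_le_univ S
    rw [Fintype.card_fin] at this
    omega
  refine ⟨⟨S.card - 1, by omega⟩, by show S.card - 1 + 1 = S.card; omega, ?_⟩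
  ext i
  rw [Finset.mem_singleton]
  constructor
  · intro hi
    have := des_blockPerm_subset hi
    exact Fin.ext (by show (i : ℕ) = S.card - 1; omega)
  · rintro rfl
    exact mem_des.2 (blockPerm_boundary_descent h (by show S.card - 1 + 1 = S.card; omega))

lemma Sof_blockPerm {S : Finset (Fin (n + 1))} (h : ¬IsLowerSet (S : Set (Fin (n + 1)))) :
    Sof (blockPerm S) = S := by
  obtain ⟨i₀, hic, hdes⟩ := des_blockPerm_eq h
  have hcut : cut (blockPerm S) = S.card := by
    unfold cut
    rw [hdes, dif_pos (Finset.singleton_nonempty i₀), Finset.max'_singleton]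
    exact hic
  apply Finset.eq_of_subset_of_card_le
  · intro a ha
    obtain ⟨j, -, hj⟩ := Finset.mem_image.1 ha
    rw [← hj]
    apply (blockPerm_mem_iff S _).2
    have h4 : (j : ℕ) < S.card := by rw [← hcut]; exact j.isLt
    simpa using h4
  · rw [Sof, Finset.card_image_of_injective _ (castLE_comp_injective _ _ _), Finset.card_univ,
      Fintype.card_fin, hcut]

noncomputable def theEquiv :
    {x : Equiv.Perm (Fin (n + 1)) // (des x).card = 1} ≃
      {S : Finset (Fin (n + 1)) // ¬IsLowerSet (S : Set (Fin (n + 1)))} where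
  toFun := fun x => ⟨Sof x.1, by
    obtain ⟨l, hl⟩ := Finset.card_eq_one.1 x.2
    exact not_lower_Sof hl⟩
  invFun := fun S => ⟨blockPerm S.1, by
    obtain ⟨i₀, -, hdes⟩ := des_blockPerm_eq S.2
    rw [hdes, Finset.card_singleton]⟩
  left_inv := fun x => by
    obtain ⟨l, hl⟩ := Finset.card_eq_one.1 x.2
    exact Subtype.ext (blockPerm_Sof hl).symm
  right_inv := fun S => Subtype.ext (Sof_blockPerm S.2)

lemma card_filter_lt (k : ℕ) (hk : k ≤ n + 1) :
    (Finset.univ.filter fun a : Fin (n + 1) => (a : ℕ) < k).card = k := by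
  have himg : (Finset.univ.filter fun a : Fin (n + 1) => (a : ℕ) < k) =
      Finset.image (fun j : Fin k => Fin.castLE hk j) Finset.univ := by
    ext a
    rw [Finset.mem_filter, Finset.mem_image]
    constructor
    · rintro ⟨-, ha⟩
      exact ⟨⟨(a : ℕ), ha⟩, Finset.mem_univ _, Fin.ext rfl⟩
    · rintro ⟨j, -, rfl⟩
      exact ⟨Finset.mem_univ _, j.isLt⟩
  rw [himg, Finset.card_image_of_injective, Finset.card_univ, Fintype.card_fin]
  intro a b hab
  have := congrArg Fin.val hab
  simp only [Fin.coe_castLE] at this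
  exact Fin.ext this

lemma mem_lower_iff {S : Finset (Fin (n + 1))} (h : IsLowerSet (S : Set (Fin (n + 1))))
    (a : Fin (n + 1)) : a ∈ S ↔ (a : ℕ) < S.card := by
  constructor
  · intro ha
    have hsub : (Finset.univ.filter fun b : Fin (n + 1) => (b : ℕ) < (a : ℕ) + 1) ⊆ S := by
      intro b hb
      rw [Finset.mem_filter] at hb
      have hle : b ≤ a := by rw [Fin.le_def]; omega
      exact h hle ha
    have := Finset.card_le_card hsub
    rw [card_filter_lt ((a : ℕ) + 1) a.isLt] at this
    omega
  · intro hlt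
    by_contra ha
    have hsub : S ⊆ Finset.univ.filter fun b : Fin (n + 1) => (b : ℕ) < (a : ℕ) := by
      intro b hb
      rw [Finset.mem_filter]
      refine ⟨Finset.mem_univ _, ?_⟩
      by_contra hba
      push_neg at hba
      exact ha (h (by rw [Fin.le_def]; omega : a ≤ b) hb)
    have := Finset.card_le_card hsub
    rw [card_filter_lt (a : ℕ) (le_of_lt a.isLt)] at this
    omega

noncomputable def lowerEquiv :
    {S : Finset (Fin (n + 1)) // IsLowerSet (S : Set (Fin (n + 1)))} ≃ Fin (n + 2) where
  toFun := fun S => ⟨S.1.card, by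
    have := Finset.card_le_univ S.1
    rw [Fintype.card_fin] at this
    omega⟩
  invFun := fun k => ⟨Finset.univ.filter fun a : Fin (n + 1) => (a : ℕ) < (k : ℕ), by
    intro a b hba ha
    simp only [Finset.coe_filter, Set.mem_setOf_eq, Finset.mem_univ, true_and] at *
    rw [Fin.le_def] at hba
    omega⟩
  left_inv := fun S => by
    apply Subtype.ext
    ext a
    rw [Finset.mem_filter]
    rw [mem_lower_iff S.2 a]
    simp
  right_inv := fun k => by
    apply Fin.ext
    show (Finset.univ.filter fun a : Fin (n + 1) => (a : ℕ) < (k : ℕ)).card = (k : ℕ)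
    exact card_filter_lt (k : ℕ) (by have := k.isLt; omega)

/-- The number of join-irreducible elements of the weak order on the symmetric
group `S_{n+1}` equals `2^{n+1} − n − 2`. -/
theorem stmt7 (n : ℕ) :
    Nat.card {w : Equiv.Perm (Fin (n + 1)) // JoinIrr w} = 2 ^ (n + 1) - n - 2 := by
  classical
  have e1 : {w : Equiv.Perm (Fin (n + 1)) // JoinIrr w} ≃
      {x : Equiv.Perm (Fin (n + 1)) // (des x).card = 1} :=
    Equiv.subtypeEquivRight fun x => joinIrr_iff
  rw [Nat.card_congr e1, Nat.card_congr theEquiv]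
  have hlow : Nat.card {S : Finset (Fin (n + 1)) // IsLowerSet (S : Set (Fin (n + 1)))} =
      n + 2 := by
    rw [Nat.card_congr lowerEquiv, Nat.card_eq_fintype_card, Fintype.card_fin]
  rw [Nat.card_eq_fintype_card] at hlow ⊢
  rw [Fintype.card_subtype_compl, Fintype.card_finset, Fintype.card_fin, hlow, Nat.sub_sub]

end Stmt7
end

section
/- Let A be a finite dimensional algebra over a field k and let S be a brick in mod A, i.e., End_A(S) is a division ring. Then Filt(S), the full subcategory of modules admitting a finite filtration with all subquotients isomorphic to S, is a wide subcategory of mod A (closed under kernels, cokernels, and extensions), and S is, up to isomorphism, the unique simple object of the abelian category Filt(S). -/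
universe u

namespace Stmt9

variable (A : Type u) [Ring A]

/-- `S` is a brick: its endomorphism ring is a division ring, i.e. `S ≠ 0` and every
nonzero endomorphism is invertible. -/
def IsBrick (S : Type u) [AddCommGroup S] [Module A S] : Prop :=
  Nontrivial S ∧ ∀ f : S →ₗ[A] S, f = 0 ∨ Function.Bijective f

/-- `M ∈ Filt(S)`: `M` has a finite filtration by submodules all of whose subquotients are
isomorphic to `S`. -/
def MemFilt (S : Type u) [AddCommGroup S] [Module A S]
    (M : Type u) [AddCommGroup M] [Module A M] : Prop :=
  ∃ (m : ℕ) (c : Fin (m + 1) → Submodule A M), Monotone c ∧ c 0 = ⊥ ∧ c (Fin.last m) = ⊤ ∧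
    ∀ i : Fin m,
      Nonempty ((↥(c i.succ) ⧸ (c i.castSucc).comap (c i.succ).subtype) ≃ₗ[A] S)

/-- `M` is a simple object of the subcategory `Filt(S)`: `M ∈ Filt(S)`, `M ≠ 0`, and the
only subobjects of `M` lying in `Filt(S)` are `0` and `M`. -/
def SimpleInFilt (S : Type u) [AddCommGroup S] [Module A S]
    (M : Type u) [AddCommGroup M] [Module A M] : Prop :=
  MemFilt A S M ∧ Nontrivial M ∧
    ∀ N : Submodule A M, MemFilt A S ↥N → N = ⊥ ∨ N = ⊤

open Submodule LinearMap

section Helpers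

variable {R : Type u} [Ring R] {M M' : Type u} [AddCommGroup M] [Module R M]
  [AddCommGroup M'] [Module R M']

/-- Subquotient `q / (p ⊓ q)` as a quotient of `↥q`. -/
abbrev SubQuot (p q : Submodule R M) : Type u := ↥q ⧸ p.comap q.subtype

/-- Map a subquotient along a linear map whose kernel is contained in `p`. -/
noncomputable def sqMap (f : M →ₗ[R] M') (p q : Submodule R M) (hf : ker f ≤ p) :
    SubQuot p q ≃ₗ[R] SubQuot (p.map f) (q.map f) := by
  let Φ : ↥q →ₗ[R] SubQuot (p.map f) (q.map f) :=
    ((p.map f).comap (q.map f).subtype).mkQ ∘ₗ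
      (f.restrict (fun x hx => Submodule.mem_map_of_mem hx))
  have hker : p.comap q.subtype = ker Φ := by
    ext x
    simp only [Φ, LinearMap.mem_ker, LinearMap.comp_apply, Submodule.Quotient.mk_eq_zero,
      Submodule.mem_comap, Submodule.mkQ_apply]
    constructor
    · intro hx
      simpa [LinearMap.restrict_apply] using Submodule.mem_map.1 (Submodule.mem_map_of_mem hx)
    · intro hx
      have : f (x : M) ∈ p.map f := by simpa [LinearMap.restrict_apply] using hx
      obtain ⟨y, hy, hyx⟩ := this
      have : (x : M) - y ∈ ker f := by simp [LinearMap.mem_ker, map_sub, hyx]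
      have hxy : (x : M) - y ∈ p := hf this
      simpa using p.add_mem hxy hy
  have hsurj : Function.Surjective Φ := by
    intro z
    obtain ⟨⟨w, hw⟩, rfl⟩ := Submodule.mkQ_surjective _ z
    obtain ⟨x, hx, rfl⟩ := hw
    exact ⟨⟨x, hx⟩, rfl⟩
  exact (Submodule.quotEquivOfEq _ _ hker).trans (Φ.quotKerEquivOfSurjective hsurj)

/-- `SubQuot ⊥ q ≃ q`. -/
noncomputable def sqBot (q : Submodule R M) : SubQuot (⊥ : Submodule R M) q ≃ₗ[R] ↥q :=
  (Submodule.quotEquivOfEq _ _ (by simp)).trans (Submodule.quotEquivOfEqBot _ rfl)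

/-- Normal form : `SubQuot p q ≃ q.map p.mkQ`. -/
noncomputable def sqNF (p q : Submodule R M) : SubQuot p q ≃ₗ[R] ↥(q.map p.mkQ) :=
  ((sqMap p.mkQ p q (by simp)).trans
    (Submodule.quotEquivOfEq _ _ (by simp [Submodule.mkQ_map_self]))).trans
    (sqBot _)

/-- Congruence for `SubQuot` in both arguments. -/
noncomputable def sqCongr {p p' q q' : Submodule R M} (hp : p = p') (hq : q = q') :
    SubQuot p q ≃ₗ[R] SubQuot p' q' := by subst hp; subst hq; exact LinearEquiv.refl _ _

lemma subsingleton_of_bot_eq_top (h : (⊥ : Submodule R M) = ⊤) : Subsingleton M := by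
  refine subsingleton_of_forall_eq 0 fun x => ?_
  have : x ∈ (⊥ : Submodule R M) := h.symm ▸ Submodule.mem_top
  simpa using this

lemma bot_eq_top_of_subsingleton [Subsingleton M] : (⊥ : Submodule R M) = ⊤ := by
  ext x; simp [Subsingleton.elim x 0]

end Helpers

/-- Inductive (bottom-up) version of `MemFilt`. -/
def FiltN (S : Type u) [AddCommGroup S] [Module A S] :
    ℕ → (M : Type u) → [AddCommGroup M] → [Module A M] → Prop
  | 0, M, _, _ => Subsingleton M
  | (n+1), M, _, _ => ∃ N : Submodule A M, Nonempty (↥N ≃ₗ[A] S) ∧ FiltN S n (M ⧸ N)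

variable (S : Type u) [AddCommGroup S] [Module A S]

lemma filtN_congr : ∀ (n : ℕ) (M : Type u) [AddCommGroup M] [Module A M]
    (M' : Type u) [AddCommGroup M'] [Module A M'] (_ : M ≃ₗ[A] M'),
    FiltN A S n M → FiltN A S n M'
  | 0, M, _, _, M', _, _, e, h => by
      haveI : Subsingleton M := h
      show Subsingleton M'
      exact e.symm.toEquiv.subsingleton
  | (n+1), M, _, _, M', _, _, e, ⟨N, ⟨eS⟩, h⟩ => by
      refine ⟨N.map (e : M →ₗ[A] M'), ⟨(e.submoduleMap N).symm.trans eS⟩, ?_⟩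
      exact filtN_congr n (M ⧸ N) (M' ⧸ N.map (e : M →ₗ[A] M'))
        (Submodule.Quotient.equiv N (N.map (e : M →ₗ[A] M')) e rfl) h

/-- Closure of `FiltN` under extensions. -/
lemma filtN_ext : ∀ (a b : ℕ) (M : Type u) [AddCommGroup M] [Module A M]
    (N : Submodule A M), FiltN A S a ↥N → FiltN A S b (M ⧸ N) → FiltN A S (a + b) M
  | 0, b, M, _, _, N, hN, hQ => by
      haveI : Subsingleton ↥N := hN
      have hbot : N = ⊥ := by
        ext x
        simp only [Submodule.mem_bot]
        constructor
        · intro hx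
          simpa [Subtype.ext_iff] using Subsingleton.elim (⟨x, hx⟩ : ↥N) 0
        · rintro rfl; exact N.zero_mem
      rw [Nat.zero_add]
      exact filtN_congr A S b (M ⧸ N) M (Submodule.quotEquivOfEqBot N hbot) hQ
  | (a+1), b, M, _, _, N, ⟨N₁, ⟨eS⟩, hN⟩, hQ => by
      set N₁' : Submodule A M := N₁.map N.subtype with hN₁'
      have hle : N₁' ≤ N := by
        rintro x ⟨y, hy, rfl⟩; exact y.2
      have e1 : ↥N₁' ≃ₗ[A] S :=
        ((Submodule.equivMapOfInjective N.subtype N.injective_subtype N₁).symm).trans eS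
      have hcomap : N₁'.comap N.subtype = N₁ :=
        Submodule.comap_map_eq_of_injective N.injective_subtype N₁
      set N' : Submodule A (M ⧸ N₁') := N.map N₁'.mkQ with hN'
      have e2 : (↥N ⧸ N₁) ≃ₗ[A] ↥N' :=
        (Submodule.quotEquivOfEq N₁ (N₁'.comap N.subtype) hcomap.symm).trans (sqNF N₁' N)
      have hN'filt : FiltN A S a ↥N' := filtN_congr A S a _ _ e2 hN
      have e4 : (M ⧸ N) ≃ₗ[A] ((M ⧸ N₁') ⧸ N') :=
        (Submodule.quotientQuotientEquivQuotient N₁' N hle).symm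
      have hQ' : FiltN A S b ((M ⧸ N₁') ⧸ N') := filtN_congr A S b _ _ e4 hQ
      have key : FiltN A S (a + b) (M ⧸ N₁') := filtN_ext a b (M ⧸ N₁') N' hN'filt hQ'
      have harith : a + 1 + b = (a + b) + 1 := by omega
      rw [harith]
      exact ⟨N₁', ⟨e1⟩, key⟩


lemma filtN_of_chain : ∀ (m : ℕ) (M : Type u) [AddCommGroup M] [Module A M]
    (c : Fin (m + 1) → Submodule A M), Monotone c → c 0 = ⊥ → c (Fin.last m) = ⊤ →
    (∀ i : Fin m, Nonempty (SubQuot (c i.castSucc) (c i.succ) ≃ₗ[A] S)) →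
    FiltN A S m M
  | 0, M, _, _, c, _, h0, hlast, _ => by
      have hbt : (⊥ : Submodule A M) = ⊤ := by
        rw [← h0, ← hlast]; rfl
      exact subsingleton_of_bot_eq_top hbt
  | (m+1), M, _, _, c, hmono, h0, hlast, hsq => by
      set N : Submodule A M := c (Fin.succ 0) with hN
      obtain ⟨e0⟩ := hsq 0
      have hc0 : c (Fin.castSucc 0) = ⊥ := by
        rw [Fin.castSucc_zero]; exact h0
      have eS : ↥N ≃ₗ[A] S := (sqBot N).symm.trans ((sqCongr hc0.symm rfl).trans e0)
      refine ⟨N, ⟨eS⟩, ?_⟩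
      set c' : Fin (m + 1) → Submodule A (M ⧸ N) := fun i => (c i.succ).map N.mkQ with hc'
      have hkerle : ∀ i : Fin (m + 1), ker N.mkQ ≤ c i.succ := by
        intro i
        rw [Submodule.ker_mkQ]
        exact hmono (Fin.succ_le_succ_iff.2 (Fin.zero_le _))
      refine filtN_of_chain m (M ⧸ N) c' (fun i j hij => Submodule.map_mono
          (hmono (Fin.succ_le_succ_iff.2 hij))) ?_ ?_ ?_
      · show (c (Fin.succ 0)).map N.mkQ = ⊥
        rw [← hN]
        exact Submodule.mkQ_map_self N
      · show (c (Fin.last m).succ).map N.mkQ = ⊤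
        rw [Fin.succ_last, hlast, Submodule.map_top, Submodule.range_mkQ]
      · intro i
        obtain ⟨e⟩ := hsq i.succ
        have hcs : (i.succ).castSucc = (i.castSucc).succ := (Fin.succ_castSucc i).symm
        rw [hcs] at e
        exact ⟨((sqMap N.mkQ (c i.castSucc.succ) (c i.succ.succ)
          (hkerle i.castSucc)).symm.trans e : SubQuot (c' i.castSucc) (c' i.succ) ≃ₗ[A] S)⟩

lemma filtN_of_memFilt (M : Type u) [AddCommGroup M] [Module A M]
    (h : MemFilt A S M) : ∃ n, FiltN A S n M := by
  obtain ⟨m, c, hmono, h0, hlast, hsq⟩ := h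
  exact ⟨m, filtN_of_chain A S m M c hmono h0 hlast hsq⟩

lemma memFilt_of_filtN : ∀ (n : ℕ) (M : Type u) [AddCommGroup M] [Module A M],
    FiltN A S n M → MemFilt A S M
  | 0, M, _, _, h => by
      haveI : Subsingleton M := h
      exact ⟨0, fun _ => ⊥, monotone_const, rfl, bot_eq_top_of_subsingleton,
        fun i => i.elim0⟩
  | (n+1), M, _, _, ⟨N, ⟨eS⟩, h⟩ => by
      obtain ⟨m, c, hmono, h0, hlast, hsq⟩ := memFilt_of_filtN n (M ⧸ N) h
      refine ⟨m + 1, Fin.cons ⊥ (fun i => (c i).comap N.mkQ), ?_, ?_, ?_, ?_⟩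
      · rw [Fin.monotone_iff_le_succ]
        intro i
        refine Fin.cases ?_ (fun j => ?_) i
        · simp
        · rw [← Fin.succ_castSucc, Fin.cons_succ, Fin.cons_succ]
          exact Submodule.comap_mono (hmono (Fin.castSucc_le_succ j))
      · exact Fin.cons_zero _ _
      · rw [← Fin.succ_last, Fin.cons_succ, hlast, Submodule.comap_top]
      · intro i
        refine Fin.cases ?_ (fun j => ?_) i
        · have h1 : (Fin.cons ⊥ (fun i => (c i).comap N.mkQ) :
              Fin (m + 2) → Submodule A M) (Fin.castSucc 0) = ⊥ := by
            rw [Fin.castSucc_zero]; exact Fin.cons_zero _ _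
          have h2 : (Fin.cons ⊥ (fun i => (c i).comap N.mkQ) :
              Fin (m + 2) → Submodule A M) (Fin.succ 0) = N := by
            rw [Fin.cons_succ, h0, Submodule.comap_bot, Submodule.ker_mkQ]
          exact ⟨(sqCongr h1 h2).trans ((sqBot N).trans eS)⟩
        · obtain ⟨e⟩ := hsq j
          have h1 : (Fin.cons ⊥ (fun i => (c i).comap N.mkQ) :
              Fin (m + 2) → Submodule A M) (Fin.castSucc j.succ)
              = (c j.castSucc).comap N.mkQ := by
            rw [← Fin.succ_castSucc, Fin.cons_succ]
          have h2 : (Fin.cons ⊥ (fun i => (c i).comap N.mkQ) :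
              Fin (m + 2) → Submodule A M) (Fin.succ j.succ)
              = (c j.succ).comap N.mkQ := by
            rw [Fin.cons_succ]
          have hker : ker N.mkQ ≤ (c j.castSucc).comap N.mkQ := by
            rw [Submodule.ker_mkQ]
            exact Submodule.le_comap_mkQ N _
          have hmc : ∀ p : Submodule A (M ⧸ N), (p.comap N.mkQ).map N.mkQ = p :=
            fun p => Submodule.map_comap_eq_of_surjective (Submodule.mkQ_surjective N) p
          exact ⟨(sqCongr h1 h2).trans (((sqMap N.mkQ _ _ hker).trans
            (sqCongr (hmc _) (hmc _))).trans e)⟩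

lemma memFilt_congr (M : Type u) [AddCommGroup M] [Module A M]
    (M' : Type u) [AddCommGroup M'] [Module A M'] (e : M ≃ₗ[A] M')
    (h : MemFilt A S M) : MemFilt A S M' := by
  obtain ⟨n, hn⟩ := filtN_of_memFilt A S M h
  exact memFilt_of_filtN A S n M' (filtN_congr A S n M M' e hn)


lemma subsingleton_quot_top (M : Type u) [AddCommGroup M] [Module A M] :
    Subsingleton (M ⧸ (⊤ : Submodule A M)) := by
  refine subsingleton_of_forall_eq 0 fun x => ?_
  obtain ⟨y, rfl⟩ := Submodule.mkQ_surjective _ x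
  simpa [Submodule.Quotient.mk_eq_zero] using Submodule.mem_top

lemma memFilt_of_equiv_S (M : Type u) [AddCommGroup M] [Module A M]
    (e : M ≃ₗ[A] S) : MemFilt A S M :=
  memFilt_of_filtN A S 1 M ⟨⊤, ⟨Submodule.topEquiv.trans e⟩, subsingleton_quot_top A M⟩

lemma memFilt_ext (M : Type u) [AddCommGroup M] [Module A M] (N : Submodule A M)
    (hN : MemFilt A S ↥N) (hQ : MemFilt A S (M ⧸ N)) : MemFilt A S M := by
  obtain ⟨a, ha⟩ := filtN_of_memFilt A S _ hN
  obtain ⟨b, hb⟩ := filtN_of_memFilt A S _ hQ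
  exact memFilt_of_filtN A S (a + b) M (filtN_ext A S a b M N ha hb)

/-- Key lemma: a nonzero map from the brick `S` into a filtered module is injective with
filtered cokernel. -/
lemma lemA (hS : IsBrick A S) : ∀ (n : ℕ) (N : Type u) [AddCommGroup N] [Module A N],
    FiltN A S n N → ∀ g : S →ₗ[A] N, g ≠ 0 →
    Function.Injective g ∧ MemFilt A S (N ⧸ LinearMap.range g)
  | 0, N, _, _, h, g, hg => by
      haveI : Subsingleton N := h
      exact absurd (Subsingleton.elim g 0) hg
  | (n+1), N, _, _, ⟨N₁, ⟨eN⟩, h⟩, g, hg => by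
      by_cases hbar : N₁.mkQ ∘ₗ g = 0
      · -- the image of `g` lands in the bottom copy of `S`
        have hrange : ∀ s : S, g s ∈ N₁ := by
          intro s
          have := LinearMap.ext_iff.1 hbar s
          simpa [Submodule.Quotient.mk_eq_zero] using this
        set g' : S →ₗ[A] ↥N₁ := LinearMap.codRestrict N₁ g hrange with hg'
        have hcomp : (eN.toLinearMap ∘ₗ g' : S →ₗ[A] S) ≠ 0 := by
          intro h0
          apply hg
          ext s
          have h1 : eN (g' s) = 0 := LinearMap.ext_iff.1 h0 s
          have h2 : g' s = 0 := eN.injective (by simpa using h1)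
          have : g s = ((g' s : ↥N₁) : N) := rfl
          simp [this, h2]
        rcases hS.2 (eN.toLinearMap ∘ₗ g') with h0 | hbij
        · exact absurd h0 hcomp
        have hg'inj : Function.Injective g' :=
          Function.Injective.of_comp (f := eN.toLinearMap) hbij.1
        have hg'surj : Function.Surjective g' := by
          intro y
          obtain ⟨s, hs⟩ := hbij.2 (eN y)
          exact ⟨s, eN.injective hs⟩
        have hginj : Function.Injective g := by
          intro a b hab
          exact hg'inj (Subtype.ext hab)
        have hrangeeq : LinearMap.range g = N₁ := by
          apply le_antisymm
          · rintro x ⟨s, rfl⟩; exact hrange s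
          · intro x hx
            obtain ⟨s, hs⟩ := hg'surj ⟨x, hx⟩
            exact ⟨s, congrArg Subtype.val hs⟩
        refine ⟨hginj, ?_⟩
        exact memFilt_congr A S (N ⧸ N₁) _
          (Submodule.quotEquivOfEq N₁ (LinearMap.range g) hrangeeq.symm)
          (memFilt_of_filtN A S n _ h)
      · obtain ⟨hinj, hcoker⟩ := lemA hS n (N ⧸ N₁) h (N₁.mkQ ∘ₗ g) hbar
        have hginj : Function.Injective g := by
          intro a b hab
          exact hinj (by simp [LinearMap.comp_apply, hab])
        refine ⟨hginj, ?_⟩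
        set Q : Submodule A N := LinearMap.range g with hQdef
        have hdisj : ∀ x : N, x ∈ N₁ → x ∈ Q → x = 0 := by
          rintro x hx ⟨s, rfl⟩
          have h1 : (N₁.mkQ ∘ₗ g) s = 0 := by
            simp [LinearMap.comp_apply, Submodule.Quotient.mk_eq_zero, hx]
          have h2 : s = 0 := hinj (a₁ := s) (a₂ := 0) (by simp [h1])
          simp [h2]
        set N₁' : Submodule A (N ⧸ Q) := N₁.map Q.mkQ with hN₁'def
        set ψ : ↥N₁ →ₗ[A] ↥N₁' :=
          LinearMap.codRestrict N₁' (Q.mkQ ∘ₗ N₁.subtype)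
            (fun x => Submodule.mem_map_of_mem x.2) with hψdef
        have hψ : Function.Bijective ψ := by
          constructor
          · intro a b hab
            have hab' : Q.mkQ (a : N) = Q.mkQ (b : N) := congrArg Subtype.val hab
            have hsub : (a : N) - b ∈ Q := (Submodule.Quotient.eq Q).1 hab'
            have h1 : (a : N) - b ∈ N₁ := N₁.sub_mem a.2 b.2
            exact Subtype.ext (sub_eq_zero.1 (hdisj _ h1 hsub))
          · rintro ⟨z, hz⟩
            obtain ⟨x, hx, rfl⟩ := hz
            exact ⟨⟨x, hx⟩, rfl⟩
        have eN₁' : ↥N₁' ≃ₗ[A] S := (LinearEquiv.ofBijective ψ hψ).symm.trans eN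
        have e5 : ((N ⧸ Q) ⧸ N₁') ≃ₗ[A] (N ⧸ (Q ⊔ N₁)) := by
          have hmap : (Q ⊔ N₁).map Q.mkQ = N₁' := by
            rw [Submodule.map_sup, Submodule.mkQ_map_self, bot_sup_eq]
          exact (Submodule.quotEquivOfEq _ _ hmap.symm).trans
            (Submodule.quotientQuotientEquivQuotient Q (Q ⊔ N₁) le_sup_left)
        have e6 : ((N ⧸ N₁) ⧸ LinearMap.range (N₁.mkQ ∘ₗ g)) ≃ₗ[A] (N ⧸ (Q ⊔ N₁)) := by
          have hmap : (Q ⊔ N₁).map N₁.mkQ = LinearMap.range (N₁.mkQ ∘ₗ g) := by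
            rw [Submodule.map_sup, Submodule.mkQ_map_self, sup_bot_eq,
              LinearMap.range_comp]
          exact (Submodule.quotEquivOfEq _ _ hmap.symm).trans
            (Submodule.quotientQuotientEquivQuotient N₁ (Q ⊔ N₁) le_sup_right)
        have hfiltQuot : MemFilt A S ((N ⧸ Q) ⧸ N₁') :=
          memFilt_congr A S _ _ (e6.trans e5.symm) hcoker
        exact memFilt_ext A S (N ⧸ Q) N₁' (memFilt_of_equiv_S A S _ eN₁') hfiltQuot


/-- Main lemma: kernels and cokernels of maps between filtered modules are filtered. -/
lemma mainKerCoker (hS : IsBrick A S) :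
    ∀ (m : ℕ) (M : Type u) [AddCommGroup M] [Module A M]
      (N : Type u) [AddCommGroup N] [Module A N],
    FiltN A S m M → MemFilt A S N → ∀ f : M →ₗ[A] N,
    MemFilt A S ↥(LinearMap.ker f) ∧ MemFilt A S (N ⧸ LinearMap.range f)
  | 0, M, _, _, N, _, _, hM, hN, f => by
      haveI : Subsingleton M := hM
      have hfz : LinearMap.range f = ⊥ := by
        rw [Submodule.eq_bot_iff]
        rintro y ⟨x, rfl⟩
        rw [Subsingleton.elim x 0]
        simp
      constructor
      · exact memFilt_of_filtN A S 0 _ (inferInstance : Subsingleton ↥(LinearMap.ker f))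
      · exact memFilt_congr A S N _ (Submodule.quotEquivOfEqBot _ hfz).symm hN
  | (m+1), M, _, _, N, _, _, ⟨N₁, ⟨eS⟩, hM⟩, hN, f => by
      by_cases hres : f ∘ₗ N₁.subtype = 0
      · -- `N₁ ≤ ker f`: factor through `M ⧸ N₁`
        have hle : N₁ ≤ LinearMap.ker f := by
          intro x hx
          have := LinearMap.ext_iff.1 hres ⟨x, hx⟩
          simpa using this
        set fbar : (M ⧸ N₁) →ₗ[A] N := N₁.liftQ f hle with hfb
        obtain ⟨hker', hcoker'⟩ := mainKerCoker hS m (M ⧸ N₁) N hM hN fbar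
        constructor
        · have hNsub : MemFilt A S ↥(N₁.comap (LinearMap.ker f).subtype) :=
            memFilt_of_equiv_S A S _ ((Submodule.comapSubtypeEquivOfLe hle).trans eS)
          have hkermap : (LinearMap.ker f).map N₁.mkQ = LinearMap.ker fbar :=
            (Submodule.ker_liftQ N₁ f hle).symm
          have hquot : MemFilt A S
              (↥(LinearMap.ker f) ⧸ N₁.comap (LinearMap.ker f).subtype) := by
            refine memFilt_congr A S ↥(LinearMap.ker fbar) _ ?_ hker'
            exact ((LinearEquiv.ofEq _ _ hkermap.symm).trans
              (sqNF N₁ (LinearMap.ker f)).symm)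
          exact memFilt_ext A S ↥(LinearMap.ker f) (N₁.comap (LinearMap.ker f).subtype)
            hNsub hquot
        · have hrange : LinearMap.range fbar = LinearMap.range f :=
            Submodule.range_liftQ N₁ f hle
          exact memFilt_congr A S _ _ (Submodule.quotEquivOfEq _ _ hrange) hcoker'
      · -- the bottom copy of `S` maps injectively into `N`
        set g : S →ₗ[A] N := (f ∘ₗ N₁.subtype) ∘ₗ (eS.symm : S →ₗ[A] ↥N₁) with hgdef
        have hgx : ∀ x : ↥N₁, g (eS x) = f x := by
          intro x; simp [hgdef]
        have hg : g ≠ 0 := by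
          intro h0
          apply hres
          ext x
          have := LinearMap.ext_iff.1 h0 (eS x)
          rw [hgx x] at this
          simpa using this
        obtain ⟨n, hNf⟩ := filtN_of_memFilt A S N hN
        obtain ⟨hginj, hgcoker⟩ := lemA A S hS n N hNf g hg
        have hrg : LinearMap.range g = N₁.map f := by
          ext y
          constructor
          · rintro ⟨s, rfl⟩
            exact ⟨(eS.symm s : ↥N₁), (eS.symm s).2, rfl⟩
          · rintro ⟨x, hx, rfl⟩
            exact ⟨eS ⟨x, hx⟩, hgx ⟨x, hx⟩⟩
        set P : Submodule A N := N₁.map f with hPdef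
        have hPfilt : MemFilt A S (N ⧸ P) :=
          memFilt_congr A S _ _ (Submodule.quotEquivOfEq _ _ hrg) hgcoker
        have hcomap : N₁ ≤ P.comap f := fun x hx => Submodule.mem_map_of_mem hx
        set f' : (M ⧸ N₁) →ₗ[A] (N ⧸ P) := Submodule.mapQ N₁ P f hcomap with hf'def
        obtain ⟨hker', hcoker'⟩ := mainKerCoker hS m (M ⧸ N₁) (N ⧸ P) hM hPfilt f'
        have hinjN₁ : ∀ x : M, x ∈ N₁ → f x = 0 → x = 0 := by
          intro x hx hfx
          have h1 : g (eS ⟨x, hx⟩) = 0 := by rw [hgx ⟨x, hx⟩]; exact hfx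
          have h2 : eS ⟨x, hx⟩ = 0 := hginj (by simpa using h1)
          have h3 : (⟨x, hx⟩ : ↥N₁) = 0 := by
            have := congrArg eS.symm h2
            simpa using this
          exact congrArg Subtype.val h3
        constructor
        · -- kernel
          have hθmem : ∀ x : ↥(LinearMap.ker f),
              N₁.mkQ (x : M) ∈ LinearMap.ker f' := by
            intro x
            have hx : f (x : M) = 0 := x.2
            simp [hf'def, LinearMap.mem_ker, Submodule.mapQ_apply, hx]
          set θ : ↥(LinearMap.ker f) →ₗ[A] ↥(LinearMap.ker f') :=
            LinearMap.codRestrict (LinearMap.ker f')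
              (N₁.mkQ ∘ₗ (LinearMap.ker f).subtype) hθmem with hθdef
          have hθbij : Function.Bijective θ := by
            constructor
            · intro a b hab
              have hab' : N₁.mkQ (a : M) = N₁.mkQ (b : M) := congrArg Subtype.val hab
              have hsub : (a : M) - b ∈ N₁ := (Submodule.Quotient.eq N₁).1 hab'
              have hfz : f ((a : M) - b) = 0 := by
                have ha : f (a : M) = 0 := a.2
                have hb : f (b : M) = 0 := b.2
                simp [map_sub, ha, hb]
              have := hinjN₁ _ hsub hfz
              exact Subtype.ext (sub_eq_zero.1 this)
            · rintro ⟨z, hz⟩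
              obtain ⟨x, rfl⟩ := Submodule.mkQ_surjective N₁ z
              have hfx : P.mkQ (f x) ∈ ({0} : Set (N ⧸ P)) := by
                have : f' (N₁.mkQ x) = 0 := hz
                rw [hf'def] at this
                simpa [Submodule.mapQ_apply] using this
              have hfxP : f x ∈ P := by
                have := hfx
                simpa [Submodule.Quotient.mk_eq_zero] using this
              obtain ⟨x₁, hx₁, hfx₁⟩ := hfxP
              have hker : x - x₁ ∈ LinearMap.ker f := by
                simp [LinearMap.mem_ker, map_sub, hfx₁]
              refine ⟨⟨x - x₁, hker⟩, ?_⟩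
              apply Subtype.ext
              show N₁.mkQ (x - x₁) = N₁.mkQ x
              rw [map_sub]
              have : N₁.mkQ x₁ = 0 := by
                simpa [Submodule.Quotient.mk_eq_zero] using hx₁
              rw [this, sub_zero]
          exact memFilt_congr A S ↥(LinearMap.ker f') _
            (LinearEquiv.ofBijective θ hθbij).symm hker'
        · -- cokernel
          have hrange' : LinearMap.range f' = (LinearMap.range f).map P.mkQ := by
            have h1 : LinearMap.range (f' ∘ₗ N₁.mkQ) = LinearMap.range f' :=
              LinearMap.range_comp_of_range_eq_top f' (Submodule.range_mkQ N₁)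
            calc LinearMap.range f' = LinearMap.range (f' ∘ₗ N₁.mkQ) := h1.symm
              _ = LinearMap.range (P.mkQ ∘ₗ f) := by rw [hf'def, Submodule.mapQ_mkQ]
              _ = (LinearMap.range f).map P.mkQ := LinearMap.range_comp f P.mkQ
          have hPle : P ≤ LinearMap.range f := by
            rintro y ⟨x, _, rfl⟩
            exact ⟨x, rfl⟩
          have e7 : ((N ⧸ P) ⧸ LinearMap.range f') ≃ₗ[A] (N ⧸ LinearMap.range f) :=
            (Submodule.quotEquivOfEq _ _ hrange').trans
              (Submodule.quotientQuotientEquivQuotient P (LinearMap.range f) hPle)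
          exact memFilt_congr A S _ _ e7 hcoker'


/-- Let `A` be a finite-dimensional algebra over a field `k` and `S` a brick
in `mod A`.  Then `Filt(S)` is a wide subcategory of `mod A` (closed under kernels,
cokernels and extensions), and `S` is, up to isomorphism, the unique simple object of
`Filt(S)`. -/
theorem stmt9 {k : Type u} [Field k] [Algebra k A] [FiniteDimensional k A]
    (S : Type u) [AddCommGroup S] [Module A S] [Module.Finite A S]
    (hS : IsBrick A S) :
    (∀ (M : Type u) [AddCommGroup M] [Module A M]
        (N : Type u) [AddCommGroup N] [Module A N],
        MemFilt A S M → MemFilt A S N → ∀ f : M →ₗ[A] N,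
        MemFilt A S ↥(LinearMap.ker f) ∧ MemFilt A S (N ⧸ LinearMap.range f)) ∧
    (∀ (M : Type u) [AddCommGroup M] [Module A M] (N : Submodule A M),
        MemFilt A S ↥N → MemFilt A S (M ⧸ N) → MemFilt A S M) ∧
    SimpleInFilt A S S ∧
    (∀ (M : Type u) [AddCommGroup M] [Module A M],
        SimpleInFilt A S M → Nonempty (M ≃ₗ[A] S)) := by
  haveI hSnt : Nontrivial S := hS.1
  refine ⟨?_, ?_, ?_, ?_⟩
  · intro M _ _ N _ _ hM hN f
    obtain ⟨m, hm⟩ := filtN_of_memFilt A S M hM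
    exact mainKerCoker A S hS m M N hm hN f
  · intro M _ _ N hN hQ
    exact memFilt_ext A S M N hN hQ
  · refine ⟨memFilt_of_equiv_S A S S (LinearEquiv.refl A S), hS.1, ?_⟩
    intro N hN
    by_cases hbot : N = ⊥
    · exact Or.inl hbot
    right
    haveI : Nontrivial ↥N := Submodule.nontrivial_iff_ne_bot.2 hbot
    obtain ⟨n, hn⟩ := filtN_of_memFilt A S ↥N hN
    match n, hn with
    | 0, hn =>
      exact absurd (id hn : Subsingleton ↥N) (not_subsingleton ↥N)
    | (n+1), ⟨N₁, ⟨e⟩, _⟩ =>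
      set φ : S →ₗ[A] S := N.subtype ∘ₗ N₁.subtype ∘ₗ (e.symm : S →ₗ[A] ↥N₁) with hφ
      have hφinj : Function.Injective φ := by
        intro a b hab
        apply e.symm.injective
        apply Subtype.ext
        apply Subtype.ext (p := fun x => x ∈ N)
        exact hab
      have hφne : φ ≠ 0 := by
        intro h0
        obtain ⟨x, y, hxy⟩ := hSnt
        apply hxy
        have hx : φ x = 0 := by rw [h0]; rfl
        have hy : φ y = 0 := by rw [h0]; rfl
        exact hφinj (hx.trans hy.symm)
      rcases hS.2 φ with h0 | hbij
      · exact absurd h0 hφne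
      rw [Submodule.eq_top_iff']
      intro y
      obtain ⟨x, hx⟩ := hbij.2 y
      rw [← hx]
      exact ((e.symm x : ↥N₁) : ↥N).2
  · intro M _ _ hM
    obtain ⟨hMfilt, hMnt, hsub⟩ := hM
    obtain ⟨n, hn⟩ := filtN_of_memFilt A S M hMfilt
    match n, hn with
    | 0, hn =>
      exact absurd (id hn : Subsingleton M) (not_subsingleton M)
    | (n+1), ⟨N₁, ⟨e⟩, _⟩ =>
      have hN₁filt : MemFilt A S ↥N₁ := memFilt_of_equiv_S A S ↥N₁ e
      rcases hsub N₁ hN₁filt with hb | ht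
      · haveI : Nontrivial ↥N₁ := e.toEquiv.nontrivial
        subst hb
        exact absurd (inferInstance : Subsingleton ↥(⊥ : Submodule A M))
          (not_subsingleton _)
      · exact ⟨(Submodule.topEquiv.symm.trans (LinearEquiv.ofEq ⊤ N₁ ht.symm)).trans e⟩

end Stmt9
end

section
/- Let Π be the preprojective algebra of type A_n over a field k, let I_cyc be the ideal of Π generated by all 2-cycles (paths a a* and a* a), and let X be a Π-module with Ext¹_Π(X, X) = 0 and End_Π(X) = k. Then I_cyc · X = 0, i.e., X is a module over Π̄ = Π/I_cyc. -/
namespace Stmt12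

open FreeAlgebra

variable (k : Type) [Field k] (n : ℕ)

/-- Adjacency of the type `A_n` diagram on vertices `{0, …, n−1}`. -/
def adj (i j : Fin n) : Prop := i.val + 1 = j.val ∨ j.val + 1 = i.val

instance : DecidableRel (adj n) := fun i j => by unfold adj; infer_instance

/-- Arrows of the double quiver of type `A_n`. -/
abbrev Arrow := {p : Fin n × Fin n // adj n p.1 p.2}

instance : DecidablePred (fun p : Fin n × Fin n => adj n p.1 p.2) :=
  fun p => by unfold adj; infer_instance

/-- Generators: vertex idempotents and arrows. -/
abbrev GenT := Fin n ⊕ Arrow n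

theorem adj_symm : ∀ i j : Fin n, adj n i j → adj n j i := fun _ _ h => h.symm

/-- The sign (orientation) function for type `A_n`. -/
def ε (i j : Fin n) : k := if i.val < j.val then 1 else -1

/-- The reverse of an arrow. -/
def rev (a : Arrow n) : Arrow n := ⟨(a.1.2, a.1.1), (a.2).symm⟩

/-- The defining relations of the preprojective algebra of type `A_n`. -/
inductive Rel : FreeAlgebra k (GenT n) → FreeAlgebra k (GenT n) → Prop
  | idem (i j : Fin n) : Rel (ι k (Sum.inl i) * ι k (Sum.inl j))
      (if i = j then ι k (Sum.inl i) else 0)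
  | sum_one : Rel (∑ i : Fin n, ι k (Sum.inl i)) 1
  | arr_tgt (a : Arrow n) :
      Rel (ι k (Sum.inl a.1.2) * ι k (Sum.inr a)) (ι k (Sum.inr a))
  | arr_src (a : Arrow n) :
      Rel (ι k (Sum.inr a) * ι k (Sum.inl a.1.1)) (ι k (Sum.inr a))
  | pp : Rel (∑ a : Arrow n, ε k n a.1.1 a.1.2 •
      (ι k (Sum.inr (rev n a)) * ι k (Sum.inr a))) 0

/-- The preprojective algebra `Π` of type `A_n`. -/
abbrev PPA := RingQuot (Rel k n)

/-- The image of an arrow in `Π`. -/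
def arr (a : Arrow n) : PPA k n := RingQuot.mkRingHom (Rel k n) (ι k (Sum.inr a))

/-- The two-sided ideal `I_cyc` of `Π` generated by all 2-cycles `a a*`. -/
def Icyc : TwoSidedIdeal (PPA k n) :=
  TwoSidedIdeal.span {z | ∃ a : Arrow n, z = arr k n a * arr k n (rev n a)}
section Aux

/-- The vertex idempotent in `Π`. -/
def eV (i : Fin n) : PPA k n := RingQuot.mkRingHom (Rel k n) (ι k (Sum.inl i))

lemma arr_eq (a : Arrow n) :
    arr k n a = RingQuot.mkAlgHom k (Rel k n) (ι k (Sum.inr a)) := by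
  unfold arr
  rw [← RingQuot.mkAlgHom_coe k (Rel k n)]
  rfl

lemma eV_eq (i : Fin n) :
    eV k n i = RingQuot.mkAlgHom k (Rel k n) (ι k (Sum.inl i)) := by
  unfold eV
  rw [← RingQuot.mkAlgHom_coe k (Rel k n)]
  rfl

lemma eV_mul_eV (i j : Fin n) :
    eV k n i * eV k n j = if i = j then eV k n i else 0 := by
  have h := RingQuot.mkRingHom_rel (Rel.idem (k := k) (n := n) i j)
  rw [map_mul] at h
  unfold eV
  rw [h]
  by_cases hij : i = j
  · rw [if_pos hij, if_pos hij]
  · rw [if_neg hij, if_neg hij, map_zero]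

lemma sum_eV : ∑ i : Fin n, eV k n i = 1 := by
  have h := RingQuot.mkRingHom_rel (Rel.sum_one (k := k) (n := n))
  rw [map_sum, map_one] at h
  unfold eV
  exact h

lemma eV_arr (a : Arrow n) : eV k n a.1.2 * arr k n a = arr k n a := by
  have h := RingQuot.mkRingHom_rel (Rel.arr_tgt (k := k) (n := n) a)
  rw [map_mul] at h
  exact h

lemma arr_eV (a : Arrow n) : arr k n a * eV k n a.1.1 = arr k n a := by
  have h := RingQuot.mkRingHom_rel (Rel.arr_src (k := k) (n := n) a)
  rw [map_mul] at h
  exact h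

lemma pp_sum :
    ∑ a : Arrow n, ε k n a.1.1 a.1.2 • (arr k n (rev n a) * arr k n a) = 0 := by
  have h := RingQuot.mkAlgHom_rel k (Rel.pp (k := k) (n := n))
  rw [map_sum, map_zero] at h
  simp only [map_smul, map_mul] at h
  simpa only [arr_eq] using h



lemma eV_mul_arr (j : Fin n) (a : Arrow n) :
    eV k n j * arr k n a = if j = a.1.2 then arr k n a else 0 := by
  conv_lhs => rw [← eV_arr k n a, ← mul_assoc, eV_mul_eV]
  by_cases h : j = a.1.2
  · rw [if_pos h, if_pos h, h, eV_arr]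
  · rw [if_neg h, if_neg h, zero_mul]

lemma arr_mul_eV (a : Arrow n) (j : Fin n) :
    arr k n a * eV k n j = if a.1.1 = j then arr k n a else 0 := by
  conv_lhs => rw [← arr_eV k n a, mul_assoc, eV_mul_eV]
  by_cases h : a.1.1 = j
  · rw [if_pos h, if_pos h, arr_eV]
  · rw [if_neg h, if_neg h, mul_zero]

/-- The arrow `m → m+1`. -/
def upA (m : ℕ) (hm : m + 1 < n) : Arrow n :=
  ⟨(⟨m, Nat.lt_of_succ_lt hm⟩, ⟨m + 1, hm⟩), Or.inl rfl⟩

/-- The arrow `m+1 → m`. -/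
def dnA (m : ℕ) (hm : m + 1 < n) : Arrow n :=
  ⟨(⟨m + 1, hm⟩, ⟨m, Nat.lt_of_succ_lt hm⟩), Or.inr rfl⟩

lemma rev_upA (m : ℕ) (hm : m + 1 < n) : rev n (upA n m hm) = dnA n m hm := rfl

lemma rev_dnA (m : ℕ) (hm : m + 1 < n) : rev n (dnA n m hm) = upA n m hm := rfl

lemma arrow_cases (a : Arrow n) :
    (∃ m hm, a = upA n m hm) ∨ (∃ m hm, a = dnA n m hm) := by
  obtain ⟨⟨i, j⟩, h⟩ := a
  rcases h with h | h
  · left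
    have h' : i.val + 1 = j.val := h
    have hm : i.val + 1 < n := h' ▸ j.isLt
    refine ⟨i.val, hm, ?_⟩
    apply Subtype.ext
    simp only [upA, Prod.mk.injEq, Fin.ext_iff]
    exact ⟨trivial, h'.symm⟩
  · right
    have h' : j.val + 1 = i.val := h
    have hm : j.val + 1 < n := h' ▸ i.isLt
    refine ⟨j.val, hm, ?_⟩
    apply Subtype.ext
    simp only [dnA, Prod.mk.injEq, Fin.ext_iff]
    exact ⟨h'.symm, trivial⟩

/-- The loop `m+1 → m → m+1` at vertex `m+1`. -/
def Mel (m : ℕ) : PPA k n :=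
  if hm : m + 1 < n then arr k n (upA n m hm) * arr k n (dnA n m hm) else 0

/-- The loop `m → m+1 → m` at vertex `m`. -/
def Lel (m : ℕ) : PPA k n :=
  if hm : m + 1 < n then arr k n (dnA n m hm) * arr k n (upA n m hm) else 0

lemma eV_mul_Mel (i : Fin n) (m : ℕ) :
    eV k n i * Mel k n m = if i.val = m + 1 then Mel k n m else 0 := by
  by_cases hm : m + 1 < n
  · simp only [Mel, dif_pos hm]
    rw [← mul_assoc, eV_mul_arr]
    have : (i = (upA n m hm).1.2) ↔ i.val = m + 1 := by
      simp [upA, Fin.ext_iff]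
    by_cases h : i.val = m + 1
    · rw [if_pos (this.mpr h), if_pos h]
    · rw [if_neg (fun hh => h (this.mp hh)), if_neg h, zero_mul]
  · simp [Mel, dif_neg hm]

lemma Mel_mul_eV (m : ℕ) (i : Fin n) :
    Mel k n m * eV k n i = if i.val = m + 1 then Mel k n m else 0 := by
  by_cases hm : m + 1 < n
  · simp only [Mel, dif_pos hm]
    rw [mul_assoc, arr_mul_eV]
    have : ((dnA n m hm).1.1 = i) ↔ i.val = m + 1 := by
      simp [dnA, Fin.ext_iff]; omega
    by_cases h : i.val = m + 1
    · rw [if_pos (this.mpr h), if_pos h]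
    · rw [if_neg (fun hh => h (this.mp hh)), if_neg h, mul_zero]
  · simp [Mel, dif_neg hm]

lemma Mel_mul_Mel (l m : ℕ) (h : l ≠ m) : Mel k n l * Mel k n m = 0 := by
  by_cases hl : l + 1 < n
  · have h1 : Mel k n l = Mel k n l * eV k n ⟨l + 1, hl⟩ := by
      rw [Mel_mul_eV, if_pos rfl]
    rw [h1, mul_assoc, eV_mul_Mel, if_neg (fun hh => h (Nat.succ_injective hh)), mul_zero]
  · rw [Mel, dif_neg hl, zero_mul]
lemma term_eq (j : Fin n) (a : Arrow n) :
    eV k n j * (ε k n a.1.1 a.1.2 • (arr k n (rev n a) * arr k n a)) * eV k n j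
      = if a.1.1 = j then ε k n a.1.1 a.1.2 • (arr k n (rev n a) * arr k n a) else 0 := by
  rw [mul_smul_comm, smul_mul_assoc]
  by_cases h : a.1.1 = j
  · rw [if_pos h]
    congr 1
    have e1 : eV k n j * arr k n (rev n a) = arr k n (rev n a) := by
      rw [eV_mul_arr, if_pos]
      exact ((show (rev n a).1.2 = a.1.1 from rfl) ▸ h.symm)
    have e2 : arr k n a * eV k n j = arr k n a := by rw [arr_mul_eV, if_pos h]
    rw [← mul_assoc, e1, mul_assoc, e2]
  · rw [if_neg h]
    have e2 : arr k n a * eV k n j = 0 := by rw [arr_mul_eV, if_neg h]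
    rw [mul_assoc, mul_assoc, e2, mul_zero, mul_zero, smul_zero]

lemma hvan (j : Fin n) (b : Arrow n) (hb : b.1.1 = j) :
    (∃ hP : j.val + 1 < n, b = upA n j.val hP) ∨
      (1 ≤ j.val ∧ ∃ hm' : j.val - 1 + 1 < n, b = dnA n (j.val - 1) hm') := by
  rcases arrow_cases n b with ⟨m, hm, rfl⟩ | ⟨m, hm, rfl⟩
  · left
    have hmj : m = j.val := congrArg Fin.val hb
    subst hmj
    exact ⟨hm, rfl⟩
  · right
    have hmj : m + 1 = j.val := congrArg Fin.val hb
    have hQ : 1 ≤ j.val := by omega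
    have hm' : j.val - 1 + 1 < n := by omega
    refine ⟨hQ, hm', ?_⟩
    apply Subtype.ext
    simp only [dnA, Prod.mk.injEq, Fin.ext_iff]
    exact ⟨by omega, by omega⟩

lemma eps_upA (m : ℕ) (hm : m + 1 < n) :
    ε k n (upA n m hm).1.1 (upA n m hm).1.2 = 1 := by
  simp only [upA, ε]
  exact if_pos (Nat.lt_succ_self m)

lemma eps_dnA (m : ℕ) (hm : m + 1 < n) :
    ε k n (dnA n m hm).1.1 (dnA n m hm).1.2 = -1 := by
  simp only [dnA, ε]
  exact if_neg (by omega)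

lemma vertex (j : Fin n) :
    Lel k n j.val = if 1 ≤ j.val then Mel k n (j.val - 1) else 0 := by
  classical
  set G : Arrow n → PPA k n := fun a =>
    if a.1.1 = j then ε k n a.1.1 a.1.2 • (arr k n (rev n a) * arr k n a) else 0 with hG
  have hsum : ∑ a : Arrow n, G a = 0 := by
    have h0 := pp_sum k n
    have h1 : eV k n j * (∑ a : Arrow n,
        ε k n a.1.1 a.1.2 • (arr k n (rev n a) * arr k n a)) * eV k n j = 0 := by
      rw [h0, mul_zero, zero_mul]
    rw [Finset.mul_sum, Finset.sum_mul] at h1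
    rw [← h1]
    exact Finset.sum_congr rfl fun a _ => (term_eq k n j a).symm
  by_cases hP : j.val + 1 < n <;> by_cases hQ : 1 ≤ j.val
  · -- internal vertex
    have hm' : j.val - 1 + 1 < n := by omega
    have hGU : G (upA n j.val hP) = Lel k n j.val := by
      rw [hG]
      simp only
      rw [if_pos (Fin.ext rfl : (upA n j.val hP).1.1 = j), rev_upA]
      rw [eps_upA, one_smul, Lel, dif_pos hP]
    have hGD : G (dnA n (j.val - 1) hm') = -(Mel k n (j.val - 1)) := by
      rw [hG]
      simp only
      rw [if_pos (Fin.ext (show j.val - 1 + 1 = j.val by omega) :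
            (dnA n (j.val - 1) hm').1.1 = j), rev_dnA]
      rw [eps_dnA, Mel, dif_pos hm']
      module
    have hne : upA n j.val hP ≠ dnA n (j.val - 1) hm' := by
      intro hcon
      have := congrArg (fun b : Arrow n => b.1.2.val) hcon
      simp only [upA, dnA] at this
      omega
    have hsum2 : ∑ a : Arrow n, G a = G (upA n j.val hP) + G (dnA n (j.val - 1) hm') := by
      rw [← Finset.sum_pair hne]
      refine (Finset.sum_subset (Finset.subset_univ _) fun b _ hb => ?_).symm
      by_cases hbj : b.1.1 = j
      · exfalso
        rcases hvan n j b hbj with ⟨hP', rfl⟩ | ⟨_, hm'', rfl⟩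
        · exact hb (Finset.mem_insert_self _ _)
        · exact hb (Finset.mem_insert_of_mem (Finset.mem_singleton_self _))
      · rw [hG]; exact if_neg hbj
    rw [hsum, hGU, hGD] at hsum2
    rw [if_pos hQ]
    have := hsum2.symm
    rw [← sub_eq_add_neg] at this
    exact sub_eq_zero.mp this
  · -- vertex 0
    have hGU : G (upA n j.val hP) = Lel k n j.val := by
      rw [hG]
      simp only
      rw [if_pos (Fin.ext rfl : (upA n j.val hP).1.1 = j), rev_upA]
      rw [eps_upA, one_smul, Lel, dif_pos hP]
    have hsum2 : ∑ a : Arrow n, G a = G (upA n j.val hP) := by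
      rw [← Finset.sum_singleton G (upA n j.val hP)]
      refine (Finset.sum_subset (Finset.subset_univ _) fun b _ hb => ?_).symm
      by_cases hbj : b.1.1 = j
      · exfalso
        rcases hvan n j b hbj with ⟨hP', rfl⟩ | ⟨hQ', _, rfl⟩
        · exact hb (Finset.mem_singleton_self _)
        · exact hQ hQ'
      · rw [hG]; exact if_neg hbj
    rw [hsum, hGU] at hsum2
    rw [if_neg hQ]
    exact hsum2.symm
  · -- top vertex
    have hm' : j.val - 1 + 1 < n := by omega
    have hGD : G (dnA n (j.val - 1) hm') = -(Mel k n (j.val - 1)) := by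
      rw [hG]
      simp only
      rw [if_pos (Fin.ext (show j.val - 1 + 1 = j.val by omega) :
            (dnA n (j.val - 1) hm').1.1 = j), rev_dnA]
      rw [eps_dnA, Mel, dif_pos hm']
      module
    have hsum2 : ∑ a : Arrow n, G a = G (dnA n (j.val - 1) hm') := by
      rw [← Finset.sum_singleton G (dnA n (j.val - 1) hm')]
      refine (Finset.sum_subset (Finset.subset_univ _) fun b _ hb => ?_).symm
      by_cases hbj : b.1.1 = j
      · exfalso
        rcases hvan n j b hbj with ⟨hP', rfl⟩ | ⟨_, hm'', rfl⟩
        · exact hP hP'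
        · exact hb (Finset.mem_singleton_self _)
      · rw [hG]; exact if_neg hbj
    rw [hsum, hGD] at hsum2
    rw [if_pos hQ, Lel, dif_neg hP]
    exact (neg_eq_zero.mp hsum2.symm).symm
  · rw [Lel, dif_neg hP, if_neg hQ]

lemma Lel_zero : Lel k n 0 = 0 := by
  by_cases hn : 0 + 1 < n
  · have := vertex k n ⟨0, by omega⟩
    simpa using this
  · rw [Lel, dif_neg hn]

lemma Lel_succ (m : ℕ) : Lel k n (m + 1) = Mel k n m := by
  by_cases h : m + 1 < n
  · have := vertex k n ⟨m + 1, h⟩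
    simpa using this
  · rw [Lel, dif_neg (by omega), Mel, dif_neg h]
/-- The central element: sum of all loops `Mel m`. -/
def xc : PPA k n := ∑ m ∈ Finset.range n, Mel k n m

lemma eV_mul_xc (m : ℕ) (hm : m + 1 < n) :
    eV k n ⟨m + 1, hm⟩ * xc k n = Mel k n m := by
  rw [xc, Finset.mul_sum]
  have h1 : ∀ l ∈ Finset.range n,
      eV k n ⟨m + 1, hm⟩ * Mel k n l = if l = m then Mel k n l else 0 := by
    intro l _
    rw [eV_mul_Mel]
    by_cases h : l = m
    · subst h
      rw [if_pos (rfl : ((⟨l + 1, hm⟩ : Fin n)).val = l + 1), if_pos rfl]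
    · rw [if_neg (fun hh => h (Nat.succ_injective hh).symm), if_neg h]
  rw [Finset.sum_congr rfl h1, Finset.sum_ite_eq' (Finset.range n) m (fun l => Mel k n l),
    if_pos (Finset.mem_range.mpr (by omega))]

lemma eV_comm (i : Fin n) : eV k n i * xc k n = xc k n * eV k n i := by
  rw [xc, Finset.mul_sum, Finset.sum_mul]
  exact Finset.sum_congr rfl fun m _ => by rw [eV_mul_Mel, Mel_mul_eV]

lemma Mel_mul_arr_up (l m : ℕ) (hm : m + 1 < n) :
    Mel k n l * arr k n (upA n m hm) =
      if l = m then Mel k n l * arr k n (upA n m hm) else 0 := by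
  by_cases h : l = m
  · rw [if_pos h]
  · rw [if_neg h]
    have h1 : arr k n (upA n m hm) = eV k n ⟨m + 1, hm⟩ * arr k n (upA n m hm) :=
      (eV_arr k n (upA n m hm)).symm
    rw [h1, ← mul_assoc, Mel_mul_eV, if_neg (fun hh => h (Nat.succ_injective hh).symm), zero_mul]

lemma arr_up_mul_Mel (l m : ℕ) (hm : m + 1 < n) :
    arr k n (upA n m hm) * Mel k n l =
      if l + 1 = m then arr k n (upA n m hm) * Mel k n l else 0 := by
  by_cases h : l + 1 = m
  · rw [if_pos h]
  · rw [if_neg h]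
    by_cases hl : l + 1 < n
    · have h1 : Mel k n l = eV k n ⟨l + 1, hl⟩ * Mel k n l := by
        rw [eV_mul_Mel, if_pos rfl]
      rw [h1, ← mul_assoc, arr_mul_eV,
        if_neg (fun hh => h (congrArg Fin.val hh).symm), zero_mul]
    · rw [Mel, dif_neg hl, mul_zero]

lemma Mel_mul_arr_dn (l m : ℕ) (hm : m + 1 < n) :
    Mel k n l * arr k n (dnA n m hm) =
      if l + 1 = m then Mel k n l * arr k n (dnA n m hm) else 0 := by
  by_cases h : l + 1 = m
  · rw [if_pos h]
  · rw [if_neg h]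
    have h1 : arr k n (dnA n m hm) =
        eV k n ⟨m, Nat.lt_of_succ_lt hm⟩ * arr k n (dnA n m hm) :=
      (eV_arr k n (dnA n m hm)).symm
    rw [h1, ← mul_assoc, Mel_mul_eV, if_neg (fun hh => h hh.symm), zero_mul]
lemma arr_dn_mul_Mel (l m : ℕ) (hm : m + 1 < n) :
    arr k n (dnA n m hm) * Mel k n l =
      if l = m then arr k n (dnA n m hm) * Mel k n l else 0 := by
  by_cases h : l = m
  · rw [if_pos h]
  · rw [if_neg h]
    by_cases hl : l + 1 < n
    · have h1 : Mel k n l = eV k n ⟨l + 1, hl⟩ * Mel k n l := by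
        rw [eV_mul_Mel, if_pos (rfl : ((⟨l + 1, hl⟩ : Fin n)).val = l + 1)]
      rw [h1, ← mul_assoc, arr_mul_eV,
        if_neg (fun hh => h (Nat.succ_injective (congrArg Fin.val hh)).symm), zero_mul]
    · rw [Mel, dif_neg hl, mul_zero]

lemma up_comm (m : ℕ) (hm : m + 1 < n) :
    xc k n * arr k n (upA n m hm) = arr k n (upA n m hm) * xc k n := by
  have hL : xc k n * arr k n (upA n m hm) = Mel k n m * arr k n (upA n m hm) := by
    rw [xc, Finset.sum_mul,
      Finset.sum_congr rfl fun l _ => Mel_mul_arr_up k n l m hm,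
      Finset.sum_ite_eq' (Finset.range n) m _,
      if_pos (Finset.mem_range.mpr (by omega))]
  have hkey : Mel k n m * arr k n (upA n m hm) = arr k n (upA n m hm) * Lel k n m := by
    rw [Mel, dif_pos hm, Lel, dif_pos hm]
    simp only [mul_assoc]
  cases m with
  | zero =>
    have hR : arr k n (upA n 0 hm) * xc k n = 0 := by
      rw [xc, Finset.mul_sum]
      exact Finset.sum_eq_zero fun l _ => by
        rw [arr_up_mul_Mel, if_neg (by omega)]
    rw [hL, hR, hkey, Lel_zero, mul_zero]
  | succ m' =>
    have hR : arr k n (upA n (m' + 1) hm) * xc k n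
        = arr k n (upA n (m' + 1) hm) * Mel k n m' := by
      have h2 : ∀ l ∈ Finset.range n, arr k n (upA n (m' + 1) hm) * Mel k n l
          = if l = m' then arr k n (upA n (m' + 1) hm) * Mel k n l else 0 := by
        intro l _
        by_cases h : l = m'
        · rw [arr_up_mul_Mel, if_pos (by omega : l + 1 = m' + 1), if_pos h]
        · rw [arr_up_mul_Mel, if_neg (by omega : ¬l + 1 = m' + 1), if_neg h]
      rw [xc, Finset.mul_sum, Finset.sum_congr rfl h2,
        Finset.sum_ite_eq' (Finset.range n) m' _,
        if_pos (Finset.mem_range.mpr (by omega))]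
    rw [hL, hR, hkey, Lel_succ]
lemma dn_comm (m : ℕ) (hm : m + 1 < n) :
    xc k n * arr k n (dnA n m hm) = arr k n (dnA n m hm) * xc k n := by
  have hR : arr k n (dnA n m hm) * xc k n = arr k n (dnA n m hm) * Mel k n m := by
    rw [xc, Finset.mul_sum,
      Finset.sum_congr rfl fun l _ => arr_dn_mul_Mel k n l m hm,
      Finset.sum_ite_eq' (Finset.range n) m _,
      if_pos (Finset.mem_range.mpr (by omega))]
  have hkey : arr k n (dnA n m hm) * Mel k n m = Lel k n m * arr k n (dnA n m hm) := by
    rw [Mel, dif_pos hm, Lel, dif_pos hm]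
    simp only [mul_assoc]
  cases m with
  | zero =>
    have hL : xc k n * arr k n (dnA n 0 hm) = 0 := by
      rw [xc, Finset.sum_mul]
      exact Finset.sum_eq_zero fun l _ => by
        rw [Mel_mul_arr_dn, if_neg (by omega)]
    rw [hL, hR, hkey, Lel_zero, zero_mul]
  | succ m' =>
    have hL : xc k n * arr k n (dnA n (m' + 1) hm)
        = Mel k n m' * arr k n (dnA n (m' + 1) hm) := by
      have h2 : ∀ l ∈ Finset.range n, Mel k n l * arr k n (dnA n (m' + 1) hm)
          = if l = m' then Mel k n l * arr k n (dnA n (m' + 1) hm) else 0 := by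
        intro l _
        by_cases h : l = m'
        · rw [Mel_mul_arr_dn, if_pos (by omega : l + 1 = m' + 1), if_pos h]
        · rw [Mel_mul_arr_dn, if_neg (by omega : ¬l + 1 = m' + 1), if_neg h]
      rw [xc, Finset.sum_mul, Finset.sum_congr rfl h2,
        Finset.sum_ite_eq' (Finset.range n) m' _,
        if_pos (Finset.mem_range.mpr (by omega))]
    rw [hL, hR, hkey, Lel_succ]

lemma arr_comm (a : Arrow n) : xc k n * arr k n a = arr k n a * xc k n := by
  rcases arrow_cases n a with ⟨m, hm, rfl⟩ | ⟨m, hm, rfl⟩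
  · exact up_comm k n m hm
  · exact dn_comm k n m hm

lemma xc_comm (y : PPA k n) : xc k n * y = y * xc k n := by
  obtain ⟨z, rfl⟩ := RingQuot.mkAlgHom_surjective k (Rel k n) y
  induction z using FreeAlgebra.induction with
  | grade0 r =>
    rw [AlgHom.commutes]
    exact (Algebra.commutes r (xc k n)).symm
  | grade1 g =>
    rcases g with i | a
    · rw [← eV_eq]
      exact (eV_comm k n i).symm
    · rw [← arr_eq]
      exact arr_comm k n a
  | mul a b ha hb =>
    rw [map_mul, ← mul_assoc, ha, mul_assoc, hb, ← mul_assoc]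
  | add a b ha hb =>
    rw [map_add, mul_add, add_mul, ha, hb]

lemma Mel_pow_succ (m : ℕ) (hm : m + 1 < n) (p : ℕ) :
    Mel k n m ^ (p + 1)
      = arr k n (upA n m hm) * Lel k n m ^ p * arr k n (dnA n m hm) := by
  induction p with
  | zero => rw [pow_one, pow_zero, mul_one, Mel, dif_pos hm]
  | succ p ih =>
    rw [pow_succ, ih, Mel, dif_pos hm, pow_succ, Lel, dif_pos hm]
    simp only [mul_assoc]

lemma Mel_pow_zero (m : ℕ) : Mel k n m ^ (m + 2) = 0 := by
  induction m with
  | zero =>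
    by_cases hm : 0 + 1 < n
    · rw [show (0 + 2 : ℕ) = 1 + 1 by omega, Mel_pow_succ k n 0 hm 1, pow_one, Lel_zero,
        mul_zero, zero_mul]
    · rw [Mel, dif_neg hm, zero_pow (by omega)]
  | succ m ih =>
    by_cases hm : m + 1 + 1 < n
    · rw [show m + 1 + 2 = (m + 2) + 1 by omega, Mel_pow_succ k n (m + 1) hm (m + 2),
        Lel_succ, ih, mul_zero, zero_mul]
    · rw [Mel, dif_neg hm, zero_pow (by omega)]

lemma xc_pow_eq (p : ℕ) :
    xc k n ^ (p + 1) = ∑ m ∈ Finset.range n, Mel k n m ^ (p + 1) := by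
  induction p with
  | zero => simp [xc]
  | succ p ih =>
    rw [pow_succ, ih, Finset.sum_mul]
    apply Finset.sum_congr rfl
    intro l hl
    rw [xc, Finset.mul_sum]
    have h1 : ∀ m1 ∈ Finset.range n, Mel k n l ^ (p + 1) * Mel k n m1
        = if m1 = l then Mel k n l ^ (p + 1) * Mel k n m1 else 0 := by
      intro m1 _
      by_cases h : m1 = l
      · rw [if_pos h]
      · rw [if_neg h, pow_succ, mul_assoc,
          Mel_mul_Mel k n l m1 (fun hh => h hh.symm), mul_zero]
    rw [Finset.sum_congr rfl h1, Finset.sum_ite_eq' (Finset.range n) l _, if_pos hl,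
      ← pow_succ]

lemma xc_nilpotent : xc k n ^ (n + 1) = 0 := by
  rw [xc_pow_eq]
  apply Finset.sum_eq_zero
  intro m hm
  have hmn : m < n := Finset.mem_range.mp hm
  rw [show n + 1 = (m + 2) + (n - 1 - m) by omega, pow_add, Mel_pow_zero, zero_mul]
end Aux

/-- Let `Π` be the preprojective algebra of type `A_n` over a field `k`,
`I_cyc` the ideal generated by all 2-cycles, and `X` a `Π`-module with `End_Π(X) = k`
and `Ext¹_Π(X, X) = 0` (i.e. every self-extension of `X` splits).  Then `I_cyc · X = 0`,
i.e. `X` is a module over `Π̄ = Π / I_cyc`. -/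
theorem stmt12 (X : Type) [AddCommGroup X] [Module (PPA k n) X]
    [Module k X] [IsScalarTower k (PPA k n) X] [FiniteDimensional k X]
    (hnt : Nontrivial X)
    (hend : ∀ f : X →ₗ[PPA k n] X, ∃ c : k, ∀ x : X, f x = c • x)
    (hsplit : ∀ (M : Type) [AddCommGroup M] [Module (PPA k n) M]
      (N : Submodule (PPA k n) M),
      Nonempty (↥N ≃ₗ[PPA k n] X) → Nonempty ((M ⧸ N) ≃ₗ[PPA k n] X) →
      ∃ r : M →ₗ[PPA k n] ↥N, ∀ x : ↥N, r ↑x = x) :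
    ∀ r ∈ Icyc k n, ∀ x : X, r • x = 0 := by
  have hxcomm := xc_comm k n
  let f : X →ₗ[PPA k n] X :=
    { toFun := fun v => xc k n • v
      map_add' := fun v w => smul_add _ v w
      map_smul' := fun r v => by
        simp only [RingHom.id_apply]
        rw [← mul_smul, hxcomm r, mul_smul] }
  obtain ⟨c, hc⟩ := hend f
  have hfc : ∀ v : X, xc k n • v = c • v := hc
  have hpow : ∀ (p : ℕ) (v : X), xc k n ^ (p + 1) • v = c ^ (p + 1) • v := by
    intro p
    induction p with
    | zero => intro v; rw [pow_one, pow_one]; exact hfc v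
    | succ p ih =>
      intro v
      rw [pow_succ', mul_smul, ih, hfc, smul_smul, ← pow_succ']
  have hc0 : ∀ v : X, xc k n • v = 0 := by
    obtain ⟨v0, hv0⟩ := exists_ne (0 : X)
    have h0 : c ^ (n + 1) • v0 = 0 := by
      rw [← hpow n v0, xc_nilpotent, zero_smul]
    have hcz : c = 0 := by
      by_contra hcne
      apply hv0
      have h1 := congrArg (fun w : X => (c ^ (n + 1))⁻¹ • w) h0
      simp only [smul_zero] at h1
      rwa [inv_smul_smul₀ (pow_ne_zero _ hcne)] at h1
    intro v
    rw [hfc v, hcz, zero_smul]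
  have hMel : ∀ (m : ℕ) (v : X), Mel k n m • v = 0 := by
    intro m v
    by_cases hm : m + 1 < n
    · rw [← eV_mul_xc k n m hm, mul_smul, hc0, smul_zero]
    · rw [Mel, dif_neg hm, zero_smul]
  have hLel : ∀ (m : ℕ) (v : X), Lel k n m • v = 0 := by
    intro m v
    cases m with
    | zero => rw [Lel_zero, zero_smul]
    | succ m => rw [Lel_succ]; exact hMel m v
  intro r hr
  have hC0 : (0 : PPA k n) ∈ {r : PPA k n | ∀ v : X, r • v = 0} :=
    fun v => zero_smul _ v
  have hCadd : ∀ {a b : PPA k n}, a ∈ {r : PPA k n | ∀ v : X, r • v = 0} →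
      b ∈ {r : PPA k n | ∀ v : X, r • v = 0} →
      a + b ∈ {r : PPA k n | ∀ v : X, r • v = 0} :=
    fun ha hb v => by rw [add_smul, ha v, hb v, add_zero]
  have hCneg : ∀ {a : PPA k n}, a ∈ {r : PPA k n | ∀ v : X, r • v = 0} →
      -a ∈ {r : PPA k n | ∀ v : X, r • v = 0} :=
    fun ha v => by rw [neg_smul, ha v, neg_zero]
  have hCml : ∀ {a b : PPA k n}, b ∈ {r : PPA k n | ∀ v : X, r • v = 0} →
      a * b ∈ {r : PPA k n | ∀ v : X, r • v = 0} :=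
    fun hb v => by rw [mul_smul, hb v, smul_zero]
  have hCmr : ∀ {a b : PPA k n}, a ∈ {r : PPA k n | ∀ v : X, r • v = 0} →
      a * b ∈ {r : PPA k n | ∀ v : X, r • v = 0} :=
    fun ha v => by rw [mul_smul, ha _]
  have hsub : {z : PPA k n | ∃ a : Arrow n, z = arr k n a * arr k n (rev n a)} ⊆
      (TwoSidedIdeal.mk' {r : PPA k n | ∀ v : X, r • v = 0}
        hC0 hCadd hCneg hCml hCmr : Set (PPA k n)) := by
    rintro z ⟨a, rfl⟩
    rw [SetLike.mem_coe, TwoSidedIdeal.mem_mk']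
    rcases arrow_cases n a with ⟨m, hm, rfl⟩ | ⟨m, hm, rfl⟩
    · rw [rev_upA]
      intro v
      have hEq : arr k n (upA n m hm) * arr k n (dnA n m hm) = Mel k n m := by
        rw [Mel, dif_pos hm]
      rw [hEq]
      exact hMel m v
    · rw [rev_dnA]
      intro v
      have hEq : arr k n (dnA n m hm) * arr k n (upA n m hm) = Lel k n m := by
        rw [Lel, dif_pos hm]
      rw [hEq]
      exact hLel m v
  have hrI := TwoSidedIdeal.mem_span_iff.mp hr _ hsub
  rw [TwoSidedIdeal.mem_mk'] at hrI
  exact hrI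

end Stmt12
end

section
/- Let W be a finite Weyl group of simply-laced type with weak order, Π the corresponding preprojective algebra, and for a Hasse arrow ws_i → w (meaning ℓ(ws_i) = ℓ(w) + 1) define the layer L(ws_i → w) = I(w)/I(ws_i). In a square interval of the weak order with bottom u s_i s_j = u s_j s_i (where s_i s_j = s_j s_i), the layer labels on opposite sides are equal: L(u → us_i) = L(us_j → us_is_j) and L(u → us_j) = L(us_i → us_is_j). -/
namespace Stmt14

open FreeAlgebra

section

variable (k : Type) [Field k]
variable (V : Type) [Fintype V] [DecidableEq V]
variable (adj : V → V → Prop) [DecidableRel adj]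

/-- Arrows of the double quiver. -/
abbrev Arrow := {p : V × V // adj p.1 p.2}

instance : DecidablePred (fun p : V × V => adj p.1 p.2) := fun p => ‹DecidableRel adj› p.1 p.2

/-- Generators: vertex idempotents and arrows. -/
abbrev GenT := V ⊕ Arrow V adj

/-- Defining relations of the preprojective algebra. -/
inductive Rel (hsym : ∀ i j, adj i j → adj j i) (ε : V → V → k) :
    FreeAlgebra k (GenT V adj) → FreeAlgebra k (GenT V adj) → Prop
  | idem (i j : V) : Rel hsym ε (ι k (Sum.inl i) * ι k (Sum.inl j))
      (if i = j then ι k (Sum.inl i) else 0)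
  | sum_one : Rel hsym ε (∑ i : V, ι k (Sum.inl i)) 1
  | arr_tgt (a : Arrow V adj) :
      Rel hsym ε (ι k (Sum.inl a.1.2) * ι k (Sum.inr a)) (ι k (Sum.inr a))
  | arr_src (a : Arrow V adj) :
      Rel hsym ε (ι k (Sum.inr a) * ι k (Sum.inl a.1.1)) (ι k (Sum.inr a))
  | pp : Rel hsym ε
      (∑ a : Arrow V adj, ε a.1.1 a.1.2 •
        (ι k (Sum.inr ⟨(a.1.2, a.1.1), hsym _ _ a.2⟩) * ι k (Sum.inr a))) 0

/-- The preprojective algebra of the graph `(V, adj)`. -/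
abbrev PPA (hsym : ∀ i j, adj i j → adj j i) (ε : V → V → k) :=
  RingQuot (Rel k V adj hsym ε)

/-- The Cartan form of the graph is positive definite, i.e. the graph is a (disjoint
union of) simply-laced Dynkin diagram(s). -/
def IsDynkin : Prop :=
  ∀ x : V → ℚ, x ≠ 0 →
    0 < ∑ i : V, 2 * x i ^ 2 - ∑ a : Arrow V adj, x a.1.1 * x a.1.2

variable (hsym : ∀ i j, adj i j → adj j i) (ε : V → V → k)

/-- The idempotent `e_i ∈ Π`. -/
def e (i : V) : PPA k V adj hsym ε :=
  RingQuot.mkRingHom (Rel k V adj hsym ε) (ι k (Sum.inl i))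

/-- Generating set of the ideal `I(ω) = I_{i_1} ⋯ I_{i_k}` (where `I_i = Π(1−e_i)Π`)
for the word `ω = [i_1, …, i_k]`. -/
def GenSet : List V → Set (PPA k V adj hsym ε)
  | [] => Set.univ
  | i :: ω => {x | ∃ p : PPA k V adj hsym ε, ∃ g ∈ GenSet ω,
      x = (1 - e k V adj hsym ε i) * p * g}

/-- The two-sided ideal `I(ω) = I_{i_1} ⋯ I_{i_k}` of `Π`, as a left submodule. -/
def Idl (ω : List V) : Submodule (PPA k V adj hsym ε) (PPA k V adj hsym ε) :=
  Submodule.span _ (GenSet k V adj hsym ε ω)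

noncomputable instance (A : Submodule (PPA k V adj hsym ε) (PPA k V adj hsym ε)) :
    HasQuotient ↥A (Submodule (PPA k V adj hsym ε) ↥A) :=
  Submodule.hasQuotient (R := PPA k V adj hsym ε) (M := ↥A)

/-- The subquotient `I(α)/I(β)` of `Π` (for `I(β) ⊆ I(α)`), a left `Π`-module. -/
abbrev Idlquot (α β : List V) :=
  ↥(Idl k V adj hsym ε α) ⧸
    (Idl k V adj hsym ε β).comap (Idl k V adj hsym ε α).subtype

/-- The Coxeter matrix of the graph `(V, adj)` (simply laced). -/
def cmat : CoxeterMatrix V where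
  M := Matrix.of fun i j => if i = j then 1 else if adj i j then 3 else 2
  isSymm := by
    ext i j
    by_cases h : i = j
    · subst h; simp
    · have h' : ¬ (j = i) := fun hh => h hh.symm
      by_cases ha : adj i j
      · simp [Matrix.transpose_apply, h, h', ha, hsym _ _ ha]
      · have ha' : ¬ adj j i := fun hh => ha (hsym _ _ hh)
        simp [Matrix.transpose_apply, h, h', ha, ha']
  diagonal := by intro i; simp
  off_diagonal := by
    intro i j h
    simp only [Matrix.of_apply, if_neg (fun hh => h hh)]
    split <;> omega

-- ====== auxiliary development (added) ======
section Aux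


local notation "ΠA" => PPA k V adj hsym ε
local notation "mkP" => RingQuot.mkRingHom (Rel k V adj hsym ε)

private def ar (a : Arrow V adj) : PPA k V adj hsym ε :=
  RingQuot.mkRingHom (Rel k V adj hsym ε) (ι k (Sum.inr a))

local notation "ee" => e k V adj hsym ε
local notation "aar" => ar k V adj hsym ε

private lemma mk_alg (r : k) : mkP (algebraMap k _ r) = algebraMap k ΠA r := by
  have h := RingQuot.mkAlgHom_coe k (Rel k V adj hsym ε)
  calc mkP (algebraMap k _ r)
      = (RingQuot.mkAlgHom k (Rel k V adj hsym ε)) (algebraMap k _ r) := by rw [← h]; rfl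
    _ = algebraMap k ΠA r := AlgHom.commutes _ r

private lemma e_mul_e (i j : V) : ee i * ee j = if i = j then ee i else 0 := by
  have h := RingQuot.mkRingHom_rel
    (show Rel k V adj hsym ε (ι k (Sum.inl i) * ι k (Sum.inl j))
        (if i = j then ι k (Sum.inl i) else 0) from Rel.idem i j)
  rw [map_mul] at h
  unfold e
  rw [h, apply_ite mkP, map_zero]

private lemma e_orth {i j : V} (h : i ≠ j) : ee i * ee j = 0 := by
  rw [e_mul_e, if_neg h]

private lemma e_idem (i : V) : ee i * ee i = ee i := by rw [e_mul_e, if_pos rfl]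

private lemma sum_e : (∑ i : V, ee i) = 1 := by
  have h := RingQuot.mkRingHom_rel
    (show Rel k V adj hsym ε (∑ i : V, ι k (Sum.inl i)) 1 from Rel.sum_one)
  rw [map_sum, map_one] at h
  exact h

private lemma e_ar_tgt (a : Arrow V adj) : ee a.1.2 * aar a = aar a := by
  have h := RingQuot.mkRingHom_rel
    (show Rel k V adj hsym ε (ι k (Sum.inl a.1.2) * ι k (Sum.inr a)) (ι k (Sum.inr a)) from
      Rel.arr_tgt a)
  rw [map_mul] at h
  exact h

private lemma ar_e_src (a : Arrow V adj) : aar a * ee a.1.1 = aar a := by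
  have h := RingQuot.mkRingHom_rel
    (show Rel k V adj hsym ε (ι k (Sum.inr a) * ι k (Sum.inl a.1.1)) (ι k (Sum.inr a)) from
      Rel.arr_src a)
  rw [map_mul] at h
  exact h

private lemma e_ar_ne {c : V} {a : Arrow V adj} (h : c ≠ a.1.2) : ee c * aar a = 0 := by
  rw [← e_ar_tgt k V adj hsym ε a, ← mul_assoc, e_orth k V adj hsym ε h, zero_mul]

private lemma ar_e_ne {c : V} {a : Arrow V adj} (h : a.1.1 ≠ c) : aar a * ee c = 0 := by
  rw [← ar_e_src k V adj hsym ε a, mul_assoc, e_orth k V adj hsym ε h, mul_zero]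


-- continuation inside section Aux (will merge later)
private def TgtS (j : V) : Set (PPA k V adj hsym ε) :=
  insert (e k V adj hsym ε j)
    {x | ∃ a : Arrow V adj, ∃ y : PPA k V adj hsym ε, a.1.2 = j ∧ x = ar k V adj hsym ε a * y}

private lemma mem_TgtS_of {j : V} {a : Arrow V adj} (ha : a.1.2 = j) (y : PPA k V adj hsym ε) :
    ar k V adj hsym ε a * y ∈ TgtS k V adj hsym ε j := by
  unfold TgtS; exact Set.mem_insert_of_mem _ ⟨a, y, ha, rfl⟩

private lemma e_mem_TgtS (j : V) : e k V adj hsym ε j ∈ TgtS k V adj hsym ε j := by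
  unfold TgtS; exact Set.mem_insert _ _

private lemma tgt_mul (j : V) (x : PPA k V adj hsym ε) :
    ∀ s ∈ Submodule.span k (TgtS k V adj hsym ε j),
      s * x ∈ Submodule.span k (TgtS k V adj hsym ε j) := by
  obtain ⟨z, rfl⟩ := RingQuot.mkRingHom_surjective (Rel k V adj hsym ε) x
  induction z using FreeAlgebra.induction with
  | grade0 r =>
    intro s hs
    rw [mk_alg, ← Algebra.commutes, ← Algebra.smul_def]
    exact Submodule.smul_mem _ r hs
  | grade1 g =>
    intro s hs
    induction hs using Submodule.span_induction with
    | mem s h =>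
      rcases h with h | ⟨a, y, ha, rfl⟩
      · subst h
        cases g with
        | inl c =>
          show ee j * ee c ∈ _
          rw [e_mul_e]
          split
          · exact Submodule.subset_span (e_mem_TgtS k V adj hsym ε j)
          · exact Submodule.zero_mem _
        | inr a =>
          show ee j * aar a ∈ _
          by_cases ha : a.1.2 = j
          · subst ha
            rw [e_ar_tgt, ← mul_one (aar a)]
            exact Submodule.subset_span (mem_TgtS_of k V adj hsym ε rfl 1)
          · rw [e_ar_ne k V adj hsym ε (fun hh => ha hh.symm)]
            exact Submodule.zero_mem _
      · rw [mul_assoc]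
        exact Submodule.subset_span (mem_TgtS_of k V adj hsym ε ha _)
    | zero => rw [zero_mul]; exact Submodule.zero_mem _
    | add s t _ _ ihs iht => rw [add_mul]; exact Submodule.add_mem _ ihs iht
    | smul c s _ ih => rw [smul_mul_assoc]; exact Submodule.smul_mem _ c ih
  | mul a b iha ihb =>
    intro s hs
    rw [map_mul, ← mul_assoc]
    exact ihb _ (iha s hs)
  | add a b iha ihb =>
    intro s hs
    rw [map_add, mul_add]
    exact Submodule.add_mem _ (iha s hs) (ihb s hs)

private lemma tgt_mem (j : V) (x : PPA k V adj hsym ε) :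
    e k V adj hsym ε j * x ∈ Submodule.span k (TgtS k V adj hsym ε j) :=
  tgt_mul k V adj hsym ε j x _ (Submodule.subset_span (e_mem_TgtS k V adj hsym ε j))

private def SrcS (i : V) : Set (PPA k V adj hsym ε) :=
  insert (e k V adj hsym ε i)
    {x | ∃ b : Arrow V adj, ∃ y : PPA k V adj hsym ε, b.1.1 = i ∧ x = y * ar k V adj hsym ε b}

private lemma mem_SrcS_of {i : V} {b : Arrow V adj} (hb : b.1.1 = i) (y : PPA k V adj hsym ε) :
    y * ar k V adj hsym ε b ∈ SrcS k V adj hsym ε i := by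
  unfold SrcS; exact Set.mem_insert_of_mem _ ⟨b, y, hb, rfl⟩

private lemma e_mem_SrcS (i : V) : e k V adj hsym ε i ∈ SrcS k V adj hsym ε i := by
  unfold SrcS; exact Set.mem_insert _ _

private lemma src_mul (i : V) (x : PPA k V adj hsym ε) :
    ∀ s ∈ Submodule.span k (SrcS k V adj hsym ε i),
      x * s ∈ Submodule.span k (SrcS k V adj hsym ε i) := by
  obtain ⟨z, rfl⟩ := RingQuot.mkRingHom_surjective (Rel k V adj hsym ε) x
  induction z using FreeAlgebra.induction with
  | grade0 r =>
    intro s hs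
    rw [mk_alg, ← Algebra.smul_def]
    exact Submodule.smul_mem _ r hs
  | grade1 g =>
    intro s hs
    induction hs using Submodule.span_induction with
    | mem s h =>
      rcases h with h | ⟨b, y, hb, rfl⟩
      · subst h
        cases g with
        | inl c =>
          show ee c * ee i ∈ _
          rw [e_mul_e]
          split
          · rename_i hh; rw [hh]; exact Submodule.subset_span (e_mem_SrcS k V adj hsym ε i)
          · exact Submodule.zero_mem _
        | inr b =>
          show aar b * ee i ∈ _
          by_cases hb : b.1.1 = i
          · subst hb
            rw [ar_e_src, ← one_mul (aar b)]
            exact Submodule.subset_span (mem_SrcS_of k V adj hsym ε rfl 1)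
          · rw [ar_e_ne k V adj hsym ε hb]
            exact Submodule.zero_mem _
      · rw [← mul_assoc]
        exact Submodule.subset_span (mem_SrcS_of k V adj hsym ε hb _)
    | zero => rw [mul_zero]; exact Submodule.zero_mem _
    | add s t _ _ ihs iht => rw [mul_add]; exact Submodule.add_mem _ ihs iht
    | smul c s _ ih => rw [mul_smul_comm]; exact Submodule.smul_mem _ c ih
  | mul a b iha ihb =>
    intro s hs
    rw [map_mul, mul_assoc]
    exact iha _ (ihb s hs)
  | add a b iha ihb =>
    intro s hs
    rw [map_add, add_mul]
    exact Submodule.add_mem _ (iha s hs) (ihb s hs)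

private lemma src_mem (i : V) (x : PPA k V adj hsym ε) :
    x * e k V adj hsym ε i ∈ Submodule.span k (SrcS k V adj hsym ε i) :=
  src_mul k V adj hsym ε i x _ (Submodule.subset_span (e_mem_SrcS k V adj hsym ε i))

private lemma mem_genset_cons {i : V} {ω : List V} {x : PPA k V adj hsym ε} :
    x ∈ GenSet k V adj hsym ε (i :: ω) ↔
      ∃ p : PPA k V adj hsym ε, ∃ g ∈ GenSet k V adj hsym ε ω,
        x = (1 - e k V adj hsym ε i) * p * g := by
  simp only [GenSet, Set.mem_setOf_eq]

private lemma one_sub_mem (i : V) : (1 - ee i) ∈ Idl k V adj hsym ε [i] := by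
  refine Submodule.subset_span ((mem_genset_cons k V adj hsym ε).mpr ⟨1, 1, trivial, ?_⟩)
  rw [mul_one, mul_one]

private lemma sandwich_mem {β : List V} {x : PPA k V adj hsym ε}
    (hx : x ∈ Idl k V adj hsym ε β) (i : V) :
    ∀ p : PPA k V adj hsym ε, (1 - ee i) * p * x ∈ Idl k V adj hsym ε (i :: β) := by
  induction hx using Submodule.span_induction with
  | mem g hg =>
    intro p
    exact Submodule.subset_span ((mem_genset_cons k V adj hsym ε).mpr ⟨p, g, hg, rfl⟩)
  | zero => intro p; rw [mul_zero]; exact Submodule.zero_mem _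
  | add x y _ _ ihx ihy => intro p; rw [mul_add]; exact Submodule.add_mem _ (ihx p) (ihy p)
  | smul c x _ ih =>
    intro p
    rw [smul_eq_mul, ← mul_assoc, mul_assoc (1 - ee i) p c]
    exact ih (p * c)

private lemma genset_mul_right {ω : List V} {g : PPA k V adj hsym ε}
    (hg : g ∈ GenSet k V adj hsym ε ω) (r : PPA k V adj hsym ε) :
    g * r ∈ GenSet k V adj hsym ε ω := by
  induction ω generalizing g with
  | nil => trivial
  | cons i ω ih =>
    obtain ⟨p, g', hg', rfl⟩ := (mem_genset_cons k V adj hsym ε).mp hg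
    rw [mul_assoc]
    exact (mem_genset_cons k V adj hsym ε).mpr ⟨p, g' * r, ih hg', rfl⟩

private lemma idl_mul_right {ω : List V} {x : PPA k V adj hsym ε}
    (hx : x ∈ Idl k V adj hsym ε ω) (r : PPA k V adj hsym ε) :
    x * r ∈ Idl k V adj hsym ε ω := by
  induction hx using Submodule.span_induction with
  | mem g hg => exact Submodule.subset_span (genset_mul_right k V adj hsym ε hg r)
  | zero => rw [zero_mul]; exact Submodule.zero_mem _
  | add x y _ _ ihx ihy => rw [add_mul]; exact Submodule.add_mem _ ihx ihy
  | smul c x _ ih =>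
    rw [smul_eq_mul, mul_assoc, ← smul_eq_mul]
    exact Submodule.smul_mem _ c ih

private lemma genset_prefix {α β : List V} {x : PPA k V adj hsym ε}
    (hx : x ∈ GenSet k V adj hsym ε (α ++ β)) : x ∈ GenSet k V adj hsym ε α := by
  induction α generalizing x with
  | nil => trivial
  | cons i α ih =>
    obtain ⟨p, g, hg, rfl⟩ := (mem_genset_cons k V adj hsym ε).mp hx
    exact (mem_genset_cons k V adj hsym ε).mpr ⟨p, g, ih hg, rfl⟩

private lemma idl_prefix_le (α β : List V) :
    Idl k V adj hsym ε (α ++ β) ≤ Idl k V adj hsym ε α :=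
  Submodule.span_mono fun _ hx => genset_prefix k V adj hsym ε hx

private lemma genset_mul_idl {α β : List V} {x y : PPA k V adj hsym ε}
    (hx : x ∈ GenSet k V adj hsym ε α) (hy : y ∈ Idl k V adj hsym ε β) :
    x * y ∈ Idl k V adj hsym ε (α ++ β) := by
  induction α generalizing x with
  | nil =>
    rw [← smul_eq_mul]
    exact Submodule.smul_mem _ x hy
  | cons i α ih =>
    obtain ⟨p, g, hg, rfl⟩ := (mem_genset_cons k V adj hsym ε).mp hx
    rw [mul_assoc ((1 - ee i) * p) g y]
    exact sandwich_mem k V adj hsym ε (ih hg) i p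

private lemma idl_mul_idl {α β : List V} {x y : PPA k V adj hsym ε}
    (hx : x ∈ Idl k V adj hsym ε α) (hy : y ∈ Idl k V adj hsym ε β) :
    x * y ∈ Idl k V adj hsym ε (α ++ β) := by
  induction hx using Submodule.span_induction with
  | mem g hg => exact genset_mul_idl k V adj hsym ε hg hy
  | zero => rw [zero_mul]; exact Submodule.zero_mem _
  | add x y _ _ ihx ihy => rw [add_mul]; exact Submodule.add_mem _ ihx ihy
  | smul c x _ ih =>
    rw [smul_eq_mul, mul_assoc, ← smul_eq_mul]
    exact Submodule.smul_mem _ c ih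

private lemma genset_append_mem {α β γ : List V} (h : Idl k V adj hsym ε β ≤ Idl k V adj hsym ε γ)
    {x : PPA k V adj hsym ε} (hx : x ∈ GenSet k V adj hsym ε (α ++ β)) :
    x ∈ Idl k V adj hsym ε (α ++ γ) := by
  induction α generalizing x with
  | nil => exact h (Submodule.subset_span hx)
  | cons i α ih =>
    obtain ⟨p, g, hg, rfl⟩ := (mem_genset_cons k V adj hsym ε).mp hx
    exact sandwich_mem k V adj hsym ε (ih hg) i p

private lemma idl_append_mono (α : List V) {β γ : List V}
    (h : Idl k V adj hsym ε β ≤ Idl k V adj hsym ε γ) :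
    Idl k V adj hsym ε (α ++ β) ≤ Idl k V adj hsym ε (α ++ γ) :=
  Submodule.span_le.mpr fun _ hx => genset_append_mem k V adj hsym ε h hx

private lemma idl_cons_le (i : V) (β : List V) :
    Idl k V adj hsym ε (i :: β) ≤ Idl k V adj hsym ε β := by
  refine Submodule.span_le.mpr fun x hx => ?_
  obtain ⟨p, g, hg, rfl⟩ := (mem_genset_cons k V adj hsym ε).mp hx
  rw [← smul_eq_mul]
  exact Submodule.smul_mem _ _ (Submodule.subset_span hg)

private lemma TgtS_cases {j : V} {s : PPA k V adj hsym ε} (hs : s ∈ TgtS k V adj hsym ε j) :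
    s = ee j ∨ ∃ a : Arrow V adj, ∃ y, a.1.2 = j ∧ s = aar a * y := by
  unfold TgtS at hs
  exact Set.mem_insert_iff.mp hs

private lemma SrcS_cases {i : V} {s : PPA k V adj hsym ε} (hs : s ∈ SrcS k V adj hsym ε i) :
    s = ee i ∨ ∃ b : Arrow V adj, ∃ y, b.1.1 = i ∧ s = y * aar b := by
  unfold SrcS at hs
  exact Set.mem_insert_iff.mp hs

private lemma key_inner (hirr : ∀ v, ¬ adj v v) {i j : V}
    {a : Arrow V adj} (ha : a.1.2 = j) (hna : ¬ adj i j) {t : PPA k V adj hsym ε}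
    (ht : t ∈ Submodule.span k (SrcS k V adj hsym ε i)) :
    aar a * t ∈ Idl k V adj hsym ε [j, i] := by
  induction ht using Submodule.span_induction with
  | mem t ht =>
    rcases SrcS_cases k V adj hsym ε ht with rfl | ⟨b, z, hb, rfl⟩
    · have hne : a.1.1 ≠ i := by
        intro h
        exact hna (by have h2 := a.2; rwa [h, ha] at h2)
      rw [ar_e_ne k V adj hsym ε hne]
      exact Submodule.zero_mem _
    · have hc : j ≠ a.1.1 := by
        intro h
        exact hirr j (by have h2 := a.2; rwa [← h, ha] at h2)
      have hd : i ≠ b.1.2 := by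
        intro h
        exact hirr i (by have h2 := b.2; rwa [hb, ← h] at h2)
      have hg0 : (1 - ee j) * (ee a.1.1 * z) * ((1 - ee i) * aar b * 1)
          ∈ GenSet k V adj hsym ε [j, i] :=
        (mem_genset_cons k V adj hsym ε).mpr ⟨ee a.1.1 * z, _,
          (mem_genset_cons k V adj hsym ε).mpr ⟨aar b, 1, trivial, rfl⟩, rfl⟩
      have hsm := Submodule.smul_mem (Idl k V adj hsym ε [j, i]) (aar a)
        (Submodule.subset_span hg0)
      convert hsm using 1
      rw [smul_eq_mul]
      have h3 : (1 - ee i) * aar b = aar b := by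
        rw [sub_mul, one_mul, e_ar_ne k V adj hsym ε hd, sub_zero]
      have h4 : (1 - ee j) * (ee a.1.1 * z) = ee a.1.1 * z := by
        rw [sub_mul, one_mul, ← mul_assoc, e_orth k V adj hsym ε hc, zero_mul, sub_zero]
      conv_rhs => rw [mul_one, h3, h4, ← mul_assoc, ← mul_assoc, ar_e_src, mul_assoc]
  | zero => rw [mul_zero]; exact Submodule.zero_mem _
  | add u v _ _ ihu ihv => rw [mul_add]; exact Submodule.add_mem _ ihu ihv
  | smul c t _ ih =>
    rw [mul_smul_comm, ← algebraMap_smul (PPA k V adj hsym ε) c]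
    exact Submodule.smul_mem _ _ ih

private lemma key_outer (hirr : ∀ v, ¬ adj v v) {i j : V} (hij : j ≠ i)
    (hna : ¬ adj i j) {s : PPA k V adj hsym ε}
    (hs : s ∈ Submodule.span k (TgtS k V adj hsym ε j)) :
    s * ee i ∈ Idl k V adj hsym ε [j, i] := by
  induction hs using Submodule.span_induction with
  | mem s hs =>
    rcases TgtS_cases k V adj hsym ε hs with rfl | ⟨a, y, ha, rfl⟩
    · rw [e_orth k V adj hsym ε hij]
      exact Submodule.zero_mem _
    · rw [mul_assoc]
      exact key_inner k V adj hsym ε hirr ha hna (src_mem k V adj hsym ε i y)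
  | zero => rw [zero_mul]; exact Submodule.zero_mem _
  | add u v _ _ ihu ihv => rw [add_mul]; exact Submodule.add_mem _ ihu ihv
  | smul c s _ ih =>
    rw [smul_mul_assoc, ← algebraMap_smul (PPA k V adj hsym ε) c]
    exact Submodule.smul_mem _ _ ih

private lemma key (hirr : ∀ v, ¬ adj v v) {i j : V} (hij : j ≠ i)
    (hna : ¬ adj i j) (x : PPA k V adj hsym ε) :
    ee j * x * ee i ∈ Idl k V adj hsym ε [j, i] :=
  key_outer k V adj hsym ε hirr hij hna (tgt_mem k V adj hsym ε j x)

private lemma idl_swap_elt (hirr : ∀ v, ¬ adj v v) {i j : V} (hij : i ≠ j) (hna : ¬ adj i j)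
    {x : PPA k V adj hsym ε} (hxi : x ∈ Idl k V adj hsym ε [i])
    (hxj : x ∈ Idl k V adj hsym ε [j]) : x ∈ Idl k V adj hsym ε [j, i] := by
  have e1 : (1 - ee j) * 1 * x = x - ee j * x := by rw [mul_one, sub_mul, one_mul]
  have e2 : ee j * (x * (1 - ee i)) = ee j * x - ee j * x * ee i := by
    rw [mul_sub x 1 (ee i), mul_one, mul_sub (ee j) x (x * ee i), ← mul_assoc]
  have dec : x = (1 - ee j) * 1 * x + ee j * (x * (1 - ee i)) + ee j * x * ee i := by
    rw [e1, e2]; abel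
  rw [dec]
  refine Submodule.add_mem _ (Submodule.add_mem _ ?_ ?_) ?_
  · exact sandwich_mem k V adj hsym ε hxi j 1
  · have hxx := idl_mul_idl k V adj hsym ε (α := [j]) (β := [i]) hxj
      (one_sub_mem k V adj hsym ε i)
    rw [List.singleton_append] at hxx
    rw [← smul_eq_mul]
    exact Submodule.smul_mem _ _ hxx
  · exact key k V adj hsym ε hirr (fun h => hij h.symm) hna x

private lemma idl_swap (hirr : ∀ v, ¬ adj v v) {i j : V} (hij : i ≠ j) (hna : ¬ adj i j) :
    Idl k V adj hsym ε [i, j] ≤ Idl k V adj hsym ε [j, i] := by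
  rw [Idl, Submodule.span_le]
  intro x hx
  obtain ⟨p, g', hg', rfl⟩ := (mem_genset_cons k V adj hsym ε).mp hx
  obtain ⟨q, r, -, rfl⟩ := (mem_genset_cons k V adj hsym ε).mp hg'
  have hxi : (1 - ee i) * p * ((1 - ee j) * q * r) ∈ Idl k V adj hsym ε [i] :=
    Submodule.subset_span ((mem_genset_cons k V adj hsym ε).mpr
      ⟨p, (1 - ee j) * q * r, trivial, rfl⟩)
  have hxj : (1 - ee i) * p * ((1 - ee j) * q * r) ∈ Idl k V adj hsym ε [j] := by
    have hG : (1 - ee j) * q * r ∈ GenSet k V adj hsym ε [j] :=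
      (mem_genset_cons k V adj hsym ε).mpr ⟨q, r, trivial, rfl⟩
    have h := Submodule.smul_mem (Idl k V adj hsym ε [j]) ((1 - ee i) * p)
      (Submodule.subset_span hG)
    rwa [smul_eq_mul] at h
  exact idl_swap_elt k V adj hsym ε hirr hij hna hxi hxj

private lemma idl_comm_sq (hirr : ∀ v, ¬ adj v v) {i j : V} (hij : i ≠ j) (hna : ¬ adj i j)
    (ω : List V) :
    Idl k V adj hsym ε (ω ++ [i, j]) = Idl k V adj hsym ε (ω ++ [j, i]) := by
  have hna' : ¬ adj j i := fun h => hna (hsym _ _ h)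
  exact le_antisymm
    (idl_append_mono k V adj hsym ε ω (idl_swap k V adj hsym ε hirr hij hna))
    (idl_append_mono k V adj hsym ε ω (idl_swap k V adj hsym ε hirr hij.symm hna'))

private noncomputable def fmap (i j : V) (ω : List V) :
    ↥(Idl k V adj hsym ε (ω ++ [j])) →ₗ[PPA k V adj hsym ε]
      (↥(Idl k V adj hsym ε ω) ⧸
        (Idl k V adj hsym ε (ω ++ [i])).comap (Idl k V adj hsym ε ω).subtype) :=
  Submodule.mkQ _ ∘ₗ Submodule.inclusion (idl_prefix_le k V adj hsym ε ω [j])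

private lemma fmap_surj {i j : V} (hij : i ≠ j) (ω : List V) :
    Function.Surjective (fmap k V adj hsym ε i j ω) := by
  have h0 : ee i * ee j = 0 := e_orth k V adj hsym ε hij
  intro q
  obtain ⟨a, rfl⟩ := Submodule.mkQ_surjective _ q
  have hc0 : (a : PPA k V adj hsym ε) * ee i * (1 - ee j) ∈ Idl k V adj hsym ε (ω ++ [j]) :=
    idl_mul_idl k V adj hsym ε (α := ω) (β := [j])
      (idl_mul_right k V adj hsym ε a.2 (ee i)) (one_sub_mem k V adj hsym ε j)
  refine ⟨⟨(a : PPA k V adj hsym ε) * ee i * (1 - ee j), hc0⟩, ?_⟩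
  show Submodule.Quotient.mk _ = Submodule.Quotient.mk a
  rw [Submodule.Quotient.eq, Submodule.mem_comap]
  show ((a : PPA k V adj hsym ε) * ee i * (1 - ee j) - (a : PPA k V adj hsym ε))
      ∈ Idl k V adj hsym ε (ω ++ [i])
  have hid : (a : PPA k V adj hsym ε) * ee i * (1 - ee j) - (a : PPA k V adj hsym ε)
      = -((a : PPA k V adj hsym ε) * (1 - ee i))
        - (a : PPA k V adj hsym ε) * (ee i * ee j) := by
    rw [mul_sub ((a : PPA k V adj hsym ε) * ee i), mul_one,
      mul_sub (a : PPA k V adj hsym ε), mul_one, ← mul_assoc]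
    abel
  rw [hid, h0, mul_zero, sub_zero]
  exact Submodule.neg_mem _
    (idl_mul_idl k V adj hsym ε (α := ω) (β := [i]) a.2 (one_sub_mem k V adj hsym ε i))

private lemma fmap_ker (hirr : ∀ v, ¬ adj v v) {i j : V} (hij : i ≠ j) (hna : ¬ adj i j)
    (ω : List V) :
    LinearMap.ker (fmap k V adj hsym ε i j ω)
      = (Idl k V adj hsym ε (ω ++ [j, i])).comap
          (Idl k V adj hsym ε (ω ++ [j])).subtype := by
  have h0 : ee i * ee j = 0 := e_orth k V adj hsym ε hij
  ext x
  rw [LinearMap.mem_ker]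
  have hfx : fmap k V adj hsym ε i j ω x
      = Submodule.Quotient.mk
          (Submodule.inclusion (idl_prefix_le k V adj hsym ε ω [j]) x) := rfl
  rw [hfx, Submodule.Quotient.mk_eq_zero, Submodule.mem_comap, Submodule.mem_comap,
    Submodule.subtype_apply, Submodule.subtype_apply]
  have hco : ((Submodule.inclusion (idl_prefix_le k V adj hsym ε ω [j]) x :
      ↥(Idl k V adj hsym ε ω)) : PPA k V adj hsym ε) = (x : PPA k V adj hsym ε) := rfl
  rw [hco]
  constructor
  · intro hB
    have t1 := idl_mul_idl k V adj hsym ε (α := ω ++ [j]) (β := [i]) x.2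
      (one_sub_mem k V adj hsym ε i)
    rw [List.append_assoc, List.singleton_append] at t1
    have t2 := idl_mul_idl k V adj hsym ε (α := ω ++ [i]) (β := [j])
      (idl_mul_right k V adj hsym ε hB (ee i)) (one_sub_mem k V adj hsym ε j)
    rw [List.append_assoc, List.singleton_append,
      idl_comm_sq k V adj hsym ε hirr hij hna ω] at t2
    have hd : (x : PPA k V adj hsym ε)
        = (x : PPA k V adj hsym ε) * (1 - ee i)
          + ((x : PPA k V adj hsym ε) * ee i) * (1 - ee j)
          + (x : PPA k V adj hsym ε) * (ee i * ee j) := by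
      rw [mul_sub, mul_one, mul_sub, mul_one, ← mul_assoc]
      abel
    rw [h0, mul_zero, add_zero] at hd
    rw [hd]
    exact Submodule.add_mem _ t1 t2
  · intro hD
    exact idl_append_mono k V adj hsym ε ω (idl_cons_le k V adj hsym ε j [i]) hD

private lemma main_iso (hirr : ∀ v, ¬ adj v v) {i j : V} (hij : i ≠ j) (hna : ¬ adj i j)
    (ω : List V) :
    Nonempty (Idlquot k V adj hsym ε ω (ω ++ [i]) ≃ₗ[PPA k V adj hsym ε]
      Idlquot k V adj hsym ε (ω ++ [j]) (ω ++ [j, i])) :=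
  ⟨(LinearMap.quotKerEquivOfSurjective _ (fmap_surj k V adj hsym ε hij ω)).symm.trans
    (Submodule.quotEquivOfEq _ _ (fmap_ker k V adj hsym ε hirr hij hna ω))⟩

end Aux

/-- Let `W` be the (finite, simply-laced) Weyl group of the Dynkin graph
`(V, adj)` and `Π` its preprojective algebra.  Layers label Hasse arrows of weak order
by `L(ws_i → w) = I(w)/I(ws_i)`.  In a square interval with bottom `u` and top
`u s_i s_j = u s_j s_i` (where `s_i s_j = s_j s_i`, i.e. `i, j` non-adjacent), the layer
labels on opposite sides are equal:
`L(u → us_i) ≅ L(us_j → us_is_j)` and `L(u → us_j) ≅ L(us_i → us_is_j)`. -/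
theorem stmt14
    (hirr : ∀ i, ¬ adj i i) (hdynkin : IsDynkin V adj)
    (hε : ∀ i j, adj i j → (ε i j = 1 ∨ ε i j = -1) ∧ ε j i = -ε i j)
    (W : Type) [Group W] (cs : CoxeterSystem (cmat V adj hsym) W)
    (i j : V) (hij : i ≠ j) (hnadj : ¬ adj i j)
    (ω : List V) (hu : cs.IsReduced ω)
    (hij2 : cs.IsReduced (ω ++ [i, j])) (hji2 : cs.IsReduced (ω ++ [j, i])) :
    Nonempty (Idlquot k V adj hsym ε ω (ω ++ [i]) ≃ₗ[PPA k V adj hsym ε]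
        Idlquot k V adj hsym ε (ω ++ [j]) (ω ++ [j, i])) ∧
    Nonempty (Idlquot k V adj hsym ε ω (ω ++ [j]) ≃ₗ[PPA k V adj hsym ε]
        Idlquot k V adj hsym ε (ω ++ [i]) (ω ++ [i, j])) := by
  have hna' : ¬ adj j i := fun h => hnadj (hsym _ _ h)
  exact ⟨main_iso k V adj hsym ε hirr hij hnadj ω,
    main_iso k V adj hsym ε hirr hij.symm hna' ω⟩

end

end Stmt14
end

section
/- Let W be the Weyl group of type D_n, realized as signed permutations w of {±1, ..., ±n} with w(−a) = −w(a) and an even number of sign changes, written w = [i_1, ..., i_n] with i_m = w(m). Then w is join-irreducible in the weak order if and only if either (i) i_1 < i_2 < ... < i_n and −i_1 > i_2, or (ii) there exists ℓ ∈ {1, ..., n−1} with i_1 < ... < i_ℓ > i_{ℓ+1} < ... < i_n and −i_1 < i_2. -/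
namespace Stmt16

/-- Membership in the Weyl group of type `D_n`, realized as permutations `w` of `ℤ`
(restricting to signed permutations of `{±1, …, ±n}`) with `w(−a) = −w(a)`, fixing
everything beyond `n`, and with an even number of sign changes. -/
def IsD (n : ℕ) (w : Equiv.Perm ℤ) : Prop :=
  (∀ a : ℤ, w (-a) = -w a) ∧ (∀ a : ℤ, (n : ℤ) < a → w a = a) ∧
    Even (Nat.card {m : ℤ // 1 ≤ m ∧ m ≤ (n : ℤ) ∧ w m < 0})

/-- The length of `w ∈ W(D_n)`:
`ℓ(w) = #{1 ≤ a < b ≤ n : i_a > i_b} + #{1 ≤ a < b ≤ n : −i_a > i_b}` where `i_m = w(m)`. -/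
noncomputable def len (n : ℕ) (w : Equiv.Perm ℤ) : ℕ :=
  Nat.card {p : ℤ × ℤ // 1 ≤ p.1 ∧ p.1 < p.2 ∧ p.2 ≤ (n : ℤ) ∧ w p.2 < w p.1} +
  Nat.card {p : ℤ × ℤ // 1 ≤ p.1 ∧ p.1 < p.2 ∧ p.2 ≤ (n : ℤ) ∧ w p.2 < -(w p.1)}

/-- The weak order on `W(D_n)`: `u ≤ v` iff `ℓ(u) + ℓ(u⁻¹ v) = ℓ(v)`. -/
noncomputable def wle (n : ℕ) (u v : Equiv.Perm ℤ) : Prop :=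
  IsD n u ∧ IsD n v ∧ len n u + len n (u⁻¹ * v) = len n v

/-- `y` is covered by `x` in the weak order on `W(D_n)`. -/
noncomputable def wcov (n : ℕ) (y x : Equiv.Perm ℤ) : Prop :=
  wle n y x ∧ y ≠ x ∧ ∀ z, wle n y z → wle n z x → z = y ∨ z = x

/-- `x ∈ W(D_n)` is join-irreducible for the weak order: not the minimum (the identity)
and covering exactly one element. -/
noncomputable def JoinIrr (n : ℕ) (x : Equiv.Perm ℤ) : Prop :=
  IsD n x ∧ x ≠ 1 ∧ ∃! y, wcov n y x

lemma natCard_subtype {α : Type*} [DecidableEq α] (F : Finset α) (P : α → Prop)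
    [DecidablePred P] (h : ∀ x, P x → x ∈ F) :
    Nat.card {x // P x} = (F.filter P).card := by
  have e : {x | P x} = (↑(F.filter P) : Set α) := by
    ext x; simp only [Finset.coe_filter, Set.mem_setOf_eq]
    exact ⟨fun hx => ⟨h x hx, hx⟩, fun hx => hx.2⟩
  have e2 : Nat.card {x // P x} = Nat.card {x | P x} := rfl
  rw [e2, Nat.card_coe_set_eq, e, Set.ncard_coe_finset]

/-- the generator `s₀ = s_{-1}` -/
def g0 : Equiv.Perm ℤ := Equiv.swap 1 (-2) * Equiv.swap (-1) 2

/-- the generators `s_l`, `1 ≤ l ≤ n-1` -/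
def gl (l : ℤ) : Equiv.Perm ℤ := Equiv.swap l (l+1) * Equiv.swap (-l) (-(l+1))

lemma g0_apply (a : ℤ) :
    g0 a = if a = 1 then -2 else if a = 2 then -1 else if a = -1 then 2
      else if a = -2 then 1 else a := by
  simp only [g0, Equiv.Perm.mul_apply, Equiv.swap_apply_def]
  split_ifs <;> first | omega | contradiction

lemma gl_apply {l : ℤ} (hl : 1 ≤ l) (a : ℤ) :
    gl l a = if a = l then l+1 else if a = l+1 then l else if a = -l then -(l+1)
      else if a = -(l+1) then -l else a := by
  simp only [gl, Equiv.Perm.mul_apply, Equiv.swap_apply_def]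
  split_ifs <;> first | omega | contradiction

lemma g0_invol : g0 * g0 = 1 := by
  ext a
  simp only [Equiv.Perm.mul_apply, Equiv.Perm.one_apply, g0_apply]
  split_ifs <;> first | omega | contradiction

lemma gl_invol {l : ℤ} (hl : 1 ≤ l) : gl l * gl l = 1 := by
  ext a
  simp only [Equiv.Perm.mul_apply, Equiv.Perm.one_apply, gl_apply hl]
  split_ifs <;> first | omega | contradiction

/-- combined inversion set -/
noncomputable def jnv (n : ℕ) (w : Equiv.Perm ℤ) : Finset (Bool × ℤ × ℤ) :=
  (Finset.univ ×ˢ (Finset.Icc (1:ℤ) (n:ℤ) ×ˢ Finset.Icc (1:ℤ) (n:ℤ))).filter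
    fun x => x.2.1 < x.2.2 ∧ (x.1 = true → w x.2.2 < -(w x.2.1)) ∧
      (x.1 = false → w x.2.2 < w x.2.1)

lemma mem_jnv {n : ℕ} {w : Equiv.Perm ℤ} (t : Bool) (a b : ℤ) :
    (t, a, b) ∈ jnv n w ↔ 1 ≤ a ∧ a < b ∧ b ≤ (n:ℤ) ∧
      (t = true → w b < -(w a)) ∧ (t = false → w b < w a) := by
  simp only [jnv, Finset.mem_filter, Finset.mem_product, Finset.mem_univ, Finset.mem_Icc,
    true_and]
  cases t <;> simp <;> omega

lemma len_eq (n : ℕ) (w : Equiv.Perm ℤ) : len n w = (jnv n w).card := by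
  classical
  rw [len,
    natCard_subtype (Finset.Icc (1:ℤ) (n:ℤ) ×ˢ Finset.Icc (1:ℤ) (n:ℤ))
      (fun p => 1 ≤ p.1 ∧ p.1 < p.2 ∧ p.2 ≤ (n : ℤ) ∧ w p.2 < w p.1)
      (by rintro ⟨a, b⟩ hp; simp only [Finset.mem_product, Finset.mem_Icc]; omega),
    natCard_subtype (Finset.Icc (1:ℤ) (n:ℤ) ×ˢ Finset.Icc (1:ℤ) (n:ℤ))
      (fun p => 1 ≤ p.1 ∧ p.1 < p.2 ∧ p.2 ≤ (n : ℤ) ∧ w p.2 < -(w p.1))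
      (by rintro ⟨a, b⟩ hp; simp only [Finset.mem_product, Finset.mem_Icc]; omega)]
  have himg : jnv n w =
      ((Finset.Icc (1:ℤ) (n:ℤ) ×ˢ Finset.Icc (1:ℤ) (n:ℤ)).filter
        (fun p => 1 ≤ p.1 ∧ p.1 < p.2 ∧ p.2 ≤ (n : ℤ) ∧ w p.2 < w p.1)).image (Prod.mk false) ∪
      ((Finset.Icc (1:ℤ) (n:ℤ) ×ˢ Finset.Icc (1:ℤ) (n:ℤ)).filter
        (fun p => 1 ≤ p.1 ∧ p.1 < p.2 ∧ p.2 ≤ (n : ℤ) ∧ w p.2 < -(w p.1))).image (Prod.mk true) := by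
    ext ⟨t, a, b⟩
    cases t <;>
      simp [mem_jnv, Finset.mem_product, Finset.mem_Icc, Prod.ext_iff, Prod.exists] <;>
      omega
  rw [himg, Finset.card_union_of_disjoint, Finset.card_image_of_injective, Finset.card_image_of_injective]
  · exact fun x y h => by simpa using h
  · exact fun x y h => by simpa using h
  · rw [Finset.disjoint_left]
    rintro x hx hy
    simp only [Finset.mem_image] at hx hy
    obtain ⟨p, -, rfl⟩ := hx
    obtain ⟨p', -, h⟩ := hy
    simp at h

/-- generic counting lemma -/
lemma card_flip {β : Type*} [DecidableEq β] {S T : Finset β} {Φ : β → β} {q : β}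
    (hinv : ∀ x, Φ (Φ x) = x) (hq : Φ q = q)
    (hmem : ∀ x, x ≠ q → (x ∈ S ↔ Φ x ∈ T))
    (hS : q ∉ S) (hT : q ∈ T) : S.card + 1 = T.card := by
  have hne : ∀ x, x ≠ q → Φ x ≠ q := by
    intro x hx h
    exact hx (by rw [← hinv x, h, hq])
  have hcard : S.card = (T.erase q).card := by
    apply Finset.card_bij' (i := fun x _ => Φ x) (j := fun y _ => Φ y)
    · intro a ha
      have hna : a ≠ q := fun h => hS (h ▸ ha)
      exact Finset.mem_erase.2 ⟨hne a hna, (hmem a hna).1 ha⟩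
    · intro b hb
      obtain ⟨hb1, hb2⟩ := Finset.mem_erase.1 hb
      exact (hmem (Φ b) (hne b hb1)).2 (by rwa [hinv])
    · intro a _; exact hinv a
    · intro b _; exact hinv b
  rw [hcard, Finset.card_erase_add_one hT]

-- value lemmas
lemma gl_at {l : ℤ} (hl : 1 ≤ l) : gl l l = l + 1 := by
  rw [gl_apply hl]; simp

lemma gl_at' {l : ℤ} (hl : 1 ≤ l) : gl l (l+1) = l := by
  rw [gl_apply hl]; split_ifs <;> omega

lemma gl_gl {l : ℤ} (hl : 1 ≤ l) (c : ℤ) : gl l (gl l c) = c := by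
  simp only [gl_apply hl]; split_ifs <;> omega

lemma g0_at1 : g0 1 = -2 := by rw [g0_apply]; simp
lemma g0_at2 : g0 2 = -1 := by rw [g0_apply]; norm_num
lemma g0_ge3 {b : ℤ} (hb : 3 ≤ b) : g0 b = b := by
  rw [g0_apply]; split_ifs <;> omega
lemma g0_g0 (c : ℤ) : g0 (g0 c) = c := by
  simp only [g0_apply]; split_ifs <;> first | omega | contradiction

lemma mem_jnv_true {n : ℕ} {w : Equiv.Perm ℤ} (a b : ℤ) :
    (true, a, b) ∈ jnv n w ↔ 1 ≤ a ∧ a < b ∧ b ≤ (n:ℤ) ∧ w b < -(w a) := by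
  rw [mem_jnv]; simp

lemma mem_jnv_false {n : ℕ} {w : Equiv.Perm ℤ} (a b : ℤ) :
    (false, a, b) ∈ jnv n w ↔ 1 ≤ a ∧ a < b ∧ b ≤ (n:ℤ) ∧ w b < w a := by
  rw [mem_jnv]; simp

def Phl (l : ℤ) (x : Bool × ℤ × ℤ) : Bool × ℤ × ℤ :=
  if (x.2.1 = l ∧ x.2.2 = l+1) ∨ (x.2.1 = l+1 ∧ x.2.2 = l) then x
  else (x.1, gl l x.2.1, gl l x.2.2)

lemma phl_invol {l : ℤ} (hl : 1 ≤ l) : ∀ x, Phl l (Phl l x) = x := by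
  rintro ⟨t, a, b⟩
  by_cases hc : (a = l ∧ b = l + 1) ∨ (a = l + 1 ∧ b = l)
  · simp only [Phl, if_pos hc]
  · have h1 : ¬((gl l a = l ∧ gl l b = l + 1) ∨ (gl l a = l + 1 ∧ gl l b = l)) := by
      simp only [gl_apply hl]; split_ifs <;> omega
    simp only [Phl, if_neg hc, if_neg h1, gl_gl hl]

lemma len_gl {n : ℕ} (w : Equiv.Perm ℤ) {l : ℤ} (hl : 1 ≤ l) (hln : l ≤ (n:ℤ) - 1) :
    (w (l+1) < w l → len n (w * gl l) + 1 = len n w) ∧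
    (w l < w (l+1) → len n w + 1 = len n (w * gl l)) := by
  have key : ∀ (u v : Equiv.Perm ℤ), (∀ c, u c = v (gl l c)) →
      v (l+1) < v l → len n u + 1 = len n v := by
    intro u v huv hdesc
    rw [len_eq, len_eq]
    apply card_flip (Φ := Phl l) (q := (false, l, l+1)) (phl_invol hl)
    · simp [Phl]
    · rintro ⟨t, a, b⟩ hne
      by_cases hc : (a = l ∧ b = l + 1) ∨ (a = l + 1 ∧ b = l)
      · have hx : Phl l (t, a, b) = (t, a, b) := by simp [Phl, hc]
        rw [hx]
        rcases hc with ⟨rfl, rfl⟩ | ⟨rfl, rfl⟩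
        · -- (l, l+1) : tag must be true
          cases t
          · exact absurd rfl hne
          · rw [mem_jnv_true, mem_jnv_true, huv, huv, gl_at hl, gl_at' hl]
            omega
        · -- (l+1, l) : out of order, both sides false
          cases t <;>
            [rw [mem_jnv_false, mem_jnv_false]; rw [mem_jnv_true, mem_jnv_true]] <;>
            omega
      · have hx : Phl l (t, a, b) = (t, gl l a, gl l b) := by simp [Phl, hc]
        rw [hx]
        cases t <;>
          [rw [mem_jnv_false, mem_jnv_false]; rw [mem_jnv_true, mem_jnv_true]] <;>
          rw [huv, huv] <;> simp only [gl_apply hl] <;> split_ifs <;> omega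
    · rw [mem_jnv_false, huv, huv, gl_at hl, gl_at' hl]
      omega
    · rw [mem_jnv_false]
      omega
  constructor
  · intro h
    exact key (w * gl l) w (fun c => rfl) h
  · intro h
    have hwc : ∀ c, w c = (w * gl l) (gl l c) := by
      intro c
      simp [Equiv.Perm.mul_apply, gl_gl hl]
    refine key w (w * gl l) hwc ?_
    simp only [Equiv.Perm.mul_apply, gl_at hl, gl_at' hl]
    exact h

lemma g0_neg (a : ℤ) : g0 (-a) = -(g0 a) := by
  simp only [g0_apply]; split_ifs <;> first | omega | contradiction

lemma gl_neg {l : ℤ} (hl : 1 ≤ l) (a : ℤ) : gl l (-a) = -(gl l a) := by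
  simp only [gl_apply hl]; split_ifs <;> first | omega | contradiction

def Ph0 (x : Bool × ℤ × ℤ) : Bool × ℤ × ℤ :=
  if 1 ≤ x.2.1 ∧ x.2.1 ≤ 2 ∧ 3 ≤ x.2.2 then (!x.1, 3 - x.2.1, x.2.2) else x

lemma ph0_invol : ∀ x, Ph0 (Ph0 x) = x := by
  rintro ⟨t, a, b⟩
  by_cases hc : 1 ≤ a ∧ a ≤ 2 ∧ 3 ≤ b
  · have e : Ph0 (t, a, b) = (!t, 3 - a, b) := by simp [Ph0, hc]
    rw [e]
    have hc2 : (1:ℤ) ≤ 3 - a ∧ 3 - a ≤ 2 ∧ 3 ≤ b := by omega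
    have e2 : Ph0 (!t, 3 - a, b) = (t, a, b) := by
      simp only [Ph0, hc2, if_true, and_true, true_and, if_pos, Bool.not_not]
      simp only [Prod.mk.injEq, Bool.not_not]
      exact ⟨trivial, by omega, trivial⟩
    rw [e2]
  · simp [Ph0, hc]

lemma len_g0 {n : ℕ} (hn4 : 4 ≤ n) (w : Equiv.Perm ℤ) (hw1 : ∀ a, w (-a) = -w a) :
    (w 2 < -(w 1) → len n (w * g0) + 1 = len n w) ∧
    (-(w 1) < w 2 → len n w + 1 = len n (w * g0)) := by
  have key : ∀ (u v : Equiv.Perm ℤ), (∀ c, u c = v (g0 c)) → (∀ a, v (-a) = -v a) →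
      v 2 < -(v 1) → len n u + 1 = len n v := by
    intro u v huv hveq hdesc
    have e1 : v (-1) = -(v 1) := hveq 1
    have e2 : v (-2) = -(v 2) := hveq 2
    have eu1 : u 1 = -(v 2) := by rw [huv 1, g0_at1, e2]
    have eu2 : u 2 = -(v 1) := by rw [huv 2, g0_at2, e1]
    rw [len_eq, len_eq]
    apply card_flip (Φ := Ph0) (q := (true, 1, 2)) ph0_invol
    · norm_num [Ph0]
    · rintro ⟨t, a, b⟩ hne
      by_cases hc : 1 ≤ a ∧ a ≤ 2 ∧ 3 ≤ b
      · have hx : Ph0 (t, a, b) = (!t, 3 - a, b) := by simp [Ph0, hc]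
        rw [hx]
        have hub : u b = v b := by rw [huv b, g0_ge3 hc.2.2]
        have ha : a = 1 ∨ a = 2 := by omega
        rcases ha with rfl | rfl
        · cases t
          · rw [mem_jnv_false]
            rw [show ((!false, 3 - (1:ℤ), b)) = (true, (2:ℤ), b) by norm_num]
            rw [mem_jnv_true, hub, eu1]
            omega
          · rw [mem_jnv_true]
            rw [show ((!true, 3 - (1:ℤ), b)) = (false, (2:ℤ), b) by norm_num]
            rw [mem_jnv_false, hub, eu1]
            omega
        · cases t
          · rw [mem_jnv_false]
            rw [show ((!false, 3 - (2:ℤ), b)) = (true, (1:ℤ), b) by norm_num]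
            rw [mem_jnv_true, hub, eu2]
            omega
          · rw [mem_jnv_true]
            rw [show ((!true, 3 - (2:ℤ), b)) = (false, (1:ℤ), b) by norm_num]
            rw [mem_jnv_false, hub, eu2]
            omega
      · have hx : Ph0 (t, a, b) = (t, a, b) := by simp [Ph0, hc]
        rw [hx]
        by_cases hb : 1 ≤ a ∧ a < b ∧ b ≤ (n:ℤ)
        · have hcase : 3 ≤ a ∨ (a = 1 ∧ b = 2) := by omega
          rcases hcase with h3 | ⟨rfl, rfl⟩
          · have hua : u a = v a := by rw [huv a, g0_ge3 h3]
            have hub : u b = v b := by rw [huv b, g0_ge3 (by omega)]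
            cases t
            · rw [mem_jnv_false, mem_jnv_false, hua, hub]
            · rw [mem_jnv_true, mem_jnv_true, hua, hub]
          · cases t
            · rw [mem_jnv_false, mem_jnv_false, eu1, eu2]
              omega
            · exact absurd rfl hne
        · cases t
          · rw [mem_jnv_false, mem_jnv_false]; omega
          · rw [mem_jnv_true, mem_jnv_true]; omega
    · rw [mem_jnv_true, eu1, eu2]
      omega
    · rw [mem_jnv_true]
      omega
  constructor
  · intro h
    exact key (w * g0) w (fun c => rfl) hw1 h
  · intro h
    have hwc : ∀ c, w c = (w * g0) (g0 c) := by
      intro c; simp [Equiv.Perm.mul_apply, g0_g0]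
    have heq : ∀ a, (w * g0) (-a) = -((w * g0) a) := by
      intro a
      simp only [Equiv.Perm.mul_apply, g0_neg, hw1]
    refine key w (w * g0) hwc heq ?_
    simp only [Equiv.Perm.mul_apply, g0_at1, g0_at2, hw1 1, hw1 2]
    omega

lemma perm_apply_inv_self (w : Equiv.Perm ℤ) (a : ℤ) : w (w⁻¹ a) = a :=
  (Equiv.eq_symm_apply w).mp rfl

lemma perm_inv_apply_self (w : Equiv.Perm ℤ) (a : ℤ) : w⁻¹ (w a) = a :=
  Equiv.Perm.inv_eq_iff_eq.mpr rfl

lemma inv_equiv {w : Equiv.Perm ℤ} (hw1 : ∀ a, w (-a) = -w a) (a : ℤ) :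
    w⁻¹ (-a) = -(w⁻¹ a) := by
  apply w.injective
  rw [perm_apply_inv_self, hw1, perm_apply_inv_self]

lemma inv_fix {n : ℕ} {w : Equiv.Perm ℤ} (hw2 : ∀ a, (n:ℤ) < a → w a = a) :
    ∀ a, (n:ℤ) < a → w⁻¹ a = a := by
  intro a ha
  apply w.injective
  rw [perm_apply_inv_self, hw2 a ha]

lemma w_zero {w : Equiv.Perm ℤ} (hw1 : ∀ a, w (-a) = -w a) : w 0 = 0 := by
  have := hw1 0
  rw [neg_zero] at this
  omega

lemma wrange {n : ℕ} {w : Equiv.Perm ℤ} (hw1 : ∀ a, w (-a) = -w a)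
    (hw2 : ∀ a, (n:ℤ) < a → w a = a) {m : ℤ} (hm1 : 1 ≤ m) (hm2 : m ≤ (n:ℤ)) :
    w m ≠ 0 ∧ -(n:ℤ) ≤ w m ∧ w m ≤ (n:ℤ) := by
  refine ⟨?_, ?_, ?_⟩
  · intro h
    have : m = 0 := w.injective (h.trans (w_zero hw1).symm)
    omega
  · by_contra h
    push_neg at h
    have e : w (-(w m)) = -(w m) := hw2 _ (by omega)
    have e4 : w (w m) = w m := by
      have h2 := hw1 (-(w m))
      rw [neg_neg] at h2
      rw [h2, e, neg_neg]
    have := w.injective e4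
    omega
  · by_contra h
    push_neg at h
    have e : w (w m) = w m := hw2 _ (by omega)
    have := w.injective e
    omega

/-- negative set -/
noncomputable def negs (n : ℕ) (w : Equiv.Perm ℤ) : Finset ℤ :=
  (Finset.Icc (1:ℤ) (n:ℤ)).filter fun m => w m < 0

lemma isD_iff (n : ℕ) (w : Equiv.Perm ℤ) :
    IsD n w ↔ (∀ a, w (-a) = -w a) ∧ (∀ a, (n:ℤ) < a → w a = a) ∧
      Even (negs n w).card := by
  unfold IsD
  constructor <;> rintro ⟨h1, h2, h3⟩ <;> refine ⟨h1, h2, ?_⟩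
  · rwa [natCard_subtype (Finset.Icc (1:ℤ) (n:ℤ)) _
      (by intro x hx; simp only [Finset.mem_Icc]; omega),
      show (Finset.Icc (1:ℤ) (n:ℤ)).filter (fun m => 1 ≤ m ∧ m ≤ (n:ℤ) ∧ w m < 0) = negs n w
        from by unfold negs; apply Finset.filter_congr; intro x hx;
                simp only [Finset.mem_Icc] at hx; simp [hx]] at h3
  · rwa [natCard_subtype (Finset.Icc (1:ℤ) (n:ℤ)) _
      (by intro x hx; simp only [Finset.mem_Icc]; omega),
      show (Finset.Icc (1:ℤ) (n:ℤ)).filter (fun m => 1 ≤ m ∧ m ≤ (n:ℤ) ∧ w m < 0) = negs n w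
        from by unfold negs; apply Finset.filter_congr; intro x hx;
                simp only [Finset.mem_Icc] at hx; simp [hx]]

lemma IsD_one (n : ℕ) : IsD n 1 := by
  rw [isD_iff]
  refine ⟨by intro a; simp, by intro a _; simp, ?_⟩
  have : negs n 1 = ∅ := by
    ext m; simp only [negs, Finset.mem_filter, Finset.mem_Icc, Finset.notMem_empty, iff_false]
    simp only [Equiv.Perm.one_apply]; omega
  rw [this]
  simp

lemma IsD_inv {n : ℕ} {w : Equiv.Perm ℤ} (hw : IsD n w) : IsD n w⁻¹ := by
  rw [isD_iff] at hw ⊢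
  obtain ⟨h1, h2, h3⟩ := hw
  refine ⟨inv_equiv h1, inv_fix h2, ?_⟩
  have hcard : (negs n w⁻¹).card = (negs n w).card := by
    apply Finset.card_bij (i := fun m _ => -(w⁻¹ m))
    · intro m hm
      simp only [negs, Finset.mem_filter, Finset.mem_Icc] at hm ⊢
      obtain ⟨⟨hm1, hm2⟩, hm3⟩ := hm
      have hr := wrange (inv_equiv h1) (inv_fix h2) hm1 hm2
      refine ⟨⟨by omega, by omega⟩, ?_⟩
      have : w (-(w⁻¹ m)) = -m := by rw [h1, perm_apply_inv_self]
      omega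
    · intro m hm m' hm' h
      have : w⁻¹ m = w⁻¹ m' := by omega
      exact w⁻¹.injective this
    · intro k hk
      simp only [negs, Finset.mem_filter, Finset.mem_Icc] at hk
      obtain ⟨⟨hk1, hk2⟩, hk3⟩ := hk
      have hr := wrange h1 h2 hk1 hk2
      refine ⟨-(w k), ?_, ?_⟩
      · simp only [negs, Finset.mem_filter, Finset.mem_Icc]
        have : w⁻¹ (-(w k)) = -k := by rw [inv_equiv h1, perm_inv_apply_self]
        refine ⟨⟨by omega, by omega⟩, by omega⟩
      · have : w⁻¹ (-(w k)) = -k := by rw [inv_equiv h1, perm_inv_apply_self]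
        omega
  rwa [hcard]

lemma IsD_mul {n : ℕ} {u v : Equiv.Perm ℤ} (hu : IsD n u) (hv : IsD n v) :
    IsD n (u * v) := by
  rw [isD_iff] at hu hv ⊢
  obtain ⟨hu1, hu2, hu3⟩ := hu
  obtain ⟨hv1, hv2, hv3⟩ := hv
  refine ⟨?_, ?_, ?_⟩
  · intro a; simp only [Equiv.Perm.mul_apply, hv1, hu1]
  · intro a ha; simp only [Equiv.Perm.mul_apply, hv2 a ha, hu2 a ha]
  · set A := negs n v with hA
    set B := (Finset.Icc (1:ℤ) (n:ℤ)).filter (fun m => u |v m| < 0) with hB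
    have hBcard : B.card = (negs n u).card := by
      apply Finset.card_bij (i := fun m _ => |v m|)
      · intro m hm
        simp only [hB, negs, Finset.mem_filter, Finset.mem_Icc] at hm ⊢
        obtain ⟨⟨hm1, hm2⟩, hm3⟩ := hm
        have hr := wrange hv1 hv2 hm1 hm2
        have hac := abs_choice (v m)
        have hnn := abs_nonneg (v m)
        exact ⟨⟨by omega, by omega⟩, hm3⟩
      · intro m hm m' hm' h
        simp only [hB, Finset.mem_filter, Finset.mem_Icc] at hm hm'
        rcases abs_eq_abs.1 h with h' | h'
        · exact v.injective h'
        · exfalso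
          have : v m = v (-m') := by rw [hv1]; omega
          have := v.injective this
          omega
      · intro k hk
        simp only [negs, Finset.mem_filter, Finset.mem_Icc] at hk
        obtain ⟨⟨hk1, hk2⟩, hk3⟩ := hk
        have hr := wrange (inv_equiv hv1) (inv_fix hv2) hk1 hk2
        rcases lt_trichotomy (v⁻¹ k) 0 with hc | hc | hc
        · refine ⟨-(v⁻¹ k), ?_, ?_⟩
          · simp only [hB, Finset.mem_filter, Finset.mem_Icc]
            have e : v (-(v⁻¹ k)) = -k := by rw [hv1, perm_apply_inv_self]
            have e2 : |v (-(v⁻¹ k))| = k := by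
              rw [e, abs_neg]; exact abs_of_pos (by omega)
            rw [e2]
            exact ⟨⟨by omega, by omega⟩, hk3⟩
          · have e : v (-(v⁻¹ k)) = -k := by rw [hv1, perm_apply_inv_self]
            rw [e, abs_neg]; exact abs_of_pos (by omega)
        · exact absurd hc hr.1
        · refine ⟨v⁻¹ k, ?_, ?_⟩
          · simp only [hB, Finset.mem_filter, Finset.mem_Icc]
            have e2 : |v (v⁻¹ k)| = k := by
              rw [perm_apply_inv_self]; exact abs_of_pos (by omega)
            rw [e2]
            exact ⟨⟨by omega, by omega⟩, hk3⟩
          · rw [perm_apply_inv_self]; exact abs_of_pos (by omega)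
    have hsymm : negs n (u * v) = (A \ B) ∪ (B \ A) := by
      ext m
      by_cases hm : 1 ≤ m ∧ m ≤ (n:ℤ)
      · obtain ⟨hm1, hm2⟩ := hm
        have hrv := wrange hv1 hv2 hm1 hm2
        have hac := abs_choice (v m)
        have hnn := abs_nonneg (v m)
        have hru : u |v m| ≠ 0 := by
          have h1' : (1:ℤ) ≤ |v m| := by omega
          have h2' : |v m| ≤ (n:ℤ) := by omega
          exact (wrange hu1 hu2 h1' h2').1
        simp only [negs, hA, hB, Finset.mem_union, Finset.mem_sdiff, Finset.mem_filter,
          Finset.mem_Icc]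
        simp only [Equiv.Perm.mul_apply]
        rcases lt_trichotomy (v m) 0 with hc | hc | hc
        · have e : |v m| = -(v m) := abs_of_neg hc
          have e2 : u (v m) = -(u (-(v m))) := by
            have h2' := hu1 (-(v m))
            rw [neg_neg] at h2'
            omega
          rw [e] at hru ⊢
          omega
        · exact absurd hc hrv.1
        · have e : |v m| = v m := abs_of_pos hc
          rw [e] at hru ⊢
          omega
      · simp only [negs, hA, hB, Finset.mem_union, Finset.mem_sdiff, Finset.mem_filter,
          Finset.mem_Icc]
        omega
    rw [hsymm, Finset.card_union_of_disjoint disjoint_sdiff_sdiff]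
    have c1 := Finset.card_sdiff_add_card_inter A B
    have c2 := Finset.card_sdiff_add_card_inter B A
    have : B ∩ A = A ∩ B := Finset.inter_comm B A
    rw [this] at c2
    rw [Nat.even_iff] at hu3 hv3 ⊢
    rw [← hBcard] at hu3
    omega

lemma IsD_g0 {n : ℕ} (hn : 4 ≤ n) : IsD n g0 := by
  rw [isD_iff]
  refine ⟨g0_neg, ?_, ?_⟩
  · intro a ha
    rw [g0_apply]; split_ifs <;> omega
  · have : negs n g0 = {1, 2} := by
      ext m
      simp only [negs, Finset.mem_filter, Finset.mem_Icc, Finset.mem_insert,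
        Finset.mem_singleton, g0_apply]
      split_ifs <;> omega
    rw [this, Finset.card_insert_of_notMem (by norm_num), Finset.card_singleton]
    exact even_two

lemma IsD_gl {n : ℕ} {l : ℤ} (hl : 1 ≤ l) (hln : l ≤ (n:ℤ) - 1) : IsD n (gl l) := by
  rw [isD_iff]
  refine ⟨gl_neg hl, ?_, ?_⟩
  · intro a ha
    rw [gl_apply hl]; split_ifs <;> omega
  · have : negs n (gl l) = ∅ := by
      ext m
      simp only [negs, Finset.mem_filter, Finset.mem_Icc, Finset.notMem_empty, iff_false,
        gl_apply hl]
      split_ifs <;> omega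
    rw [this]
    simp

lemma len_one (n : ℕ) : len n 1 = 0 := by
  rw [len_eq]
  rw [Finset.card_eq_zero]
  ext ⟨t, a, b⟩
  cases t <;> simp only [mem_jnv_true, mem_jnv_false, Equiv.Perm.one_apply,
    Finset.notMem_empty, iff_false] <;> omega

lemma len_pos_of_desc0 {n : ℕ} (hn : 4 ≤ n) {w : Equiv.Perm ℤ} (h : w 2 < -(w 1)) :
    len n w ≠ 0 := by
  rw [len_eq]
  intro h0
  have hmem : ((true, 1, 2) : Bool × ℤ × ℤ) ∈ jnv n w := by
    rw [mem_jnv_true]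
    refine ⟨by omega, by omega, by omega, h⟩
  rw [Finset.card_eq_zero] at h0
  rw [h0] at hmem
  exact Finset.notMem_empty _ hmem

lemma len_pos_of_descl {n : ℕ} {w : Equiv.Perm ℤ} {l : ℤ} (hl : 1 ≤ l)
    (hln : l ≤ (n:ℤ) - 1) (h : w (l+1) < w l) : len n w ≠ 0 := by
  rw [len_eq]
  intro h0
  have hmem : ((false, l, l+1) : Bool × ℤ × ℤ) ∈ jnv n w := by
    rw [mem_jnv_false]
    refine ⟨by omega, by omega, by omega, h⟩
  rw [Finset.card_eq_zero] at h0
  rw [h0] at hmem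
  exact Finset.notMem_empty _ hmem

lemma eq_one_of_no_descent {n : ℕ} (hn : 4 ≤ n) {u : Equiv.Perm ℤ} (hu : IsD n u)
    (h0 : ¬(u 2 < -(u 1))) (h : ∀ l : ℤ, 1 ≤ l → l ≤ (n:ℤ) - 1 → ¬(u (l+1) < u l)) :
    u = 1 := by
  obtain ⟨h1, h2, h3⟩ := (isD_iff n u).1 hu
  have asc : ∀ l : ℤ, 1 ≤ l → l ≤ (n:ℤ) - 1 → u l < u (l+1) := by
    intro l hl1 hl2
    have hne : u l ≠ u (l+1) := fun e => by have := u.injective e; omega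
    have := h l hl1 hl2
    omega
  have mono : ∀ a b : ℤ, 1 ≤ a → a < b → b ≤ (n:ℤ) → u a < u b := by
    intro a b ha hab hbn
    have key := Int.le_induction (motive := fun c _ => c ≤ (n:ℤ) → u a < u c) (m := a + 1)
      (fun _ => asc a ha (by omega))
      (fun c hc ih hle => by
        have i1 := ih (by omega)
        have i2 := asc c (by omega) (by omega)
        omega)
    exact key b (by omega) hbn
  have pos : ∀ m : ℤ, 1 ≤ m → m ≤ (n:ℤ) → 0 < u m := by
    intro m hm1 hm2
    by_contra hneg
    push_neg at hneg
    have hne := (wrange h1 h2 hm1 hm2).1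
    have hu1neg : u 1 < 0 := by
      rcases eq_or_lt_of_le hm1 with rfl | hlt
      · omega
      · have := mono 1 m (by omega) (by omega) hm2
        omega
    have hu2pos : 0 < u 2 := by omega
    have hns : negs n u = {1} := by
      ext k
      simp only [negs, Finset.mem_filter, Finset.mem_Icc, Finset.mem_singleton]
      constructor
      · rintro ⟨⟨hk1, hk2⟩, hk3⟩
        by_contra hk
        have h2k : (2:ℤ) ≤ k := by omega
        have : u 2 ≤ u k := by
          rcases eq_or_lt_of_le h2k with rfl | hlt
          · omega
          · exact le_of_lt (mono 2 k (by omega) hlt hk2)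
        omega
      · rintro rfl
        exact ⟨⟨by omega, by omega⟩, hu1neg⟩
    rw [hns] at h3
    simp at h3
  have upperb : ∀ k : ℕ, ∀ m : ℤ, 1 ≤ m → m ≤ (n:ℤ) → (n:ℤ) - m ≤ k → u m ≤ m := by
    intro k
    induction k with
    | zero =>
      intro m hm1 hm2 hk
      have : m = (n:ℤ) := by omega
      subst this
      exact (wrange h1 h2 hm1 hm2).2.2
    | succ k ih =>
      intro m hm1 hm2 hk
      by_cases hmn : m = (n:ℤ)
      · subst hmn
        exact (wrange h1 h2 hm1 hm2).2.2
      · have i1 := ih (m+1) (by omega) (by omega) (by omega)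
        have i2 := asc m hm1 (by omega)
        omega
  have lowerb : ∀ m : ℤ, 1 ≤ m → m ≤ (n:ℤ) → m ≤ u m := by
    have key := Int.le_induction (motive := fun m _ => m ≤ (n:ℤ) → m ≤ u m) (m := 1)
      (fun _ => pos 1 (by omega) (by omega))
      (fun m hm ih hle => by
        have i1 := ih (by omega)
        have i2 := asc m (by omega) (by omega)
        omega)
    exact fun m hm1 hm2 => key m hm1 hm2
  have hfix : ∀ m : ℤ, 1 ≤ m → m ≤ (n:ℤ) → u m = m := by
    intro m hm1 hm2
    have := upperb (n - m).toNat m hm1 hm2 (by omega)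
    have := lowerb m hm1 hm2
    omega
  apply Equiv.ext
  intro a
  simp only [Equiv.Perm.one_apply]
  rcases lt_trichotomy a 0 with ha | rfl | ha
  · have hnegcase : u (-(-a)) = -(u (-a)) := h1 (-a)
    rw [neg_neg] at hnegcase
    by_cases han : -a ≤ (n:ℤ)
    · rw [hnegcase, hfix (-a) (by omega) han]
      ring
    · rw [hnegcase, h2 (-a) (by omega)]
      ring
  · exact w_zero h1
  · by_cases han : a ≤ (n:ℤ)
    · exact hfix a (by omega) han
    · exact h2 a (by omega)

lemma has_descent {n : ℕ} (hn : 4 ≤ n) {u : Equiv.Perm ℤ} (hu : IsD n u) (hne : u ≠ 1) :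
    (u 2 < -(u 1)) ∨ ∃ l : ℤ, 1 ≤ l ∧ l ≤ (n:ℤ) - 1 ∧ u (l+1) < u l := by
  by_contra hcon
  push_neg at hcon
  exact hne (eq_one_of_no_descent hn hu (not_lt.2 hcon.1)
    (fun l hl1 hl2 => not_lt.2 (hcon.2 l hl1 hl2)))

lemma eq_one_of_len_zero {n : ℕ} (hn : 4 ≤ n) {u : Equiv.Perm ℤ} (hu : IsD n u)
    (hlen : len n u = 0) : u = 1 := by
  by_contra hne
  rcases has_descent hn hu hne with hd | ⟨l, hl1, hl2, hd⟩
  · exact len_pos_of_desc0 hn hd hlen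
  · exact len_pos_of_descl hl1 hl2 hd hlen

lemma ne_neg {w : Equiv.Perm ℤ} (hw1 : ∀ a, w (-a) = -w a) {a b : ℤ} (hab : a ≠ -b) :
    w a ≠ -(w b) := by
  intro h
  have : w a = w (-b) := by rw [hw1]; omega
  exact hab (w.injective this)

/-- dichotomy: multiplying by a generator changes length by exactly one -/
lemma len_gen_le {n : ℕ} (hn : 4 ≤ n) {x : Equiv.Perm ℤ} (hx : IsD n x) :
    (len n (x * g0) ≤ len n x + 1) ∧
    (∀ l : ℤ, 1 ≤ l → l ≤ (n:ℤ) - 1 → len n (x * gl l) ≤ len n x + 1) := by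
  obtain ⟨h1, h2, h3⟩ := (isD_iff n x).1 hx
  constructor
  · rcases lt_trichotomy (x 2) (-(x 1)) with hlt | heq | hgt
    · have := (len_g0 hn x h1).1 hlt; omega
    · exact absurd heq (ne_neg h1 (by omega))
    · have := (len_g0 hn x h1).2 hgt; omega
  · intro l hl1 hl2
    rcases lt_trichotomy (x (l+1)) (x l) with hlt | heq | hgt
    · have := (len_gl x hl1 hl2).1 hlt; omega
    · have := x.injective heq; omega
    · have := (len_gl x hl1 hl2).2 hgt; omega

lemma len_mul_le {n : ℕ} (hn : 4 ≤ n) {a b : Equiv.Perm ℤ} (ha : IsD n a) (hb : IsD n b) :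
    len n (a * b) ≤ len n a + len n b := by
  have H : ∀ k : ℕ, ∀ b : Equiv.Perm ℤ, IsD n b → len n b = k →
      ∀ a : Equiv.Perm ℤ, IsD n a → len n (a * b) ≤ len n a + len n b := by
    intro k
    induction k using Nat.strong_induction_on with
    | _ k ih =>
      intro b hb hbk a ha
      by_cases hone : b = 1
      · subst hone; simp [len_one]
      · obtain ⟨hb1, hb2, hb3⟩ := (isD_iff n b).1 hb
        rcases has_descent hn hb hone with hd | ⟨l, hl1, hl2, hd⟩
        · have hstep := (len_g0 hn b hb1).1 hd
          have hb' : IsD n (b * g0) := IsD_mul hb (IsD_g0 hn)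
          have hab : a * b = (a * (b * g0)) * g0 := by
            rw [mul_assoc, mul_assoc, g0_invol, mul_one]
          have hub := ih (len n (b * g0)) (by omega) (b * g0) hb' rfl a ha
          have hgen := (len_gen_le hn (IsD_mul ha hb')).1
          rw [hab]
          omega
        · have hstep := (len_gl b hl1 hl2).1 hd
          have hb' : IsD n (b * gl l) := IsD_mul hb (IsD_gl hl1 hl2)
          have hab : a * b = (a * (b * gl l)) * gl l := by
            rw [mul_assoc, mul_assoc, gl_invol hl1, mul_one]
          have hub := ih (len n (b * gl l)) (by omega) (b * gl l) hb' rfl a ha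
          have hgen := (len_gen_le hn (IsD_mul ha hb')).2 l hl1 hl2
          rw [hab]
          omega
  exact H (len n b) b hb rfl a ha

lemma len_g0_one {n : ℕ} (hn : 4 ≤ n) : len n g0 = 1 := by
  have h1 : ∀ a : ℤ, (1 : Equiv.Perm ℤ) (-a) = -((1 : Equiv.Perm ℤ) a) := by
    intro a; simp
  have := (len_g0 hn 1 h1).2 (by simp)
  rw [len_one] at this
  rw [one_mul] at this
  omega

lemma len_gl_one {n : ℕ} {l : ℤ} (hl1 : 1 ≤ l) (hl2 : l ≤ (n:ℤ) - 1) :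
    len n (gl l) = 1 := by
  have := (len_gl (n := n) 1 hl1 hl2).2 (by simp)
  rw [len_one, one_mul] at this
  omega

lemma g0_inv : g0⁻¹ = g0 := inv_eq_of_mul_eq_one_left g0_invol

lemma gl_inv {l : ℤ} (hl : 1 ≤ l) : (gl l)⁻¹ = gl l :=
  inv_eq_of_mul_eq_one_left (gl_invol hl)

lemma cancel_g0 {x : Equiv.Perm ℤ} : (x * g0)⁻¹ * x = g0 := by
  rw [mul_inv_rev, mul_assoc, inv_mul_cancel, mul_one, g0_inv]

lemma cancel_gl {x : Equiv.Perm ℤ} {l : ℤ} (hl : 1 ≤ l) : (x * gl l)⁻¹ * x = gl l := by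
  rw [mul_inv_rev, mul_assoc, inv_mul_cancel, mul_one, gl_inv hl]

lemma cover_iff {n : ℕ} (hn : 4 ≤ n) {x : Equiv.Perm ℤ} (hx : IsD n x)
    (y : Equiv.Perm ℤ) :
    wcov n y x ↔ ((x 2 < -(x 1) ∧ y = x * g0) ∨
      ∃ l : ℤ, 1 ≤ l ∧ l ≤ (n:ℤ) - 1 ∧ x (l+1) < x l ∧ y = x * gl l) := by
  have hx1 := ((isD_iff n x).1 hx).1
  constructor
  · rintro ⟨⟨hy, _, hlen⟩, hne, hcov⟩
    have hIu : IsD n (y⁻¹ * x) := IsD_mul (IsD_inv hy) hx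
    have hune : y⁻¹ * x ≠ 1 := fun h => hne (inv_mul_eq_one.1 h)
    have hu1 := ((isD_iff n (y⁻¹ * x)).1 hIu).1
    rcases has_descent hn hIu hune with hd | ⟨l, hl1, hl2, hd⟩
    · -- descent of u at g0
      have hstep := (len_g0 hn (y⁻¹ * x) hu1).1 hd
      have hsub : len n (x * g0) ≤ len n y + len n ((y⁻¹ * x) * g0) := by
        have e : x * g0 = y * ((y⁻¹ * x) * g0) := by
          rw [← mul_assoc, mul_inv_cancel_left]
        rw [e]
        exact len_mul_le hn hy (IsD_mul hIu (IsD_g0 hn))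
      rcases lt_trichotomy (x 2) (-(x 1)) with hlt | heq | hgt
      · have hxg := (len_g0 hn x hx1).1 hlt
        have hyz : wle n y (x * g0) := by
          refine ⟨hy, IsD_mul hx (IsD_g0 hn), ?_⟩
          rw [← mul_assoc]
          omega
        have hzx : wle n (x * g0) x := by
          refine ⟨IsD_mul hx (IsD_g0 hn), hx, ?_⟩
          rw [cancel_g0, len_g0_one hn]
          omega
        rcases hcov (x * g0) hyz hzx with h | h
        · exact Or.inl ⟨hlt, h.symm⟩
        · exfalso
          have : len n (x * g0) = len n x := by rw [h]
          omega
      · exact absurd heq (ne_neg hx1 (by omega))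
      · have := (len_g0 hn x hx1).2 hgt
        omega
    · -- descent of u at gl l
      have hstep := (len_gl (y⁻¹ * x) hl1 hl2).1 hd
      have hsub : len n (x * gl l) ≤ len n y + len n ((y⁻¹ * x) * gl l) := by
        have e : x * gl l = y * ((y⁻¹ * x) * gl l) := by
          rw [← mul_assoc, mul_inv_cancel_left]
        rw [e]
        exact len_mul_le hn hy (IsD_mul hIu (IsD_gl hl1 hl2))
      rcases lt_trichotomy (x (l+1)) (x l) with hlt | heq | hgt
      · have hxg := (len_gl x hl1 hl2).1 hlt
        have hyz : wle n y (x * gl l) := by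
          refine ⟨hy, IsD_mul hx (IsD_gl hl1 hl2), ?_⟩
          rw [← mul_assoc]
          omega
        have hzx : wle n (x * gl l) x := by
          refine ⟨IsD_mul hx (IsD_gl hl1 hl2), hx, ?_⟩
          rw [cancel_gl hl1, len_gl_one hl1 hl2]
          omega
        rcases hcov (x * gl l) hyz hzx with h | h
        · exact Or.inr ⟨l, hl1, hl2, hlt, h.symm⟩
        · exfalso
          have : len n (x * gl l) = len n x := by rw [h]
          omega
      · have := x.injective heq; omega
      · have := (len_gl x hl1 hl2).2 hgt
        omega
  · intro hspec
    have main : ∀ s : Equiv.Perm ℤ, IsD n s → s * s = 1 → len n s = 1 →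
        len n (x * s) + 1 = len n x → wcov n (x * s) x := by
      intro s hs hs2 hs1 hstep
      have hsinv : s⁻¹ = s := inv_eq_of_mul_eq_one_left hs2
      have hcanc : (x * s)⁻¹ * x = s := by
        rw [mul_inv_rev, mul_assoc, inv_mul_cancel, mul_one, hsinv]
      have hy : IsD n (x * s) := IsD_mul hx hs
      refine ⟨⟨hy, hx, by rw [hcanc]; omega⟩, ?_, ?_⟩
      · intro h
        have hs_one : s = 1 := by
          have hxx : x * s = x * 1 := by rw [mul_one]; exact h
          exact mul_left_cancel hxx
        rw [hs_one, len_one] at hs1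
        omega
      · intro z hyz hzx
        obtain ⟨_, hz, hlyz⟩ := hyz
        obtain ⟨_, _, hlzx⟩ := hzx
        have hcase : len n ((x * s)⁻¹ * z) = 0 ∨ len n (z⁻¹ * x) = 0 := by omega
        rcases hcase with h0 | h0
        · left
          have := eq_one_of_len_zero hn (IsD_mul (IsD_inv hy) hz) h0
          exact (inv_mul_eq_one.1 this).symm
        · right
          have := eq_one_of_len_zero hn (IsD_mul (IsD_inv hz) hx) h0
          exact inv_mul_eq_one.1 this
    rcases hspec with ⟨hd, rfl⟩ | ⟨l, hl1, hl2, hd, rfl⟩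
    · exact main g0 (IsD_g0 hn) g0_invol (len_g0_one hn) ((len_g0 hn x hx1).1 hd)
    · exact main (gl l) (IsD_gl hl1 hl2) (gl_invol hl1) (len_gl_one hl1 hl2)
        ((len_gl x hl1 hl2).1 hd)


/-- For `w = [i_1, …, i_n] ∈ W(D_n)` (so `i_m = w(m)`), `w` is
join-irreducible in the weak order iff either (i) `i_1 < ⋯ < i_n` and `−i_1 > i_2`, or
(ii) there is `ℓ ∈ {1, …, n−1}` with `i_1 < ⋯ < i_ℓ > i_{ℓ+1} < ⋯ < i_n` and
`−i_1 < i_2`. -/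
theorem stmt16 (n : ℕ) (hn : 4 ≤ n) (w : Equiv.Perm ℤ) (hw : IsD n w) :
    JoinIrr n w ↔
      ((∀ m : ℤ, 1 ≤ m → m < (n : ℤ) → w m < w (m + 1)) ∧ w 2 < -(w 1)) ∨
      (∃ l : ℤ, 1 ≤ l ∧ l ≤ (n : ℤ) - 1 ∧ w (l + 1) < w l ∧
        (∀ m : ℤ, 1 ≤ m → m < (n : ℤ) → m ≠ l → w m < w (m + 1)) ∧ -(w 1) < w 2) := by
  have hw1 := ((isD_iff n w).1 hw).1
  constructor
  · rintro ⟨hx, hne1, y₀, hy₀, huniq⟩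
    rw [cover_iff hn hw] at hy₀
    rcases hy₀ with ⟨hd0, hy0⟩ | ⟨l₀, hl1, hl2, hd, hy0⟩
    · left
      refine ⟨?_, hd0⟩
      intro m hm1 hm2
      by_contra hcon
      have hnem : w m ≠ w (m+1) := fun e => by have := w.injective e; omega
      have hdm : w (m+1) < w m := by omega
      have hcov2 : wcov n (w * gl m) w :=
        (cover_iff hn hw _).2 (Or.inr ⟨m, hm1, by omega, hdm, rfl⟩)
      have heq := huniq _ hcov2
      rw [hy0] at heq
      have hgl : gl m = g0 := mul_left_cancel heq
      have h1 : gl m 1 = g0 1 := by rw [hgl]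
      rw [g0_at1, gl_apply hm1] at h1
      split_ifs at h1 <;> omega
    · right
      refine ⟨l₀, hl1, hl2, hd, ?_, ?_⟩
      · intro m hm1 hm2 hml
        by_contra hcon
        have hnem : w m ≠ w (m+1) := fun e => by have := w.injective e; omega
        have hdm : w (m+1) < w m := by omega
        have hcov2 : wcov n (w * gl m) w :=
          (cover_iff hn hw _).2 (Or.inr ⟨m, hm1, by omega, hdm, rfl⟩)
        have heq := huniq _ hcov2
        rw [hy0] at heq
        have hgl : gl m = gl l₀ := mul_left_cancel heq
        have h1 : gl m m = gl l₀ m := by rw [hgl]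
        rw [gl_at hm1, gl_apply hl1] at h1
        split_ifs at h1 <;> omega
      · have hne2 : w 2 ≠ -(w 1) := ne_neg hw1 (by omega)
        by_contra hcon
        push_neg at hcon
        have hd0 : w 2 < -(w 1) := by omega
        have hcov2 : wcov n (w * g0) w :=
          (cover_iff hn hw _).2 (Or.inl ⟨hd0, rfl⟩)
        have heq := huniq _ hcov2
        rw [hy0] at heq
        have hgg : g0 = gl l₀ := mul_left_cancel heq
        have h1 : g0 1 = gl l₀ 1 := by rw [hgg]
        rw [g0_at1, gl_apply hl1] at h1
        split_ifs at h1 <;> omega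
  · intro hrhs
    rcases hrhs with ⟨hasc, hd0⟩ | ⟨l₀, hl1, hl2, hd, hasc, h02⟩
    · refine ⟨hw, ?_, w * g0, (cover_iff hn hw _).2 (Or.inl ⟨hd0, rfl⟩), ?_⟩
      · intro h
        rw [h] at hd0
        simp only [Equiv.Perm.one_apply] at hd0
        omega
      · intro y hy
        rw [cover_iff hn hw] at hy
        rcases hy with ⟨_, rfl⟩ | ⟨l, hl1', hl2', hdl, rfl⟩
        · rfl
        · exact absurd hdl (not_lt.2 (le_of_lt (hasc l hl1' (by omega))))
    · refine ⟨hw, ?_, w * gl l₀,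
        (cover_iff hn hw _).2 (Or.inr ⟨l₀, hl1, hl2, hd, rfl⟩), ?_⟩
      · intro h
        rw [h] at hd
        simp only [Equiv.Perm.one_apply] at hd
        omega
      · intro y hy
        rw [cover_iff hn hw] at hy
        rcases hy with ⟨hd0', rfl⟩ | ⟨l, hl1', hl2', hdl, rfl⟩
        · exfalso; omega
        · by_cases hll : l = l₀
          · subst hll; rfl
          · exfalso
            have := hasc l hl1' (by omega) hll
            omega

end Stmt16
end
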